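/- arXiv:1002.4473 — 7 statements merged into one kernel-verified Lean document; each statement's English description precedes it below -/
import Mathlib

section
/- Let λ > 0 and b > 0. Then, as the integer M → ∞, ∫₀^∞ (1/(x+b)) · M(1−e^{−λx})^{M−1} λ e^{−λx} dx is asymptotically equivalent to λ/(λb + ln M), i.e. the ratio of the two quantities tends to 1; consequently it is also asymptotically equivalent to λ/ln M. (This is the expectation E[1/(g_max + b)] where g_max is the maximum of M i.i.d. exponential random variables with rate λ.) -/
open MeasureTheory Filter Real Set

lemma dga_deriv (lam : ℝ) (M : ℕ) (x : ℝ) :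
    HasDerivAt (fun y => (1 - Real.exp (-lam * y))^M)
      ((M:ℝ) * (1 - Real.exp (-lam * x)) ^ (M-1) * (lam * Real.exp (-lam * x))) x := by
  have h1 : HasDerivAt (fun y : ℝ => -lam * y) (-lam) x := by
    simpa using (hasDerivAt_id x).const_mul (-lam)
  have h2 := h1.exp
  have h3 := h2.const_sub 1
  have h4 := h3.fun_pow M
  exact h4.congr_deriv (by ring)

lemma dga_cont (lam : ℝ) (M : ℕ) :
    Continuous (fun x => (M : ℝ) * (1 - Real.exp (-lam * x)) ^ (M - 1)
      * (lam * Real.exp (-lam * x))) := by fun_prop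

lemma dga_p_nonneg (lam : ℝ) (hlam : 0 < lam) (M : ℕ) {x : ℝ} (hx : 0 ≤ x) :
    0 ≤ (M : ℝ) * (1 - Real.exp (-lam * x)) ^ (M - 1) * (lam * Real.exp (-lam * x)) := by
  have h1 : Real.exp (-lam * x) ≤ 1 := by
    rw [Real.exp_le_one_iff]
    nlinarith
  have h2 : (0:ℝ) ≤ 1 - Real.exp (-lam * x) := by linarith
  have := Real.exp_pos (-lam * x)
  positivity

lemma dga_int_Ioc (lam : ℝ) (hlam : 0 < lam) (M : ℕ) (hM : 1 ≤ M) {c : ℝ} (hc : 0 ≤ c) :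
    ∫ x in Ioc (0:ℝ) c, (M : ℝ) * (1 - Real.exp (-lam * x)) ^ (M - 1)
      * (lam * Real.exp (-lam * x)) = (1 - Real.exp (-lam * c))^M := by
  rw [← intervalIntegral.integral_of_le hc]
  rw [intervalIntegral.integral_eq_sub_of_hasDerivAt (fun x _ => dga_deriv lam M x)
    ((dga_cont lam M).intervalIntegrable 0 c)]
  simp [Real.exp_zero, zero_pow (by omega : M ≠ 0)]


lemma dga_int_p (lam : ℝ) (hlam : 0 < lam) (M : ℕ) :
    IntegrableOn (fun x => (M : ℝ) * (1 - Real.exp (-lam * x)) ^ (M - 1)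
      * (lam * Real.exp (-lam * x))) (Ioi (0:ℝ)) := by
  refine Integrable.mono' ((exp_neg_integrableOn_Ioi 0 hlam).const_mul ((M:ℝ) * lam)) ?_ ?_
  · exact Continuous.aestronglyMeasurable (by fun_prop)
  · filter_upwards [ae_restrict_mem measurableSet_Ioi] with x (hx : 0 < x)
    have h1 : Real.exp (-lam * x) ≤ 1 := by
      rw [Real.exp_le_one_iff]; nlinarith
    have h2 : (0:ℝ) ≤ 1 - Real.exp (-lam * x) := by linarith
    have h3 := Real.exp_pos (-lam * x)
    rw [Real.norm_eq_abs, abs_of_nonneg (by positivity)]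
    have h4 : (1 - Real.exp (-lam * x)) ^ (M-1) ≤ 1 := pow_le_one₀ h2 (by linarith)
    have : (0:ℝ) ≤ (M:ℝ) := by positivity
    calc (M : ℝ) * (1 - Real.exp (-lam * x)) ^ (M - 1) * (lam * Real.exp (-lam * x))
        ≤ (M : ℝ) * 1 * (lam * Real.exp (-lam * x)) := by
          apply mul_le_mul_of_nonneg_right (by nlinarith) (by positivity)
      _ = (M:ℝ) * lam * Real.exp (-lam * x) := by ring

lemma dga_integral_Ioi (lam : ℝ) (hlam : 0 < lam) (M : ℕ) (hM : 1 ≤ M) :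
    ∫ x in Ioi (0:ℝ), (M : ℝ) * (1 - Real.exp (-lam * x)) ^ (M - 1)
      * (lam * Real.exp (-lam * x)) = 1 := by
  have hd : ∀ x ∈ Ici (0:ℝ), HasDerivAt (fun y => (1 - Real.exp (-lam * y))^M)
      ((M:ℝ) * (1 - Real.exp (-lam * x)) ^ (M-1) * (lam * Real.exp (-lam * x))) x :=
    fun x _ => dga_deriv lam M x
  have htend : Tendsto (fun y => (1 - Real.exp (-lam * y))^M) atTop (nhds 1) := by
    have h0 : Tendsto (fun y : ℝ => Real.exp (-lam * y)) atTop (nhds 0) := by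
      have h := Real.tendsto_exp_atBot.comp
        (Tendsto.const_mul_atTop_of_neg (r := -lam) (by linarith) tendsto_id)
      simpa [Function.comp_def] using h
    have := ((tendsto_const_nhds (x := (1:ℝ))).sub h0).pow M
    simpa using this
  rw [integral_Ioi_of_hasDerivAt_of_tendsto' hd (dga_int_p lam hlam M) htend]
  simp [Real.exp_zero, zero_pow (by omega : M ≠ 0)]

lemma dga_int_g (lam b : ℝ) (hlam : 0 < lam) (hb : 0 < b) (M : ℕ) :
    IntegrableOn (fun x => (1 / (x + b)) * ((M : ℝ) * (1 - Real.exp (-lam * x)) ^ (M - 1)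
      * (lam * Real.exp (-lam * x)))) (Ioi (0:ℝ)) := by
  refine Integrable.mono' ((dga_int_p lam hlam M).const_mul (1/b)) ?_ ?_
  · refine ContinuousOn.aestronglyMeasurable ?_ measurableSet_Ioi
    apply ContinuousOn.mul
    · apply ContinuousOn.div continuousOn_const (by fun_prop)
      intro x hx; simp only [mem_Ioi] at hx; positivity
    · fun_prop
  · filter_upwards [ae_restrict_mem measurableSet_Ioi] with x (hx : 0 < x)
    have hp := dga_p_nonneg lam hlam M hx.le
    have hxb : (0:ℝ) < x + b := by linarith
    rw [Real.norm_eq_abs, abs_of_nonneg (by positivity)]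
    apply mul_le_mul_of_nonneg_right _ hp
    rw [div_le_div_iff₀ hxb hb]
    nlinarith

lemma dga_bounds (lam b : ℝ) (hlam : 0 < lam) (hb : 0 < b) (M : ℕ) (hM : 1 ≤ M)
    {t s : ℝ} (ht : 0 ≤ t) (hs : 0 ≤ s) :
    (1 - Real.exp (-lam * s))^M / (s + b) ≤
      (∫ x in Ioi (0:ℝ), (1 / (x + b)) * ((M : ℝ) * (1 - Real.exp (-lam * x)) ^ (M - 1)
        * (lam * Real.exp (-lam * x)))) ∧
    (∫ x in Ioi (0:ℝ), (1 / (x + b)) * ((M : ℝ) * (1 - Real.exp (-lam * x)) ^ (M - 1)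
        * (lam * Real.exp (-lam * x)))) ≤
      (1 - Real.exp (-lam * t))^M / b + 1 / (t + b) := by
  set p : ℝ → ℝ := fun x => (M : ℝ) * (1 - Real.exp (-lam * x)) ^ (M - 1)
      * (lam * Real.exp (-lam * x)) with hp
  set g : ℝ → ℝ := fun x => (1 / (x + b)) * p x with hg
  have hpc : Continuous p := by fun_prop
  have hgint : IntegrableOn g (Ioi (0:ℝ)) := dga_int_g lam b hlam hb M
  have hpint : IntegrableOn p (Ioi (0:ℝ)) := dga_int_p lam hlam M
  have hgnn : 0 ≤ᵐ[volume.restrict (Ioi (0:ℝ))] g := by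
    filter_upwards [ae_restrict_mem measurableSet_Ioi] with x (hx : 0 < x)
    have hp0 := dga_p_nonneg lam hlam M hx.le
    have hxb : (0:ℝ) < x + b := by linarith
    positivity
  have hpnn : 0 ≤ᵐ[volume.restrict (Ioi (0:ℝ))] p := by
    filter_upwards [ae_restrict_mem measurableSet_Ioi] with x (hx : 0 < x)
    exact dga_p_nonneg lam hlam M hx.le
  constructor
  · -- lower bound
    have h1 : ∫ x in Ioc (0:ℝ) s, g x ≤ ∫ x in Ioi (0:ℝ), g x :=
      setIntegral_mono_set hgint hgnn (HasSubset.Subset.eventuallyLE Ioc_subset_Ioi_self)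
    have h2 : ∫ x in Ioc (0:ℝ) s, (1/(s+b)) * p x ≤ ∫ x in Ioc (0:ℝ) s, g x := by
      apply setIntegral_mono_on
      · exact (hpc.integrableOn_Ioc).const_mul _
      · exact hgint.mono_set Ioc_subset_Ioi_self
      · exact measurableSet_Ioc
      · intro x hx
        obtain ⟨hx0, hxs⟩ := hx
        have hp0 := dga_p_nonneg lam hlam M hx0.le
        apply mul_le_mul_of_nonneg_right _ hp0
        apply one_div_le_one_div_of_le (by linarith) (by linarith)
    have h3 : ∫ x in Ioc (0:ℝ) s, (1/(s+b)) * p x = (1 - Real.exp (-lam * s))^M / (s+b) := by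
      rw [integral_const_mul, dga_int_Ioc lam hlam M hM hs]
      ring
    linarith
  · -- upper bound
    have hsplit : (∫ x in Ioi (0:ℝ), g x) =
        (∫ x in Ioc (0:ℝ) t, g x) + ∫ x in Ioi t, g x := by
      rw [← setIntegral_union Ioc_disjoint_Ioi_same measurableSet_Ioi
        (hgint.mono_set Ioc_subset_Ioi_self)
        (hgint.mono_set (Ioi_subset_Ioi ht)), Ioc_union_Ioi_eq_Ioi ht]
    have h1 : ∫ x in Ioc (0:ℝ) t, g x ≤ ∫ x in Ioc (0:ℝ) t, (1/b) * p x := by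
      apply setIntegral_mono_on
      · exact hgint.mono_set Ioc_subset_Ioi_self
      · exact (hpc.integrableOn_Ioc).const_mul _
      · exact measurableSet_Ioc
      · intro x hx
        obtain ⟨hx0, hxt⟩ := hx
        have hp0 := dga_p_nonneg lam hlam M hx0.le
        apply mul_le_mul_of_nonneg_right _ hp0
        apply one_div_le_one_div_of_le hb (by linarith)
    have h1' : ∫ x in Ioc (0:ℝ) t, (1/b) * p x = (1 - Real.exp (-lam * t))^M / b := by
      rw [integral_const_mul, dga_int_Ioc lam hlam M hM ht]; ring
    have h2 : ∫ x in Ioi t, g x ≤ ∫ x in Ioi t, (1/(t+b)) * p x := by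
      apply setIntegral_mono_on
      · exact hgint.mono_set (Ioi_subset_Ioi ht)
      · exact (hpint.mono_set (Ioi_subset_Ioi ht)).const_mul _
      · exact measurableSet_Ioi
      · intro x hx
        simp only [mem_Ioi] at hx
        have hp0 := dga_p_nonneg lam hlam M (le_trans ht hx.le)
        apply mul_le_mul_of_nonneg_right _ hp0
        apply one_div_le_one_div_of_le (by linarith) (by linarith)
    have h3 : ∫ x in Ioi t, (1/(t+b)) * p x ≤ 1/(t+b) := by
      rw [integral_const_mul]
      have h4 : ∫ x in Ioi t, p x ≤ ∫ x in Ioi (0:ℝ), p x :=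
        setIntegral_mono_set hpint hpnn (HasSubset.Subset.eventuallyLE (Ioi_subset_Ioi ht))
      rw [dga_integral_Ioi lam hlam M hM] at h4
      have : (0:ℝ) < 1/(t+b) := by positivity
      nlinarith
    linarith


lemma dga_log_div (c : ℝ) (hc : 0 < c) :
    Tendsto (fun L : ℝ => Real.log L / (c + L)) atTop (nhds 0) := by
  have hbig : Tendsto (fun L : ℝ => Real.log L / L) atTop (nhds 0) := by
    have := Real.tendsto_pow_log_div_mul_add_atTop 1 0 1 one_ne_zero
    simpa using this
  apply tendsto_of_tendsto_of_tendsto_of_le_of_le' tendsto_const_nhds hbig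
  · filter_upwards [eventually_ge_atTop (1:ℝ)] with L hL
    have h1 : (0:ℝ) ≤ Real.log L := Real.log_nonneg hL
    positivity
  · filter_upwards [eventually_ge_atTop (1:ℝ)] with L hL
    have h1 : (0:ℝ) ≤ Real.log L := Real.log_nonneg hL
    apply div_le_div_of_nonneg_left h1 (by linarith) (by linarith)

lemma dga_ratio (c k : ℝ) (hc : 0 < c) :
    Tendsto (fun L : ℝ => (c + L) / (c + L + k * Real.log L)) atTop (nhds 1) := by
  have h0 : Tendsto (fun L : ℝ => 1 + k * (Real.log L / (c + L))) atTop (nhds 1) := by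
    have := ((dga_log_div c hc).const_mul k).const_add 1
    simpa using this
  have h1 : Tendsto (fun L : ℝ => (1 + k * (Real.log L / (c + L)))⁻¹) atTop (nhds 1) := by
    simpa using h0.inv₀ one_ne_zero
  apply h1.congr'
  filter_upwards [eventually_gt_atTop (0:ℝ)] with L hL
  have hcl : c + L ≠ 0 := by positivity
  rw [← one_div]
  have key : 1 + k * (Real.log L/(c+L)) = (c+L+k*Real.log L)/(c+L) := by field_simp
  rw [key, one_div_div]

lemma dga_z (c : ℝ) (hc : 0 < c) :
    Tendsto (fun L : ℝ => (c + L) * Real.exp (-L^2) / c + (c + L) / (c + L - 2 * Real.log L))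
      atTop (nhds 1) := by
  have h1 : Tendsto (fun L : ℝ => (c + L) * Real.exp (-L^2) / c) atTop (nhds 0) := by
    have hup : Tendsto (fun L : ℝ => (c * Real.exp (-L) + L * Real.exp (-L)) / c)
        atTop (nhds 0) := by
      have e1 : Tendsto (fun L : ℝ => Real.exp (-L)) atTop (nhds 0) :=
        Real.tendsto_exp_neg_atTop_nhds_zero
      have e2 : Tendsto (fun L : ℝ => L * Real.exp (-L)) atTop (nhds 0) := by
        simpa using Real.tendsto_pow_mul_exp_neg_atTop_nhds_zero 1
      have := ((e1.const_mul c).add e2).div_const c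
      simpa using this
    apply tendsto_of_tendsto_of_tendsto_of_le_of_le' tendsto_const_nhds hup
    · filter_upwards [eventually_ge_atTop (0:ℝ)] with L hL
      have := Real.exp_pos (-L^2)
      positivity
    · filter_upwards [eventually_ge_atTop (1:ℝ)] with L hL
      have hee : Real.exp (-L^2) ≤ Real.exp (-L) := by
        apply Real.exp_le_exp.mpr; nlinarith
      have h2 : (0:ℝ) ≤ c + L := by linarith
      rw [div_le_div_iff_of_pos_right hc]  -- maybe wrong name
      nlinarith [Real.exp_pos (-L), Real.exp_pos (-L^2)]
  have h2 := dga_ratio c (-2) hc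
  have := h1.add (by simpa [sub_eq_add_neg, neg_mul] using h2)
  simpa [sub_eq_add_neg] using this

lemma dga_w (c : ℝ) (hc : 0 < c) :
    Tendsto (fun L : ℝ => (1 - 1/L) * ((c + L) / (c + L + Real.log L))) atTop (nhds 1) := by
  have h1 : Tendsto (fun L : ℝ => 1 - 1/L) atTop (nhds 1) := by
    have := (tendsto_inv_atTop_zero (𝕜 := ℝ)).const_sub 1
    simpa [one_div] using this
  have h2 := dga_ratio c 1 hc
  have := h1.mul (by simpa using h2)
  simpa using this



section Main
open Set

-- eventual conditions and main squeeze
lemma dga_main (lam b : ℝ) (hlam : 0 < lam) (hb : 0 < b) :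
    Tendsto (fun M : ℕ =>
        (∫ x in Set.Ioi (0:ℝ),
          (1 / (x + b)) * ((M : ℝ) * (1 - Real.exp (-lam * x)) ^ (M - 1)
            * (lam * Real.exp (-lam * x)))) * (lam * b + Real.log M) / lam)
      atTop (nhds 1) := by
  set c := lam * b with hc
  have hc0 : 0 < c := by positivity
  have hLtop : Tendsto (fun M : ℕ => Real.log M) atTop atTop :=
    Real.tendsto_log_atTop.comp tendsto_natCast_atTop_atTop
  -- upper limit function
  have hz := (dga_z c hc0).comp hLtop
  have hw := (dga_w c hc0).comp hLtop
  -- eventual conditions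
  have hev1 : ∀ᶠ M : ℕ in atTop, (3:ℕ) ≤ M := eventually_ge_atTop 3
  have hev2 : ∀ᶠ M : ℕ in atTop, (Real.log M)^2 / (M:ℝ) ≤ 1/2 := by
    have h := (Real.tendsto_pow_log_div_mul_add_atTop 1 0 2 one_ne_zero).comp
      tendsto_natCast_atTop_atTop
    simp only [Function.comp_def, one_mul, add_zero] at h
    exact h.eventually (eventually_le_nhds (by norm_num))
  have hev3 : ∀ᶠ M : ℕ in atTop,
      2 * Real.log (Real.log M) < Real.log M := by
    refine hLtop.eventually (p := fun L => 2 * Real.log L < L) ?_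
    have h : Tendsto (fun L : ℝ => Real.log L / L) atTop (nhds 0) := by
      have := Real.tendsto_pow_log_div_mul_add_atTop 1 0 1 one_ne_zero
      simpa using this
    filter_upwards [h.eventually (eventually_lt_nhds (by norm_num : (0:ℝ) < 1/3)),
      eventually_gt_atTop (0:ℝ)] with L h1 h2
    rw [div_lt_iff₀ h2] at h1
    nlinarith
  have hev4 : ∀ᶠ M : ℕ in atTop, (1:ℝ) < Real.log M :=
    hLtop.eventually (eventually_gt_atTop 1)
  -- the squeeze
  apply tendsto_of_tendsto_of_tendsto_of_le_of_le' hw hz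
  · -- lower bound
    filter_upwards [hev1, hev2, hev3, hev4] with M hM3 hM2 hMt hL1
    set L := Real.log M with hLdef
    have hM1 : 1 ≤ M := by omega
    have hMR : (3:ℝ) ≤ (M:ℝ) := by exact_mod_cast hM3
    have hMpos : (0:ℝ) < (M:ℝ) := by linarith
    have hL0 : (0:ℝ) < L := by linarith
    have hlogL : (0:ℝ) ≤ Real.log L := Real.log_nonneg hL1.le
    set s := (L + Real.log L) / lam with hsdef
    have hs : 0 ≤ s := by positivity
    have hexps : Real.exp (-lam * s) = 1 / ((M:ℝ) * L) := by
      have h1 : -lam * s = -(L + Real.log L) := by rw [hsdef]; field_simp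
      rw [h1, Real.exp_neg, Real.exp_add, Real.exp_log hMpos, Real.exp_log hL0, one_div]
    have hFs : 1 - 1/L ≤ (1 - Real.exp (-lam * s))^M := by
      rw [hexps]
      have h2 : (-2:ℝ) ≤ -(1 / ((M:ℝ) * L)) := by
        have : 1 / ((M:ℝ) * L) ≤ 1 := by
          rw [div_le_one (by positivity)]; nlinarith
        linarith
      have h3 := one_add_mul_le_pow h2 M
      have h4 : 1 + (M:ℝ) * -(1 / ((M:ℝ) * L)) = 1 - 1/L := by
        field_simp; ring
      rw [h4] at h3
      have h5 : (1:ℝ) - 1 / ((M:ℝ) * L) = 1 + -(1 / ((M:ℝ) * L)) := by ring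
      rw [h5]
      exact h3
    have hlow := (dga_bounds lam b hlam hb M hM1 (le_refl 0) hs).1
    -- w(L) ≤ R M
    have hsb : lam * (s + b) = c + L + Real.log L := by
      rw [hsdef, hc]; field_simp; ring
    have hsbpos : (0:ℝ) < s + b := by linarith
    have hden : (0:ℝ) < c + L + Real.log L := by positivity
    have hratio_nn : (0:ℝ) ≤ (c + L) / (c + L + Real.log L) := by positivity
    calc (1 - 1/L) * ((c + L) / (c + L + Real.log L))
        ≤ (1 - Real.exp (-lam * s))^M * ((c + L) / (c + L + Real.log L)) :=
          mul_le_mul_of_nonneg_right hFs hratio_nn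
      _ = ((1 - Real.exp (-lam * s))^M / (s + b)) * ((c + L) / lam) := by
          have e : ∀ (A u v w : ℝ), A * (u/(v*w)) = A/w * (u/v) := fun A u v w => by
            rw [div_mul_div_comm, ← mul_div_assoc, mul_comm w v]
          rw [← hsb, e]
      _ ≤ (∫ x in Set.Ioi (0:ℝ),
            (1 / (x + b)) * ((M : ℝ) * (1 - Real.exp (-lam * x)) ^ (M - 1)
              * (lam * Real.exp (-lam * x)))) * ((c + L) / lam) := by
          apply mul_le_mul_of_nonneg_right hlow
          positivity
      _ = (∫ x in Set.Ioi (0:ℝ),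
            (1 / (x + b)) * ((M : ℝ) * (1 - Real.exp (-lam * x)) ^ (M - 1)
              * (lam * Real.exp (-lam * x)))) * (lam * b + L) / lam := by
          rw [hc]; ring
  · -- upper bound
    filter_upwards [hev1, hev2, hev3, hev4] with M hM3 hM2 hMt hL1
    set L := Real.log M with hLdef
    have hM1 : 1 ≤ M := by omega
    have hMR : (3:ℝ) ≤ (M:ℝ) := by exact_mod_cast hM3
    have hMpos : (0:ℝ) < (M:ℝ) := by linarith
    have hL0 : (0:ℝ) < L := by linarith
    have hlogL : (0:ℝ) ≤ Real.log L := Real.log_nonneg hL1.le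
    set t := (L - 2 * Real.log L) / lam with htdef
    have ht : 0 ≤ t := by
      apply div_nonneg _ hlam.le
      linarith
    have hexpt : Real.exp (-lam * t) = L^2 / (M:ℝ) := by
      have h1 : -lam * t = -(L - 2 * Real.log L) := by rw [htdef]; field_simp
      have h2 : Real.exp (2 * Real.log L) = L^2 := by
        rw [show (2:ℝ) * Real.log L = Real.log (L^2) by
          rw [Real.log_pow]; norm_num, Real.exp_log (by positivity)]
      rw [h1, neg_sub, Real.exp_sub, h2, Real.exp_log hMpos]
    have hFt : (1 - Real.exp (-lam * t))^M ≤ Real.exp (-L^2) := by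
      rw [hexpt]
      have h0 : (0:ℝ) ≤ 1 - L^2/(M:ℝ) := by linarith
      have h1 : 1 - L^2/(M:ℝ) ≤ Real.exp (-(L^2/(M:ℝ))) := by
        have := Real.add_one_le_exp (-(L^2/(M:ℝ)))
        linarith
      calc (1 - L^2/(M:ℝ))^M ≤ (Real.exp (-(L^2/(M:ℝ))))^M :=
            pow_le_pow_left₀ h0 h1 M
        _ = Real.exp (-(L^2/(M:ℝ)) * M) := by
            rw [← Real.exp_nat_mul]; ring_nf
        _ = Real.exp (-L^2) := by
            congr 1; field_simp
    have hup := (dga_bounds lam b hlam hb M hM1 ht (le_refl 0)).2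
    have htb : lam * (t + b) = c + L - 2 * Real.log L := by
      rw [htdef, hc]; field_simp; ring
    have htbpos : (0:ℝ) < t + b := by linarith
    have hclpos : (0:ℝ) < c + L := by positivity
    calc (∫ x in Set.Ioi (0:ℝ),
            (1 / (x + b)) * ((M : ℝ) * (1 - Real.exp (-lam * x)) ^ (M - 1)
              * (lam * Real.exp (-lam * x)))) * (lam * b + L) / lam
        = (∫ x in Set.Ioi (0:ℝ),
            (1 / (x + b)) * ((M : ℝ) * (1 - Real.exp (-lam * x)) ^ (M - 1)
              * (lam * Real.exp (-lam * x)))) * ((c + L) / lam) := by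
          rw [hc]; ring
      _ ≤ ((1 - Real.exp (-lam * t))^M / b + 1/(t + b)) * ((c + L) / lam) := by
          apply mul_le_mul_of_nonneg_right hup
          positivity
      _ ≤ (Real.exp (-L^2) / b + 1/(t + b)) * ((c + L) / lam) := by
          gcongr
      _ = (c + L) * Real.exp (-L^2) / c + (c + L) / (c + L - 2 * Real.log L) := by
          rw [← htb, hc]
          field_simp

/-- Lemma 1: For exponential(λ) channel gains, `E[1/(g_max + b)] ~ λ/(λb + ln M) ~ λ/ln M`
as the number of sensors `M → ∞`, where `g_max` is the maximum of `M` i.i.d.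
exponential random variables with rate `λ`, whose density is
`p_M(x) = M (1 - e^{-λx})^{M-1} λ e^{-λx}`. -/
theorem diversity_gmax_asymptotics (lam b : ℝ) (hlam : 0 < lam) (hb : 0 < b) :
    Tendsto (fun M : ℕ =>
        (∫ x in Set.Ioi (0:ℝ),
          (1 / (x + b)) * ((M : ℝ) * (1 - Real.exp (-lam * x)) ^ (M - 1)
            * (lam * Real.exp (-lam * x)))) /
        (lam / (lam * b + Real.log M))) atTop (nhds 1) ∧
    Tendsto (fun M : ℕ =>
        (∫ x in Set.Ioi (0:ℝ),
          (1 / (x + b)) * ((M : ℝ) * (1 - Real.exp (-lam * x)) ^ (M - 1)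
            * (lam * Real.exp (-lam * x)))) /
        (lam / Real.log M)) atTop (nhds 1) := by
  have hmain := dga_main lam b hlam hb
  have hpart1 : Tendsto (fun M : ℕ =>
      (∫ x in Set.Ioi (0:ℝ),
        (1 / (x + b)) * ((M : ℝ) * (1 - Real.exp (-lam * x)) ^ (M - 1)
          * (lam * Real.exp (-lam * x)))) /
      (lam / (lam * b + Real.log M))) atTop (nhds 1) := by
    apply hmain.congr
    intro M
    rw [div_div_eq_mul_div]
  refine ⟨hpart1, ?_⟩
  have hLtop : Tendsto (fun M : ℕ => Real.log M) atTop atTop :=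
    Real.tendsto_log_atTop.comp tendsto_natCast_atTop_atTop
  have hratio : Tendsto (fun M : ℕ => Real.log M / (lam * b + Real.log M))
      atTop (nhds 1) := by
    have hcomp : Tendsto (fun L : ℝ => L / (lam * b + L)) atTop (nhds 1) := by
      have h0 : Tendsto (fun L : ℝ => (lam * b + L) / L) atTop (nhds 1) := by
        have h1 : Tendsto (fun L : ℝ => (lam*b) / L + 1) atTop (nhds 1) := by
          have := (tendsto_inv_atTop_zero (𝕜 := ℝ)).const_mul (lam*b)
          have h2 := this.add_const 1
          simpa [div_eq_mul_inv] using h2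
        apply h1.congr'
        filter_upwards [eventually_gt_atTop (0:ℝ)] with L hL
        field_simp
      have h2 : Tendsto (fun L : ℝ => ((lam * b + L) / L)⁻¹) atTop (nhds 1) := by
        simpa using h0.inv₀ one_ne_zero
      apply h2.congr'
      filter_upwards [eventually_gt_atTop (0:ℝ)] with L hL
      rw [inv_div]
    simpa [Function.comp_def] using hcomp.comp hLtop
  have := hmain.mul hratio
  rw [mul_one] at this
  apply this.congr'
  filter_upwards [hLtop.eventually (eventually_gt_atTop (0:ℝ))] with M hL
  have hcl : (0:ℝ) < lam * b + Real.log M := by positivity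
  rw [div_div_eq_mul_div]
  field_simp
  ring_nf
  congr 1; funext x; ring
end Main
end

section
/- Let λ > 0, b > 0 and let M be a positive integer. Then ∫₀^∞ (1/(x+b)) · M(1−e^{−λx})^{M−1} λ e^{−λx} dx = Σ_{k=0}^{M−1} M λ · C(M−1, k) · (−1)^k · exp(λ(k+1)b) · E₁(λ(k+1)b), where C(M−1,k) is the binomial coefficient and E₁ is the exponential integral. -/
open MeasureTheory Filter Real Set

private lemma integral_Ioi_add_right (g : ℝ → ℝ) (a c : ℝ) :
    (∫ x in Ioi a, g (x + c)) = ∫ x in Ioi (a + c), g x := by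
  have h1 : MeasurableSet (Ioi a) := measurableSet_Ioi
  have h2 : MeasurableSet (Ioi (a + c)) := measurableSet_Ioi
  rw [← integral_indicator h1, ← integral_indicator h2,
    ← integral_add_right_eq_self (Set.indicator (Ioi (a + c)) g) c]
  congr 1
  ext x
  have hpre : (fun y : ℝ => y + c) ⁻¹' Ioi (a + c) = Ioi a := by
    rw [preimage_add_const_Ioi]; simp
  have := Set.indicator_comp_right (M := ℝ) (fun y : ℝ => y + c)
    (s := Ioi (a + c)) (g := g) (x := x)
  rw [hpre] at this
  exact this

private lemma integrable_aux {a b : ℝ} (ha : 0 < a) (hb : 0 < b) :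
    IntegrableOn (fun x => Real.exp (-a * x) / (x + b)) (Ioi 0) := by
  have hmeas : AEStronglyMeasurable (fun x => Real.exp (-a * x) / (x + b))
      (volume.restrict (Ioi 0)) := by
    apply ContinuousOn.aestronglyMeasurable _ measurableSet_Ioi
    apply ContinuousOn.div (Continuous.continuousOn (by continuity))
      (Continuous.continuousOn (by continuity))
    intro x hx
    have : (0:ℝ) < x := hx
    positivity
  have hint : IntegrableOn (fun x => b⁻¹ * Real.exp (-a * x)) (Ioi 0) :=
    (exp_neg_integrableOn_Ioi 0 ha).const_mul _
  refine Integrable.mono hint hmeas ?_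
  filter_upwards [ae_restrict_mem measurableSet_Ioi] with x hx
  have hx0 : (0:ℝ) < x := hx
  have hxb : 0 < x + b := by linarith
  rw [Real.norm_eq_abs, Real.norm_eq_abs, abs_of_pos (by positivity),
    abs_of_pos (by positivity)]
  rw [div_le_iff₀ hxb]
  have h1 : b⁻¹ * Real.exp (-a * x) * (x + b) = Real.exp (-a * x) * ((x + b) / b) := by
    ring
  rw [h1]
  nth_rewrite 1 [← mul_one (Real.exp (-a * x))]
  apply mul_le_mul_of_nonneg_left _ (Real.exp_nonneg _)
  rw [le_div_iff₀ hb]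
  linarith

private lemma key_integral {a b : ℝ} (ha : 0 < a) (hb : 0 < b) :
    (∫ x in Ioi (0:ℝ), Real.exp (-a * x) / (x + b))
      = Real.exp (a * b) * ∫ t in Ioi (a * b), Real.exp (-t) / t := by
  have step1 : (∫ x in Ioi (0:ℝ), Real.exp (-a * x) / (x + b))
      = ∫ y in Ioi b, Real.exp (a * b) * (Real.exp (-a * y) / y) := by
    have h := integral_Ioi_add_right
      (fun y => Real.exp (a * b) * (Real.exp (-a * y) / y)) 0 b
    rw [zero_add] at h
    rw [← h]
    congr 1
    ext x
    rw [mul_div_assoc' , ← Real.exp_add]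
    congr 2
    ring
  rw [step1, integral_const_mul]
  congr 1
  have step2 : (∫ y in Ioi b, Real.exp (-a * y) / y)
      = ∫ y in Ioi b, a * (Real.exp (-(a * y)) / (a * y)) := by
    congr 1
    ext y
    rcases eq_or_ne y 0 with hy | hy
    · simp [hy]
    · field_simp
  rw [step2]
  have := integral_comp_mul_left_Ioi (fun t => a * (Real.exp (-t) / t)) b ha
  rw [this, smul_eq_mul, integral_const_mul, ← mul_assoc, inv_mul_cancel₀ ha.ne',
    one_mul]

/-- Exact evaluation of `E[1/(g_max + b)]` for the maximum of `M` i.i.d.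
exponential(λ) random variables:
`∫₀^∞ (1/(x+b)) M(1-e^{-λx})^{M-1} λe^{-λx} dx
  = Σ_{k=0}^{M-1} M λ C(M-1,k) (-1)^k e^{λ(k+1)b} E₁(λ(k+1)b)`,
where `E₁(z) = ∫_z^∞ e^{-t}/t dt` is the exponential integral. -/
theorem diversity_expectation_exact (lam b : ℝ) (hlam : 0 < lam) (hb : 0 < b)
    (M : ℕ) (hM : 1 ≤ M) :
    (∫ x in Set.Ioi (0:ℝ),
        (1 / (x + b)) * ((M : ℝ) * (1 - Real.exp (-lam * x)) ^ (M - 1)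
          * (lam * Real.exp (-lam * x))))
    = ∑ k ∈ Finset.range M,
        (M : ℝ) * lam * (Nat.choose (M - 1) k : ℝ) * (-1 : ℝ) ^ k
          * Real.exp (lam * (k + 1) * b)
          * (∫ t in Set.Ioi (lam * (k + 1) * b), Real.exp (-t) / t) := by
  obtain ⟨n, rfl⟩ : ∃ n, M = n + 1 := ⟨M - 1, (Nat.succ_pred_eq_of_pos hM).symm⟩
  have hMn : (n + 1) - 1 = n := rfl
  -- pointwise binomial expansion
  have hpt : ∀ x : ℝ,
      (1 / (x + b)) * (((n:ℝ)+1) * (1 - Real.exp (-lam * x)) ^ n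
          * (lam * Real.exp (-lam * x)))
      = ∑ k ∈ Finset.range (n + 1),
          (((n:ℝ)+1) * lam * (Nat.choose n k : ℝ) * (-1:ℝ)^k)
            * (Real.exp (-(lam * (k + 1)) * x) / (x + b)) := by
    intro x
    have hbin : (1 - Real.exp (-lam * x)) ^ n
        = ∑ k ∈ Finset.range (n + 1),
            (-1:ℝ)^k * (Nat.choose n k : ℝ) * Real.exp (-lam * x) ^ k := by
      have := add_pow (-Real.exp (-lam * x)) 1 n
      simp only [one_pow, mul_one] at this
      rw [show (1 : ℝ) - Real.exp (-lam * x) = -Real.exp (-lam * x) + 1 by ring, this]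
      congr 1
      ext k
      rw [neg_pow]
      ring
    rw [hbin, Finset.mul_sum, Finset.sum_mul, Finset.mul_sum]
    congr 1
    ext k
    have hexp : Real.exp (-lam * x) ^ k * Real.exp (-lam * x)
        = Real.exp (-(lam * (k + 1)) * x) := by
      rw [← Real.exp_nat_mul, ← Real.exp_add]
      congr 1
      push_cast
      ring
    rw [← hexp]
    ring
  simp only [Nat.add_sub_cancel, Nat.cast_add, Nat.cast_one]
  rw [setIntegral_congr_fun measurableSet_Ioi (fun x _ => hpt x)]
  rw [integral_finset_sum]
  · apply Finset.sum_congr rfl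
    intro k hk
    have hak : 0 < lam * ((k:ℝ) + 1) := by positivity
    rw [integral_const_mul, key_integral hak hb]
    push_cast [hMn]
    ring
  · intro k _
    have hak : 0 < lam * ((k:ℝ) + 1) := by positivity
    exact (integrable_aux hak hb).const_mul _
end

section
/- Let λ > 0 and b > 0. Then, as t → 0⁺, λ ∫₀^t 1/(λb − ln(1 − e^{−τ})) dτ is asymptotically equivalent to λt/(λb + ln(1/t)), i.e. the ratio of the two quantities tends to 1 as t → 0 from the right. -/
open MeasureTheory Filter Real

/-- As `t → 0⁺`,
`λ ∫₀^t 1/(λb - ln(1 - e^{-τ})) dτ ~ λt/(λb + ln(1/t))`,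
i.e. the ratio of the two quantities tends to 1 from the right. -/
theorem small_t_asymptotics (lam b : ℝ) (hlam : 0 < lam) (hb : 0 < b) :
    Tendsto (fun t : ℝ =>
        (lam * ∫ τ in (0:ℝ)..t, 1 / (lam * b - Real.log (1 - Real.exp (-τ)))) /
        (lam * t / (lam * b + Real.log (1 / t))))
      (nhdsWithin 0 (Set.Ioi 0)) (nhds 1) := by
  have hlb : 0 < lam * b := mul_pos hlam hb
  set h : ℝ → ℝ := fun τ => 1 / (lam * b - Real.log (1 - Real.exp (-τ))) with hh
  set l : Filter ℝ := nhdsWithin 0 (Set.Ioi 0) with hl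
  -- basic facts about the integrand
  have hDge : ∀ τ : ℝ, 0 ≤ τ → lam * b ≤ lam * b - Real.log (1 - Real.exp (-τ)) := by
    intro τ hτ
    have h1 : Real.exp (-τ) ≤ 1 := by
      rw [Real.exp_le_one_iff]; linarith
    have h2 : Real.log (1 - Real.exp (-τ)) ≤ 0 :=
      Real.log_nonpos (by linarith) (by have := Real.exp_pos (-τ); linarith)
    linarith
  have hnonneg : ∀ τ : ℝ, 0 ≤ τ → 0 ≤ h τ := by
    intro τ hτ
    have hD : 0 < lam * b - Real.log (1 - Real.exp (-τ)) := lt_of_lt_of_le hlb (hDge τ hτ)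
    simp only [hh]
    exact div_nonneg zero_le_one hD.le
  have hle : ∀ τ : ℝ, 0 ≤ τ → h τ ≤ (lam * b)⁻¹ := by
    intro τ hτ
    simp only [hh, one_div]
    exact inv_anti₀ hlb (hDge τ hτ)
  have hmeas : Measurable h := by
    apply Measurable.div measurable_const
    exact (measurable_const.sub (Real.measurable_log.comp
      (measurable_const.sub (Real.measurable_exp.comp measurable_neg))))
  -- integrability on [0, t] for t > 0
  have hint : ∀ t : ℝ, 0 < t → IntervalIntegrable h volume 0 t := by
    intro t ht
    rw [intervalIntegrable_iff, Set.uIoc_of_le ht.le]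
    apply MeasureTheory.Integrable.mono' (integrable_const ((lam * b)⁻¹))
      hmeas.aestronglyMeasurable
    filter_upwards [ae_restrict_mem measurableSet_Ioc] with τ hτ
    rw [Real.norm_eq_abs, abs_of_nonneg (hnonneg τ hτ.1.le)]
    exact hle τ hτ.1.le
  -- continuity of the integrand at t > 0
  have hcont : ∀ t : ℝ, 0 < t → ContinuousAt h t := by
    intro t ht
    have h1 : (0:ℝ) < 1 - Real.exp (-t) := by
      have : Real.exp (-t) < 1 := Real.exp_lt_one_iff.mpr (by linarith)
      linarith
    have h2 : lam * b - Real.log (1 - Real.exp (-t)) ≠ 0 :=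
      ne_of_gt (lt_of_lt_of_le hlb (hDge t ht.le))
    have hc1 : ContinuousAt (fun τ : ℝ => 1 - Real.exp (-τ)) t := by fun_prop
    have hc2 : ContinuousAt (fun τ : ℝ => Real.log (1 - Real.exp (-τ))) t :=
      ContinuousAt.comp (g := Real.log) (f := fun τ : ℝ => 1 - Real.exp (-τ))
        (Real.continuousAt_log h1.ne') hc1
    have hc3 : ContinuousAt (fun τ : ℝ => lam * b - Real.log (1 - Real.exp (-τ))) t :=
      continuousAt_const.sub hc2
    simp only [hh, one_div]
    exact hc3.inv₀ h2
  -- rewrite log (1/t) = - log t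
  have hstmt : (fun t : ℝ =>
        (lam * ∫ τ in (0:ℝ)..t, h τ) / (lam * t / (lam * b + Real.log (1 / t))))
      = fun t => (lam * ∫ τ in (0:ℝ)..t, h τ) / (lam * t / (lam * b - Real.log t)) := by
    funext t; rw [one_div, Real.log_inv, ← sub_eq_add_neg]
  show Tendsto (fun t : ℝ =>
        (lam * ∫ τ in (0:ℝ)..t, h τ) / (lam * t / (lam * b + Real.log (1 / t)))) l (nhds 1)
  rw [hstmt]
  -- membership of Ioo 0 1 in the filter
  have hIoo : Set.Ioo (0:ℝ) 1 ∈ l := Ioo_mem_nhdsGT_of_mem ⟨le_refl 0, one_pos⟩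
  -- log t → -∞
  have hlog : Tendsto Real.log l atBot :=
    Real.tendsto_log_nhdsGT_zero
  -- x t := lam*b - log t → +∞
  have hX : Tendsto (fun t => lam * b - Real.log t) l atTop := by
    simp only [sub_eq_add_neg]
    exact tendsto_atTop_add_const_left l (lam * b) (tendsto_neg_atBot_atTop.comp hlog)
  have hXinv : Tendsto (fun t => (lam * b - Real.log t)⁻¹) l (nhds 0) :=
    hX.inv_tendsto_atTop
  -- u t := log ((1 - exp (-t))/t) → 0
  have hslope : Tendsto (fun t => (1 - Real.exp (-t)) / t) l (nhds 1) := by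
    have hd : HasDerivAt (fun t : ℝ => 1 - Real.exp (-t)) 1 0 := by
      have h1 : HasDerivAt (fun t : ℝ => Real.exp (-t)) (Real.exp (-(0:ℝ)) * (-1)) 0 :=
        (Real.hasDerivAt_exp (-(0:ℝ))).comp 0 (hasDerivAt_neg 0)
      simpa using h1.const_sub (1:ℝ)
    have hs := hasDerivAt_iff_tendsto_slope.mp hd
    have hs' : Tendsto (slope (fun t : ℝ => 1 - Real.exp (-t)) 0) l (nhds 1) :=
      hs.mono_left (nhdsWithin_mono 0 (fun x hx => ne_of_gt hx))
    refine hs'.congr' ?_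
    filter_upwards [self_mem_nhdsWithin] with t ht
    simp [slope_def_field]
  have hU : Tendsto (fun t => Real.log ((1 - Real.exp (-t)) / t)) l (nhds 0) := by
    have := (Real.continuousAt_log one_ne_zero).tendsto.comp hslope
    simpa [Function.comp_def] using this
  -- positivity facts on Ioo 0 1
  have hfacts : ∀ t ∈ Set.Ioo (0:ℝ) 1,
      0 < t ∧ Real.log t < 0 ∧ 0 < 1 - Real.exp (-t) ∧
      Real.log (1 - Real.exp (-t)) = Real.log t + Real.log ((1 - Real.exp (-t)) / t) := by
    intro t ht
    have ht0 : 0 < t := ht.1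
    have hlt : Real.log t < 0 := Real.log_neg ht0 ht.2
    have hpos : (0:ℝ) < 1 - Real.exp (-t) := by
      have : Real.exp (-t) < 1 := Real.exp_lt_one_iff.mpr (by linarith)
      linarith
    refine ⟨ht0, hlt, hpos, ?_⟩
    rw [Real.log_div hpos.ne' ht0.ne']
    ring
  -- D/x → 1 hence x/D → 1
  have hA : Tendsto (fun t => (lam * b - Real.log t) /
      (lam * b - Real.log (1 - Real.exp (-t)))) l (nhds 1) := by
    have h1 : Tendsto (fun t => 1 - Real.log ((1 - Real.exp (-t)) / t) *
        (lam * b - Real.log t)⁻¹) l (nhds 1) := by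
      have := (hU.mul hXinv).const_sub 1
      simpa using this
    have h2 : Tendsto (fun t => (lam * b - Real.log (1 - Real.exp (-t))) /
        (lam * b - Real.log t)) l (nhds 1) := by
      refine h1.congr' ?_
      filter_upwards [hIoo] with t ht
      obtain ⟨ht0, hlt, hpos, hlogeq⟩ := hfacts t ht
      have hx : lam * b - Real.log t ≠ 0 := by nlinarith
      rw [hlogeq]
      field_simp
      ring
    have h3 := h2.inv₀ one_ne_zero
    simp only [inv_one] at h3
    refine h3.congr ?_
    intro t
    exact inv_div _ _
  -- x/(x+1) → 1
  have hB : Tendsto (fun t => (lam * b - Real.log t) /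
      (lam * b - Real.log t + 1)) l (nhds 1) := by
    have h1 : Tendsto (fun t => 1 + (lam * b - Real.log t)⁻¹) l (nhds 1) := by
      have := hXinv.const_add 1
      simpa using this
    have h2 : Tendsto (fun t => (lam * b - Real.log t + 1) /
        (lam * b - Real.log t)) l (nhds 1) := by
      refine h1.congr' ?_
      filter_upwards [hIoo] with t ht
      obtain ⟨ht0, hlt, hpos, _⟩ := hfacts t ht
      have hx : lam * b - Real.log t ≠ 0 := by nlinarith
      field_simp
    have h3 := h2.inv₀ one_ne_zero
    simp only [inv_one] at h3
    refine h3.congr ?_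
    intro t
    exact inv_div _ _
  -- now apply L'Hôpital
  apply HasDerivAt.lhopital_zero_nhdsGT
    (f' := fun t => lam * h t)
    (g' := fun t => lam * (lam * b - Real.log t + 1) / (lam * b - Real.log t) ^ 2)
  · -- derivative of the numerator
    filter_upwards [self_mem_nhdsWithin] with t ht
    exact (intervalIntegral.integral_hasDerivAt_right (hint t ht)
      ⟨Set.univ, Filter.univ_mem, hmeas.aestronglyMeasurable⟩ (hcont t ht)).const_mul lam
  · -- derivative of the denominator
    filter_upwards [hIoo] with t ht
    obtain ⟨ht0, hlt, hpos, _⟩ := hfacts t ht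
    have hx : lam * b - Real.log t ≠ 0 := by nlinarith
    have hn : HasDerivAt (fun t : ℝ => lam * t) lam t := by
      simpa using (hasDerivAt_id t).const_mul lam
    have hdm : HasDerivAt (fun t : ℝ => lam * b - Real.log t) (-t⁻¹) t := by
      simpa using (Real.hasDerivAt_log ht0.ne').const_sub (lam * b)
    have : HasDerivAt (fun x : ℝ => lam * x / (lam * b - Real.log x))
        ((lam * (lam * b - Real.log t) - lam * t * -t⁻¹) / (lam * b - Real.log t) ^ 2) t :=
      hn.div hdm hx
    convert this using 1
    field_simp
    ring
  · -- g' ≠ 0 eventually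
    filter_upwards [hIoo] with t ht
    obtain ⟨ht0, hlt, hpos, _⟩ := hfacts t ht
    have hx : 0 < lam * b - Real.log t := by nlinarith
    positivity
  · -- f → 0
    have key : Tendsto (fun t => ∫ τ in (0:ℝ)..t, h τ) l (nhds 0) := by
      apply squeeze_zero' (g := fun t => t * (lam * b)⁻¹)
      · filter_upwards [self_mem_nhdsWithin] with t ht
        apply intervalIntegral.integral_nonneg (le_of_lt ht)
        intro τ hτ; exact hnonneg τ hτ.1
      · filter_upwards [self_mem_nhdsWithin] with t ht
        have h2 := intervalIntegral.integral_mono_on (le_of_lt ht) (hint t ht)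
          intervalIntegrable_const (fun τ hτ => hle τ hτ.1)
        calc (∫ τ in (0:ℝ)..t, h τ) ≤ ∫ _ in (0:ℝ)..t, (lam * b)⁻¹ := h2
          _ = t * (lam * b)⁻¹ := by simp; ring
      · have hcont0 : Continuous (fun t : ℝ => t * (lam * b)⁻¹) := by fun_prop
        have h0 : Tendsto (fun t : ℝ => t * (lam * b)⁻¹) (nhds 0)
            (nhds (0 * (lam * b)⁻¹)) := hcont0.tendsto 0
        rw [zero_mul] at h0
        exact h0.mono_left nhdsWithin_le_nhds
    have := key.const_mul lam
    simpa using this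
  · -- g → 0
    have hnum : Tendsto (fun t : ℝ => lam * t) l (nhds 0) := by
      have hc0 : Continuous (fun t : ℝ => lam * t) := by fun_prop
      have h0 : Tendsto (fun t : ℝ => lam * t) (nhds 0) (nhds (lam * 0)) := hc0.tendsto 0
      rw [mul_zero] at h0
      exact h0.mono_left nhdsWithin_le_nhds
    exact hnum.div_atTop hX
  · -- the ratio of derivatives tends to 1
    have hprod := hA.mul hB
    rw [mul_one] at hprod
    refine hprod.congr' ?_
    filter_upwards [hIoo] with t ht
    obtain ⟨ht0, hlt, hpos, _⟩ := hfacts t ht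
    have hx : 0 < lam * b - Real.log t := by nlinarith
    have hD : 0 < lam * b - Real.log (1 - Real.exp (-t)) :=
      lt_of_lt_of_le hlb (hDge t ht0.le)
    simp only [hh, one_div]
    field_simp
end

section
/- Let σθ² > 0, σv² > 0, σn² > 0, λ > 0, and set A = σθ²σv²/(σθ²+σv²) and B = σn²σθ²/(σv²(σθ²+σv²)). For a positive integer M define E[D_M] = ∫₀^∞ (1/σθ² + x/(xσv² + σn²))^{−1} · M(1−e^{−λx})^{M−1} λ e^{−λx} dx. Then ln(M) · (E[D_M] − A) → A·B·λ as M → ∞; in particular E[D_M] is asymptotically equivalent to A·[1 + B·λ/ln(M)] as M → ∞. -/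
open MeasureTheory Filter Real Set Topology

namespace DivAsym

noncomputable def pdf (lam : ℝ) (M : ℕ) (x : ℝ) : ℝ :=
  (M : ℝ) * (1 - Real.exp (-lam * x)) ^ (M - 1) * (lam * Real.exp (-lam * x))

noncomputable def cdf (lam : ℝ) (M : ℕ) (x : ℝ) : ℝ :=
  (1 - Real.exp (-lam * x)) ^ M

lemma hasDerivAt_cdf (lam : ℝ) (M : ℕ) (x : ℝ) :
    HasDerivAt (cdf lam M) (pdf lam M x) x := by
  have h1 : HasDerivAt (fun y : ℝ => 1 - Real.exp (-lam * y)) (lam * Real.exp (-lam * x)) x := by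
    have h0 := ((hasDerivAt_id x).const_mul (-lam)).exp
    simp only [id_eq, mul_one] at h0
    have h2 : HasDerivAt (fun y => 1 - Real.exp (-lam * y)) (0 - Real.exp (-lam * x) * -lam) x :=
      (hasDerivAt_const x (1:ℝ)).sub h0
    convert h2 using 1
    ring
  exact h1.pow M

lemma continuous_pdf (lam : ℝ) (M : ℕ) : Continuous (pdf lam M) := by
  unfold pdf; fun_prop

lemma exp_le_one' {lam x : ℝ} (hlam : 0 < lam) (hx : 0 ≤ x) :
    Real.exp (-lam * x) ≤ 1 := by
  rw [Real.exp_le_one_iff]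
  nlinarith

lemma pdf_nonneg {lam : ℝ} (M : ℕ) (hlam : 0 < lam) {x : ℝ} (hx : 0 ≤ x) :
    0 ≤ pdf lam M x := by
  unfold pdf
  have h1 := exp_le_one' hlam hx
  have h2 := Real.exp_pos (-lam * x)
  apply mul_nonneg (mul_nonneg (by positivity) (pow_nonneg (by linarith) _))
  positivity

lemma pdf_le {lam : ℝ} (M : ℕ) (hlam : 0 < lam) {x : ℝ} (hx : 0 ≤ x) :
    pdf lam M x ≤ (M : ℝ) * lam * Real.exp (-lam * x) := by
  unfold pdf
  have h1 := exp_le_one' hlam hx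
  have h2 := Real.exp_pos (-lam * x)
  have h3 : (1 - Real.exp (-lam * x)) ^ (M - 1) ≤ 1 :=
    pow_le_one₀ (by linarith) (by linarith)
  have h4 : (0:ℝ) ≤ 1 - Real.exp (-lam * x) := by linarith
  calc (M : ℝ) * (1 - Real.exp (-lam * x)) ^ (M - 1) * (lam * Real.exp (-lam * x))
      ≤ (M : ℝ) * 1 * (lam * Real.exp (-lam * x)) := by
        apply mul_le_mul_of_nonneg_right _ (by positivity)
        exact mul_le_mul_of_nonneg_left h3 (by positivity)
    _ = (M : ℝ) * lam * Real.exp (-lam * x) := by ring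

lemma integrableOn_pdf {lam : ℝ} (M : ℕ) (hlam : 0 < lam) {a : ℝ} (ha : 0 ≤ a) :
    IntegrableOn (pdf lam M) (Ioi a) := by
  have hbase : IntegrableOn (fun x => (M:ℝ) * lam * Real.exp (-lam * x)) (Ioi a) :=
    ((exp_neg_integrableOn_Ioi a hlam).const_mul _)
  refine hbase.mono' ((continuous_pdf lam M).aestronglyMeasurable.restrict) ?_
  filter_upwards [ae_restrict_mem measurableSet_Ioi] with x hx
  rw [Real.norm_eq_abs, abs_of_nonneg (pdf_nonneg M hlam (le_trans ha (le_of_lt hx)))]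
  exact pdf_le M hlam (le_trans ha (le_of_lt hx))

lemma cdf_nonneg {lam : ℝ} (M : ℕ) (hlam : 0 < lam) {x : ℝ} (hx : 0 ≤ x) :
    0 ≤ cdf lam M x := by
  have h1 := exp_le_one' hlam hx
  unfold cdf; exact pow_nonneg (by linarith) _

lemma cdf_le_one {lam : ℝ} (M : ℕ) (hlam : 0 < lam) {x : ℝ} (hx : 0 ≤ x) :
    cdf lam M x ≤ 1 := by
  have h1 := exp_le_one' hlam hx
  have h2 := Real.exp_pos (-lam * x)
  unfold cdf
  exact pow_le_one₀ (by linarith) (by linarith)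

lemma integral_pdf_Ioc {lam : ℝ} {M : ℕ} (hlam : 0 < lam) (hM : 1 ≤ M) {S : ℝ} (hS : 0 ≤ S) :
    ∫ x in Ioc 0 S, pdf lam M x = cdf lam M S := by
  rw [← intervalIntegral.integral_of_le hS,
    intervalIntegral.integral_eq_sub_of_hasDerivAt
      (fun x _ => hasDerivAt_cdf lam M x)
      ((continuous_pdf lam M).intervalIntegrable 0 S)]
  have : cdf lam M 0 = 0 := by
    unfold cdf
    simp [Real.exp_zero, zero_pow (by omega : M ≠ 0)]
  rw [this, sub_zero]

lemma tendsto_cdf_atTop {lam : ℝ} (M : ℕ) (hlam : 0 < lam) :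
    Tendsto (cdf lam M) atTop (𝓝 1) := by
  have h1 : Tendsto (fun x : ℝ => Real.exp (-lam * x)) atTop (𝓝 0) := by
    apply Real.tendsto_exp_atBot.comp
    exact tendsto_id.const_mul_atTop_of_neg (neg_neg_iff_pos.mpr hlam)
  have h2 : Tendsto (fun x : ℝ => (1 - Real.exp (-lam * x)) ^ M) atTop (𝓝 ((1 - 0) ^ M)) :=
    ((tendsto_const_nhds.sub h1).pow M)
  rw [sub_zero, one_pow] at h2
  exact h2

lemma integral_pdf_Ioi {lam : ℝ} {M : ℕ} (hlam : 0 < lam) (hM : 1 ≤ M) :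
    ∫ x in Ioi 0, pdf lam M x = 1 := by
  have := integral_Ioi_of_hasDerivAt_of_tendsto' (f := cdf lam M) (f' := pdf lam M)
    (a := 0) (m := 1) (fun x _ => hasDerivAt_cdf lam M x)
    (integrableOn_pdf M hlam le_rfl) (tendsto_cdf_atTop M hlam)
  rw [this]
  have : cdf lam M 0 = 0 := by
    unfold cdf; simp [Real.exp_zero, zero_pow (by omega : M ≠ 0)]
  rw [this, sub_zero]


lemma g_pdf_nonneg {c sn lam : ℝ} (hc : 0 < c) (hn : 0 < sn) (hlam : 0 < lam) (M : ℕ)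
    {x : ℝ} (hx : 0 ≤ x) : 0 ≤ (c * x + sn)⁻¹ * pdf lam M x := by
  have : 0 < c * x + sn := by positivity
  exact mul_nonneg (by positivity) (pdf_nonneg M hlam hx)

lemma integrableOn_g_pdf {c sn lam : ℝ} (hc : 0 < c) (hn : 0 < sn) (hlam : 0 < lam) (M : ℕ) :
    IntegrableOn (fun x => (c * x + sn)⁻¹ * pdf lam M x) (Ioi 0) := by
  have hbase : IntegrableOn (fun x => sn⁻¹ * pdf lam M x) (Ioi 0) :=
    (integrableOn_pdf M hlam le_rfl).const_mul _
  refine hbase.mono' ?_ ?_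
  · apply AEStronglyMeasurable.mul _ (continuous_pdf lam M).aestronglyMeasurable.restrict
    apply Measurable.aestronglyMeasurable
    exact ((measurable_id.const_mul c).add_const sn).inv
  · filter_upwards [ae_restrict_mem measurableSet_Ioi] with x hx
    have hx0 : (0:ℝ) ≤ x := le_of_lt hx
    have h1 : 0 < c * x + sn := by positivity
    rw [Real.norm_eq_abs, abs_of_nonneg (g_pdf_nonneg hc hn hlam M hx0)]
    exact mul_le_mul_of_nonneg_right
      (by rw [inv_le_inv₀ h1 hn]; nlinarith) (pdf_nonneg M hlam hx0)

lemma integral_lower {c sn lam : ℝ} (hc : 0 < c) (hn : 0 < sn) (hlam : 0 < lam)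
    {M : ℕ} (hM : 1 ≤ M) {T : ℝ} (hT : 0 ≤ T) :
    (c * T + sn)⁻¹ * cdf lam M T ≤ ∫ x in Ioi 0, (c * x + sn)⁻¹ * pdf lam M x := by
  have hint := integrableOn_g_pdf hc hn hlam M
  have h1 : ∫ x in Ioc 0 T, (c * x + sn)⁻¹ * pdf lam M x
      ≤ ∫ x in Ioi 0, (c * x + sn)⁻¹ * pdf lam M x := by
    refine setIntegral_mono_set hint ?_ (HasSubset.Subset.eventuallyLE Ioc_subset_Ioi_self)
    filter_upwards [ae_restrict_mem measurableSet_Ioi] with x hx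
    exact g_pdf_nonneg hc hn hlam M (le_of_lt hx)
  refine le_trans ?_ h1
  have h2 : ∫ x in Ioc 0 T, (c * T + sn)⁻¹ * pdf lam M x
      ≤ ∫ x in Ioc 0 T, (c * x + sn)⁻¹ * pdf lam M x := by
    refine setIntegral_mono_on
      (((integrableOn_pdf M hlam le_rfl).mono_set Ioc_subset_Ioi_self).const_mul _)
      (hint.mono_set Ioc_subset_Ioi_self) measurableSet_Ioc (fun x hx => ?_)
    have h3 : 0 < c * x + sn := by nlinarith [hx.1]
    have h4 : 0 < c * T + sn := by positivity
    refine mul_le_mul_of_nonneg_right ?_ (pdf_nonneg M hlam (le_of_lt hx.1))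
    rw [inv_le_inv₀ h4 h3]
    nlinarith [hx.2]
  refine le_trans (le_of_eq ?_) h2
  rw [MeasureTheory.integral_const_mul, integral_pdf_Ioc hlam hM hT]

lemma integral_upper {c sn lam : ℝ} (hc : 0 < c) (hn : 0 < sn) (hlam : 0 < lam)
    {M : ℕ} (hM : 1 ≤ M) {S : ℝ} (hS : 0 ≤ S) :
    ∫ x in Ioi 0, (c * x + sn)⁻¹ * pdf lam M x
      ≤ sn⁻¹ * cdf lam M S + (c * S + sn)⁻¹ := by
  have hint := integrableOn_g_pdf hc hn hlam M
  have hsub : Ioi S ⊆ Ioi (0:ℝ) := Ioi_subset_Ioi hS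
  rw [← Ioc_union_Ioi_eq_Ioi hS, setIntegral_union Ioc_disjoint_Ioi_same measurableSet_Ioi
    (hint.mono_set Ioc_subset_Ioi_self) (hint.mono_set hsub)]
  have hp1 : ∫ x in Ioc 0 S, (c * x + sn)⁻¹ * pdf lam M x ≤ sn⁻¹ * cdf lam M S := by
    have h2 : ∫ x in Ioc 0 S, (c * x + sn)⁻¹ * pdf lam M x
        ≤ ∫ x in Ioc 0 S, sn⁻¹ * pdf lam M x := by
      refine setIntegral_mono_on (hint.mono_set Ioc_subset_Ioi_self)
        (((integrableOn_pdf M hlam le_rfl).mono_set Ioc_subset_Ioi_self).const_mul _)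
        measurableSet_Ioc (fun x hx => ?_)
      have h3 : 0 < c * x + sn := by nlinarith [hx.1]
      refine mul_le_mul_of_nonneg_right ?_ (pdf_nonneg M hlam (le_of_lt hx.1))
      rw [inv_le_inv₀ h3 hn]
      nlinarith [hx.1]
    rw [MeasureTheory.integral_const_mul, integral_pdf_Ioc hlam hM hS] at h2
    exact h2
  have hp2 : ∫ x in Ioi S, (c * x + sn)⁻¹ * pdf lam M x ≤ (c * S + sn)⁻¹ := by
    have h2 : ∫ x in Ioi S, (c * x + sn)⁻¹ * pdf lam M x
        ≤ ∫ x in Ioi S, (c * S + sn)⁻¹ * pdf lam M x := by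
      refine setIntegral_mono_on (hint.mono_set hsub)
        (((integrableOn_pdf M hlam le_rfl).mono_set hsub).const_mul _)
        measurableSet_Ioi (fun x hx => ?_)
      have hx0 : (0:ℝ) ≤ x := le_of_lt (lt_of_le_of_lt hS hx)
      have h3 : 0 < c * x + sn := by positivity
      have h4 : 0 < c * S + sn := by positivity
      refine mul_le_mul_of_nonneg_right ?_ (pdf_nonneg M hlam hx0)
      rw [inv_le_inv₀ h3 h4]
      nlinarith [hx.out]
    rw [MeasureTheory.integral_const_mul] at h2
    have h5 : ∫ x in Ioi S, pdf lam M x ≤ 1 := by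
      rw [← integral_pdf_Ioi hlam hM]
      refine setIntegral_mono_set (integrableOn_pdf M hlam le_rfl) ?_
        (HasSubset.Subset.eventuallyLE hsub)
      filter_upwards [ae_restrict_mem measurableSet_Ioi] with x hx
      exact pdf_nonneg M hlam (le_of_lt hx)
    have h6 : (0:ℝ) < c * S + sn := by positivity
    calc ∫ x in Ioi S, (c * x + sn)⁻¹ * pdf lam M x
        ≤ (c * S + sn)⁻¹ * ∫ x in Ioi S, pdf lam M x := h2
      _ ≤ (c * S + sn)⁻¹ * 1 := by
          exact mul_le_mul_of_nonneg_left h5 (by positivity)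
      _ = (c * S + sn)⁻¹ := mul_one _
  exact add_le_add hp1 hp2


lemma tendsto_phi {c sn lam : ℝ} (hc : 0 < c) (hn : 0 < sn) (hlam : 0 < lam) (e : ℝ) :
    Tendsto (fun y : ℝ => y / (c * ((y + e * Real.log y) / lam) + sn)) atTop (𝓝 (lam / c)) := by
  have hlog : Tendsto (fun y : ℝ => Real.log y / y) atTop (𝓝 0) :=
    Real.isLittleO_log_id_atTop.tendsto_div_nhds_zero
  have h1 : Tendsto (fun y : ℝ => c / lam + c * e / lam * (Real.log y / y) + sn / y)
      atTop (𝓝 (c / lam + c * e / lam * 0 + 0)) :=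
    (tendsto_const_nhds.add (hlog.const_mul (c * e / lam))).add
      (tendsto_const_nhds.div_atTop tendsto_id)
  rw [mul_zero, add_zero, add_zero] at h1
  have h3 : Tendsto (fun y : ℝ => (c / lam + c * e / lam * (Real.log y / y) + sn / y)⁻¹)
      atTop (𝓝 ((c / lam)⁻¹)) := h1.inv₀ (by positivity)
  rw [inv_div] at h3
  refine h3.congr' ?_
  filter_upwards [eventually_gt_atTop (0:ℝ)] with y hy
  have hden : c * ((y + e * Real.log y) / lam) + sn
      = y * (c / lam + c * e / lam * (Real.log y / y) + sn / y) := by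
    field_simp
  rw [hden, div_mul_cancel_left₀ (ne_of_gt hy)]

lemma tendsto_logM : Tendsto (fun M : ℕ => Real.log M) atTop atTop :=
  Real.tendsto_log_atTop.comp tendsto_natCast_atTop_atTop

lemma one_lt_logM {M : ℕ} (hM : 3 ≤ M) : 1 < Real.log M := by
  have h3 : (3:ℝ) ≤ (M:ℝ) := by exact_mod_cast hM
  have h1 : Real.log 3 ≤ Real.log M := Real.log_le_log (by norm_num) h3
  refine lt_of_lt_of_le ?_ h1
  rw [Real.lt_log_iff_exp_lt (by norm_num)]
  calc Real.exp 1 < 2.7182818286 := Real.exp_one_lt_d9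
    _ < 3 := by norm_num

lemma tendsto_key {c sn lam : ℝ} (hc : 0 < c) (hn : 0 < sn) (hlam : 0 < lam) :
    Tendsto (fun M : ℕ => Real.log M * ∫ x in Ioi 0, (c * x + sn)⁻¹ * pdf lam M x)
      atTop (𝓝 (lam / c)) := by
  set TM : ℕ → ℝ := fun M => (Real.log M + Real.log (Real.log M)) / lam with hTM
  set SM : ℕ → ℝ := fun M => (Real.log M - Real.log (Real.log M)) / lam with hSM
  -- basic positivity facts, eventually
  have hbasic : ∀ᶠ M : ℕ in atTop, 3 ≤ M := eventually_ge_atTop 3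
  have hfacts : ∀ M : ℕ, 3 ≤ M → 1 < Real.log M ∧ 0 ≤ SM M ∧ 0 ≤ TM M := by
    intro M hM
    have hy := one_lt_logM hM
    have hly : 0 ≤ Real.log (Real.log M) := Real.log_nonneg (le_of_lt hy)
    have hlty : Real.log (Real.log M) < Real.log M :=
      lt_of_le_of_lt (Real.log_le_sub_one_of_pos (by linarith)) (by linarith)
    refine ⟨hy, ?_, ?_⟩
    · simp only [hSM]
      exact div_nonneg (by linarith) hlam.le
    · simp only [hTM]
      exact div_nonneg (by linarith) hlam.le
  -- exponential computations
  have hexpT : ∀ M : ℕ, 3 ≤ M →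
      Real.exp (-lam * TM M) = ((M : ℝ) * Real.log M)⁻¹ := by
    intro M hM
    have hy := one_lt_logM hM
    have hM0 : (0:ℝ) < M := by positivity
    have h1 : -lam * TM M = -(Real.log M + Real.log (Real.log M)) := by
      simp only [hTM]
      field_simp
    rw [h1, Real.exp_neg, Real.exp_add, Real.exp_log hM0, Real.exp_log (by linarith)]
  have hexpS : ∀ M : ℕ, 3 ≤ M →
      Real.exp (-lam * SM M) = Real.log M / (M : ℝ) := by
    intro M hM
    have hy := one_lt_logM hM
    have hM0 : (0:ℝ) < M := by positivity
    have h1 : -lam * SM M = Real.log (Real.log M) - Real.log M := by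
      simp only [hSM]
      field_simp
      ring
    rw [h1, Real.exp_sub, Real.exp_log hM0, Real.exp_log (by linarith)]
  -- cdf at T tends to 1
  have hcdfT : Tendsto (fun M : ℕ => cdf lam M (TM M)) atTop (𝓝 1) := by
    have hlow : Tendsto (fun M : ℕ => 1 - (Real.log M)⁻¹) atTop (𝓝 (1 - 0)) :=
      tendsto_const_nhds.sub (tendsto_inv_atTop_zero.comp tendsto_logM)
    rw [sub_zero] at hlow
    refine tendsto_of_tendsto_of_tendsto_of_le_of_le' hlow tendsto_const_nhds ?_ ?_
    · filter_upwards [hbasic] with M hM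
      obtain ⟨hy, _, hT0⟩ := hfacts M hM
      have hM0 : (0:ℝ) < M := by positivity
      have h3 : (3:ℝ) ≤ (M:ℝ) := by exact_mod_cast hM
      have hMy : (1:ℝ) ≤ (M:ℝ) * Real.log M := by nlinarith
      have hb := one_add_mul_le_pow
        (show (-2:ℝ) ≤ -((M : ℝ) * Real.log M)⁻¹ by
          have : ((M : ℝ) * Real.log M)⁻¹ ≤ 1 := by
            rw [inv_le_one_iff₀]; right; exact hMy
          linarith) M
      have heq : 1 + (M:ℝ) * -(((M : ℝ) * Real.log M)⁻¹) = 1 - (Real.log M)⁻¹ := by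
        rw [mul_inv]
        field_simp
        ring
      rw [heq] at hb
      have heq2 : (1:ℝ) + -(((M : ℝ) * Real.log M)⁻¹) = 1 - ((M : ℝ) * Real.log M)⁻¹ := by ring
      rw [heq2] at hb
      unfold cdf
      rw [hexpT M hM]
      exact hb
    · filter_upwards [hbasic] with M hM
      exact cdf_le_one M hlam (hfacts M hM).2.2
  -- cdf at S is ≤ 1/M
  have hcdfS : ∀ M : ℕ, 3 ≤ M → cdf lam M (SM M) ≤ ((M:ℝ))⁻¹ := by
    intro M hM
    obtain ⟨hy, hS0, _⟩ := hfacts M hM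
    have hM0 : (0:ℝ) < M := by positivity
    have hyM : Real.log M < (M:ℝ) :=
      lt_of_le_of_lt (Real.log_le_sub_one_of_pos hM0) (by linarith)
    have ha : (0:ℝ) ≤ 1 - Real.log M / M := by
      rw [sub_nonneg, div_le_one hM0]; exact le_of_lt hyM
    have h1 : 1 - Real.log M / (M:ℝ) ≤ Real.exp (-(Real.log M / M)) := by
      have := Real.add_one_le_exp (-(Real.log M / M))
      linarith
    unfold cdf
    rw [hexpS M hM]
    calc (1 - Real.log M / (M:ℝ)) ^ M ≤ Real.exp (-(Real.log M / M)) ^ M :=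
          pow_le_pow_left₀ ha h1 M
      _ = Real.exp ((M:ℝ) * -(Real.log M / M)) := by
          rw [Real.exp_nat_mul]
      _ = Real.exp (-(Real.log M)) := by
          congr 1
          field_simp
      _ = ((M:ℝ))⁻¹ := by
          rw [Real.exp_neg, Real.exp_log hM0]
  -- limits of the two boundary terms
  have hphiT : Tendsto (fun M : ℕ => Real.log M / (c * TM M + sn)) atTop (𝓝 (lam / c)) := by
    have := (tendsto_phi hc hn hlam 1).comp tendsto_logM
    refine this.congr fun M => ?_
    simp only [Function.comp, hTM, one_mul]
  have hphiS : Tendsto (fun M : ℕ => Real.log M / (c * SM M + sn)) atTop (𝓝 (lam / c)) := by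
    have := (tendsto_phi hc hn hlam (-1)).comp tendsto_logM
    refine this.congr fun M => ?_
    simp only [Function.comp, hSM, neg_one_mul]
    ring_nf
  have hzero : Tendsto (fun M : ℕ => Real.log M * sn⁻¹ * cdf lam M (SM M)) atTop (𝓝 0) := by
    have hub : Tendsto (fun M : ℕ => sn⁻¹ * (Real.log M / M)) atTop (𝓝 (sn⁻¹ * 0)) :=
      (Real.isLittleO_log_id_atTop.tendsto_div_nhds_zero.comp
        tendsto_natCast_atTop_atTop).const_mul _
    rw [mul_zero] at hub
    refine tendsto_of_tendsto_of_tendsto_of_le_of_le' tendsto_const_nhds hub ?_ ?_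
    · filter_upwards [hbasic] with M hM
      obtain ⟨hy, hS0, _⟩ := hfacts M hM
      have := cdf_nonneg (lam := lam) M hlam hS0
      positivity
    · filter_upwards [hbasic] with M hM
      obtain ⟨hy, hS0, _⟩ := hfacts M hM
      have hM0 : (0:ℝ) < M := by positivity
      have h1 := hcdfS M hM
      calc Real.log M * sn⁻¹ * cdf lam M (SM M)
          ≤ Real.log M * sn⁻¹ * (M:ℝ)⁻¹ := by
            refine mul_le_mul_of_nonneg_left h1 (by positivity)
        _ = sn⁻¹ * (Real.log M / M) := by ring
  -- squeeze
  have hlower : Tendsto (fun M : ℕ => Real.log M / (c * TM M + sn) * cdf lam M (TM M))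
      atTop (𝓝 (lam / c * 1)) := hphiT.mul hcdfT
  rw [mul_one] at hlower
  have hupper : Tendsto (fun M : ℕ =>
      Real.log M * sn⁻¹ * cdf lam M (SM M) + Real.log M / (c * SM M + sn))
      atTop (𝓝 (0 + lam / c)) := hzero.add hphiS
  rw [zero_add] at hupper
  refine tendsto_of_tendsto_of_tendsto_of_le_of_le' hlower hupper ?_ ?_
  · filter_upwards [hbasic] with M hM
    obtain ⟨hy, hS0, hT0⟩ := hfacts M hM
    have hM1 : 1 ≤ M := by omega
    have hTpos : 0 < c * TM M + sn := by positivity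
    have h1 := integral_lower hc hn hlam hM1 hT0
    calc Real.log M / (c * TM M + sn) * cdf lam M (TM M)
        = Real.log M * ((c * TM M + sn)⁻¹ * cdf lam M (TM M)) := by ring
      _ ≤ Real.log M * ∫ x in Ioi 0, (c * x + sn)⁻¹ * pdf lam M x :=
          mul_le_mul_of_nonneg_left h1 (by linarith)
  · filter_upwards [hbasic] with M hM
    obtain ⟨hy, hS0, hT0⟩ := hfacts M hM
    have hM1 : 1 ≤ M := by omega
    have h1 := integral_upper hc hn hlam hM1 hS0
    calc Real.log M * ∫ x in Ioi 0, (c * x + sn)⁻¹ * pdf lam M x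
        ≤ Real.log M * (sn⁻¹ * cdf lam M (SM M) + (c * SM M + sn)⁻¹) :=
          mul_le_mul_of_nonneg_left h1 (by linarith)
      _ = Real.log M * sn⁻¹ * cdf lam M (SM M) + Real.log M / (c * SM M + sn) := by
          ring

lemma distortion_eq (sθ sv sn : ℝ) (hθ : 0 < sθ) (hv : 0 < sv) (hn : 0 < sn)
    {x : ℝ} (hx : 0 < x) :
    (1 / sθ + x / (x * sv + sn))⁻¹
      = sθ * sv / (sθ + sv) + sθ ^ 2 * sn / (sθ + sv) * ((sθ + sv) * x + sn)⁻¹ := by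
  have h1 : 0 < x * sv + sn := by positivity
  have h2 : 0 < (sθ + sv) * x + sn := by positivity
  have h3 : 1 / sθ + x / (x * sv + sn) = (x * (sθ + sv) + sn) / (sθ * (x * sv + sn)) := by
    field_simp
    ring
  rw [h3, inv_div]
  rw [div_add' _ _ _ (by positivity), div_eq_div_iff (by nlinarith) (by positivity)]
  field_simp
  ring

lemma integral_distortion {sθ sv sn lam : ℝ} (hθ : 0 < sθ) (hv : 0 < sv) (hn : 0 < sn)
    (hlam : 0 < lam) {M : ℕ} (hM : 1 ≤ M) :
    ∫ x in Ioi (0:ℝ), (1 / sθ + x / (x * sv + sn))⁻¹ * pdf lam M x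
      = sθ * sv / (sθ + sv)
        + sθ ^ 2 * sn / (sθ + sv) * ∫ x in Ioi (0:ℝ), ((sθ + sv) * x + sn)⁻¹ * pdf lam M x := by
  have hc : 0 < sθ + sv := by positivity
  have h1 : ∫ x in Ioi (0:ℝ), (1 / sθ + x / (x * sv + sn))⁻¹ * pdf lam M x
      = ∫ x in Ioi (0:ℝ), (sθ * sv / (sθ + sv) * pdf lam M x
          + sθ ^ 2 * sn / (sθ + sv) * (((sθ + sv) * x + sn)⁻¹ * pdf lam M x)) := by
    refine setIntegral_congr_fun measurableSet_Ioi (fun x hx => ?_)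
    rw [distortion_eq sθ sv sn hθ hv hn hx]
    ring
  rw [h1, integral_add ((integrableOn_pdf M hlam le_rfl).const_mul _)
    ((integrableOn_g_pdf hc hn hlam M).const_mul _),
    MeasureTheory.integral_const_mul, MeasureTheory.integral_const_mul,
    integral_pdf_Ioi hlam hM, mul_one]

end DivAsym


open DivAsym in
/-- Asymptotics of the expected distortion of the multi-sensor diversity scheme
with unit amplification under Rayleigh fading:
with `A = σθ²σv²/(σθ²+σv²)` and `B = σn²σθ²/(σv²(σθ²+σv²))`,
`ln(M)·(E[D_M] − A) → A·B·λ`, and consequently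
`E[D_M] ~ A·[1 + B·λ/ln(M)]` as `M → ∞`. -/
theorem diversity_distortion_asymptotics (sθ sv sn lam : ℝ)
    (hθ : 0 < sθ) (hv : 0 < sv) (hn : 0 < sn) (hlam : 0 < lam) :
    Tendsto (fun M : ℕ =>
        Real.log M *
          ((∫ x in Set.Ioi (0:ℝ),
              (1 / sθ + x / (x * sv + sn))⁻¹ *
                ((M : ℝ) * (1 - Real.exp (-lam * x)) ^ (M - 1)
                  * (lam * Real.exp (-lam * x))))
            - sθ * sv / (sθ + sv)))
      atTop (nhds (sθ * sv / (sθ + sv) * (sn * sθ / (sv * (sθ + sv))) * lam)) ∧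
    Tendsto (fun M : ℕ =>
        (∫ x in Set.Ioi (0:ℝ),
            (1 / sθ + x / (x * sv + sn))⁻¹ *
              ((M : ℝ) * (1 - Real.exp (-lam * x)) ^ (M - 1)
                * (lam * Real.exp (-lam * x)))) /
          (sθ * sv / (sθ + sv) * (1 + sn * sθ / (sv * (sθ + sv)) * lam / Real.log M)))
      atTop (nhds 1) := by
  have hc : 0 < sθ + sv := by positivity
  set A : ℝ := sθ * sv / (sθ + sv) with hA
  set K : ℝ := sθ ^ 2 * sn / (sθ + sv) with hK
  have hpdf : ∀ (M : ℕ) (x : ℝ),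
      (M : ℝ) * (1 - Real.exp (-lam * x)) ^ (M - 1) * (lam * Real.exp (-lam * x))
        = pdf lam M x := fun _ _ => rfl
  have hED : ∀ᶠ M : ℕ in atTop,
      (∫ x in Set.Ioi (0:ℝ), (1 / sθ + x / (x * sv + sn))⁻¹ *
        ((M : ℝ) * (1 - Real.exp (-lam * x)) ^ (M - 1) * (lam * Real.exp (-lam * x))))
      = A + K * ∫ x in Ioi (0:ℝ), ((sθ + sv) * x + sn)⁻¹ * pdf lam M x := by
    filter_upwards [eventually_ge_atTop 1] with M hM
    simp only [hpdf]
    exact integral_distortion hθ hv hn hlam hM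
  have hkey := tendsto_key (c := sθ + sv) (sn := sn) (lam := lam) hc hn hlam
  -- Part 1
  have hpart1 : Tendsto (fun M : ℕ =>
      Real.log M *
        ((∫ x in Set.Ioi (0:ℝ), (1 / sθ + x / (x * sv + sn))⁻¹ *
            ((M : ℝ) * (1 - Real.exp (-lam * x)) ^ (M - 1) * (lam * Real.exp (-lam * x))))
          - A))
      atTop (𝓝 (A * (sn * sθ / (sv * (sθ + sv))) * lam)) := by
    have h1 : Tendsto (fun M : ℕ =>
        K * (Real.log M * ∫ x in Ioi (0:ℝ), ((sθ + sv) * x + sn)⁻¹ * pdf lam M x))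
        atTop (𝓝 (K * (lam / (sθ + sv)))) := hkey.const_mul K
    have h2 : K * (lam / (sθ + sv)) = A * (sn * sθ / (sv * (sθ + sv))) * lam := by
      rw [hA, hK]
      field_simp
    rw [h2] at h1
    refine h1.congr' ?_
    filter_upwards [hED] with M hMeq
    rw [hMeq]
    ring
  constructor
  · exact hpart1
  · -- Part 2
    have hloginv : Tendsto (fun M : ℕ => (Real.log M)⁻¹) atTop (𝓝 0) :=
      tendsto_inv_atTop_zero.comp tendsto_logM
    have hf : Tendsto (fun M : ℕ =>
        ∫ x in Set.Ioi (0:ℝ), (1 / sθ + x / (x * sv + sn))⁻¹ *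
          ((M : ℝ) * (1 - Real.exp (-lam * x)) ^ (M - 1) * (lam * Real.exp (-lam * x))))
        atTop (𝓝 A) := by
      have h1 : Tendsto (fun M : ℕ => A +
          (Real.log M *
            ((∫ x in Set.Ioi (0:ℝ), (1 / sθ + x / (x * sv + sn))⁻¹ *
              ((M : ℝ) * (1 - Real.exp (-lam * x)) ^ (M - 1) * (lam * Real.exp (-lam * x))))
              - A)) * (Real.log M)⁻¹)
          atTop (𝓝 (A + A * (sn * sθ / (sv * (sθ + sv))) * lam * 0)) :=
        tendsto_const_nhds.add (hpart1.mul hloginv)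
      rw [mul_zero, add_zero] at h1
      refine h1.congr' ?_
      filter_upwards [eventually_ge_atTop 3] with M hM
      have hy : 1 < Real.log M := one_lt_logM hM
      rw [mul_comm (Real.log M), mul_assoc, mul_inv_cancel₀ (ne_of_gt (by linarith : (0:ℝ) < Real.log M))]
      ring
    have hd : Tendsto (fun M : ℕ =>
        A * (1 + sn * sθ / (sv * (sθ + sv)) * lam / Real.log M))
        atTop (𝓝 (A * (1 + 0))) := by
      refine Tendsto.const_mul A (tendsto_const_nhds.add ?_)
      exact tendsto_const_nhds.div_atTop tendsto_logM
    rw [add_zero, mul_one] at hd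
    have hA0 : A ≠ 0 := by rw [hA]; positivity
    have := hf.div hd hA0
    rw [div_self hA0] at this
    exact this
end

section
/- Let σθ² > 0, σv² > 0, σn² > 0, λ > 0, and set A = σθ²σv²/(σθ²+σv²), B = σn²σθ²/(σv²(σθ²+σv²)) and L = σθ²(1 − 1/e) + A/e. For an integer M ≥ 2 set T_M = (1/λ)ln(M) and define E[D_M] = σθ²·[1 − (1 − 1/M)^{M−1}] + M(1 − 1/M)^{M−1} · ∫_{T_M}^∞ (1/σθ² + x/(xσv² + σn²))^{−1} λ e^{−λx} dx. Then ln(M) · (E[D_M] − L) → (1/e)·A·B·λ as M → ∞; in particular E[D_M] is asymptotically equivalent to L + (1/e)·A·B·λ/ln(M) as M → ∞. -/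
open MeasureTheory Filter Real Set


lemma aloha_exp_int {μ : ℝ} (hμ : 0 < μ) (a : ℝ) :
    IntegrableOn (fun x => Real.exp (-(μ * x))) (Ioi a) ∧
    ∫ x in Ioi a, Real.exp (-(μ * x)) = Real.exp (-(μ * a)) / μ := by
  have hint : IntegrableOn (fun x => Real.exp (-(μ * x))) (Ioi a) := by
    simpa [neg_mul] using exp_neg_integrableOn_Ioi a hμ
  refine ⟨hint, ?_⟩
  have hderiv : ∀ x ∈ Ioi a, HasDerivAt (fun x => -Real.exp (-(μ * x)) / μ)
      (Real.exp (-(μ * x))) x := by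
    intro x _
    have h1 : HasDerivAt (fun x => -(μ * x)) (-μ) x := by
      have := ((hasDerivAt_id x).const_mul μ).neg; simp only [mul_one] at this; exact this
    have h2 := (Real.hasDerivAt_exp (-(μ * x))).comp x h1
    have h3 := (h2.neg).div_const μ
    rw [show -(rexp (-(μ * x)) * -μ) / μ = rexp (-(μ * x)) by field_simp] at h3
    exact h3
  have hlim : Tendsto (fun x => -Real.exp (-(μ * x)) / μ) atTop (nhds 0) := by
    have h : Tendsto (fun x : ℝ => -(μ * x)) atTop atBot := by
      apply tendsto_neg_atBot_iff.mpr
      exact (tendsto_const_mul_atTop_of_pos hμ).mpr tendsto_id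
    have := (Real.tendsto_exp_atBot.comp h).neg
    simpa using this.div_const μ
  have := integral_Ioi_of_hasDerivAt_of_tendsto
    (f := fun x => -Real.exp (-(μ * x)) / μ) (f' := fun x => Real.exp (-(μ * x)))
    (Continuous.continuousWithinAt (by continuity)) hderiv hint hlim
  rw [this]; ring

lemma aloha_I_props {lam c T : ℝ} (hlam : 0 < lam) (hc : 0 < c) (hT : 0 < T) :
    IntegrableOn (fun x => lam * Real.exp (-(lam * x)) / (x + c)) (Ioi T) ∧
    ∫ x in Ioi T, lam * Real.exp (-(lam * x)) / (x + c) ≤ Real.exp (-(lam * T)) / (T + c) ∧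
    lam * Real.exp (-(lam * T)) / ((T + c) * lam + 1) ≤
      ∫ x in Ioi T, lam * Real.exp (-(lam * x)) / (x + c) := by
  have hTc : 0 < T + c := by linarith
  have hmeas : AEStronglyMeasurable (fun x => lam * Real.exp (-(lam * x)) / (x + c))
      (volume.restrict (Ioi T)) := by
    apply ContinuousOn.aestronglyMeasurable _ measurableSet_Ioi
    apply ContinuousOn.div (by fun_prop) (by fun_prop)
    intro x hx
    have : T < x := hx
    exact ne_of_gt (by linarith)
  have hint : IntegrableOn (fun x => lam * Real.exp (-(lam * x)) / (x + c)) (Ioi T) := by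
    apply Integrable.mono' (((aloha_exp_int hlam T).1.const_mul (lam / (T + c)))) hmeas
    filter_upwards [ae_restrict_mem measurableSet_Ioi] with x hx
    have hx' : T < x := hx
    have hxc : 0 < x + c := by linarith
    rw [Real.norm_eq_abs, abs_of_nonneg (by positivity)]
    rw [div_le_iff₀ hxc]
    have h1 : lam / (T + c) * Real.exp (-(lam * x)) * (x + c)
        = lam * Real.exp (-(lam * x)) * ((x + c) / (T + c)) := by ring
    rw [h1]
    have h2 : (1 : ℝ) ≤ (x + c) / (T + c) := by
      rw [le_div_iff₀ hTc]; linarith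
    nlinarith [mul_pos hlam (Real.exp_pos (-(lam * x))), h2]
  refine ⟨hint, ?_, ?_⟩
  · -- upper bound
    have hle : ∫ x in Ioi T, lam * Real.exp (-(lam * x)) / (x + c)
        ≤ ∫ x in Ioi T, lam / (T + c) * Real.exp (-(lam * x)) := by
      apply setIntegral_mono_on hint ((aloha_exp_int hlam T).1.const_mul _) measurableSet_Ioi
      intro x hx
      have hx' : T < x := hx
      have hxc : 0 < x + c := by linarith
      rw [div_le_iff₀ hxc, div_mul_eq_mul_div, div_mul_eq_mul_div, le_div_iff₀ hTc]
      nlinarith [mul_pos hlam (Real.exp_pos (-(lam * x)))]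
    calc ∫ x in Ioi T, lam * Real.exp (-(lam * x)) / (x + c)
        ≤ ∫ x in Ioi T, lam / (T + c) * Real.exp (-(lam * x)) := hle
      _ = lam / (T + c) * (Real.exp (-(lam * T)) / lam) := by
          rw [integral_const_mul, (aloha_exp_int hlam T).2]
      _ = Real.exp (-(lam * T)) / (T + c) := by field_simp
  · -- lower bound
    set μ' : ℝ := lam + 1 / (T + c) with hμ'
    have hμ'pos : 0 < μ' := by positivity
    have hge : ∫ x in Ioi T, Real.exp (T / (T + c)) * lam / (T + c) * Real.exp (-(μ' * x))
        ≤ ∫ x in Ioi T, lam * Real.exp (-(lam * x)) / (x + c) := by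
      apply setIntegral_mono_on (((aloha_exp_int hμ'pos T).1.const_mul _)) hint measurableSet_Ioi
      intro x hx
      have hx' : T < x := hx
      have hxc : 0 < x + c := by linarith
      -- key: 1 + (x-T)/(T+c) ≤ exp((x-T)/(T+c))
      have hkey : (x + c) / (T + c) ≤ Real.exp ((x - T) / (T + c)) := by
        have := Real.add_one_le_exp ((x - T) / (T + c))
        have h1 : (x + c) / (T + c) = (x - T) / (T + c) + 1 := by field_simp; ring
        linarith
      have hexp : Real.exp (T / (T + c)) * Real.exp (-(μ' * x))
          = Real.exp (-(lam * x)) * Real.exp (-((x - T) / (T + c))) := by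
        rw [← Real.exp_add, ← Real.exp_add]
        congr 1
        rw [hμ']; field_simp; ring
      have h2 : Real.exp (-((x - T) / (T + c))) * (x + c) ≤ T + c := by
        rw [Real.exp_neg]
        rw [inv_mul_le_iff₀ (Real.exp_pos _)]
        calc x + c = (x + c) / (T + c) * (T + c) := (div_mul_cancel₀ _ (ne_of_gt hTc)).symm
          _ ≤ Real.exp ((x - T) / (T + c)) * (T + c) :=
              mul_le_mul_of_nonneg_right hkey hTc.le
      have key2 : Real.exp (T / (T + c)) * Real.exp (-(μ' * x)) * (x + c)
          ≤ Real.exp (-(lam * x)) * (T + c) := by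
        rw [hexp]
        calc Real.exp (-(lam * x)) * Real.exp (-((x - T) / (T + c))) * (x + c)
            = Real.exp (-(lam * x)) * (Real.exp (-((x - T) / (T + c))) * (x + c)) := by ring
          _ ≤ Real.exp (-(lam * x)) * (T + c) :=
              mul_le_mul_of_nonneg_left h2 (Real.exp_pos _).le
      rw [div_mul_eq_mul_div, div_le_div_iff₀ hTc hxc]
      calc Real.exp (T / (T + c)) * lam * Real.exp (-(μ' * x)) * (x + c)
          = lam * (Real.exp (T / (T + c)) * Real.exp (-(μ' * x)) * (x + c)) := by ring
        _ ≤ lam * (Real.exp (-(lam * x)) * (T + c)) :=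
            mul_le_mul_of_nonneg_left key2 hlam.le
        _ = lam * Real.exp (-(lam * x)) * (T + c) := by ring
    calc lam * Real.exp (-(lam * T)) / ((T + c) * lam + 1)
        = Real.exp (T / (T + c)) * lam / (T + c) * (Real.exp (-(μ' * T)) / μ') := by
          have hμT : (T + c) * μ' = (T + c) * lam + 1 := by rw [hμ']; field_simp
          rw [show -(μ' * T) = -(lam * T) + -(T / (T + c)) by rw [hμ']; ring]
          rw [Real.exp_add, Real.exp_neg (T / (T + c)), ← hμT]
          field_simp [Real.exp_ne_zero, hμ'pos.ne']
      _ = ∫ x in Ioi T, Real.exp (T / (T + c)) * lam / (T + c) * Real.exp (-(μ' * x)) := by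
          rw [integral_const_mul, (aloha_exp_int hμ'pos T).2]
      _ ≤ _ := hge



lemma aloha_log_ratio {lam k : ℝ} (hk : 0 < k) :
    Tendsto (fun M : ℕ => lam * Real.log M / (Real.log M + k)) atTop (nhds lam) := by
  have hlog : Tendsto (fun M : ℕ => Real.log M) atTop atTop :=
    Real.tendsto_log_atTop.comp tendsto_natCast_atTop_atTop
  have h1 : Tendsto (fun t : ℝ => lam * t / (t + k)) atTop (nhds lam) := by
    have h2 : Tendsto (fun t : ℝ => lam / (1 + k / t)) atTop (nhds lam) := by
      have h3 : Tendsto (fun t : ℝ => 1 + k / t) atTop (nhds 1) := by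
        have h4 : Tendsto (fun t : ℝ => k / t) atTop (nhds 0) := by
          simpa [div_eq_mul_inv] using tendsto_inv_atTop_zero.const_mul k
        simpa using (tendsto_const_nhds (x := (1:ℝ))).add h4
      have := (tendsto_const_nhds (x := lam)).div h3 one_ne_zero; rw [div_one] at this; exact this
    apply h2.congr'
    filter_upwards [eventually_gt_atTop 0] with t ht
    have ht' : t ≠ 0 := ht.ne'
    have htk : t + k ≠ 0 := by positivity
    field_simp
  exact h1.comp hlog

lemma aloha_p_bounds {M : ℕ} (hM : 2 ≤ M) :
    0 ≤ (1 - 1 / (M : ℝ)) ^ (M - 1) - 1 / Real.exp 1 ∧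
    (1 - 1 / (M : ℝ)) ^ (M - 1) - 1 / Real.exp 1 ≤ 1 / M := by
  have hM2 : (2:ℝ) ≤ (M:ℝ) := by exact_mod_cast hM
  have hMpos : (0:ℝ) < M := by linarith
  set y : ℝ := 1 - 1 / (M : ℝ) with hy
  have hy0 : 0 < y := by
    have : 1 / (M:ℝ) < 1 := by rw [div_lt_one hMpos]; linarith
    rw [hy]; linarith
  have hm : ((M - 1 : ℕ) : ℝ) = (M : ℝ) - 1 := by
    rw [Nat.cast_sub (by omega)]; norm_num
  have hmpos : (0:ℝ) < (M:ℝ) - 1 := by linarith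
  -- p = exp(m * log y)
  have hp : y ^ (M - 1) = Real.exp (((M:ℝ) - 1) * Real.log y) := by
    rw [← hm, Real.exp_nat_mul, Real.exp_log hy0]
  set u : ℝ := ((M:ℝ) - 1) * Real.log y + 1 with hu
  -- log y ≤ -1/M
  have hlog_ub : Real.log y ≤ -(1 / M) := by
    have := Real.log_le_sub_one_of_pos hy0
    rw [hy] at this ⊢; linarith
  -- log y ≥ -1/(M-1)
  have hlog_lb : -(1 / ((M:ℝ) - 1)) ≤ Real.log y := by
    have hyinv : Real.log y⁻¹ ≤ y⁻¹ - 1 := Real.log_le_sub_one_of_pos (by positivity)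
    rw [Real.log_inv] at hyinv
    have hyv : y = ((M:ℝ) - 1) / M := by rw [hy]; field_simp
    have hyval : y⁻¹ = (M:ℝ) / ((M:ℝ) - 1) := by rw [hyv, inv_div]
    rw [hyval] at hyinv
    have : (M:ℝ) / ((M:ℝ) - 1) - 1 = 1 / ((M:ℝ) - 1) := by
      field_simp
      ring
    rw [this] at hyinv
    linarith
  have hu0 : 0 ≤ u := by
    have := mul_le_mul_of_nonneg_left hlog_lb hmpos.le
    rw [hu]
    have h7 : ((M:ℝ) - 1) * -(1 / ((M:ℝ) - 1)) = -1 := by field_simp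
    linarith [h7 ▸ this]
  have hu1 : u ≤ 1 / M := by
    have := mul_le_mul_of_nonneg_left hlog_ub hmpos.le
    rw [hu]
    have h8 : ((M:ℝ) - 1) * -(1 / M) = -1 + 1 / M := by field_simp; ring
    linarith [h8 ▸ this]
  have huM : u ≤ 1 := hu1.trans (by rw [div_le_one hMpos]; linarith)
  -- p - 1/e = exp(-1) * (exp u - 1)
  have hpe : y ^ (M - 1) - 1 / Real.exp 1 = Real.exp (-1) * (Real.exp u - 1) := by
    rw [hp, mul_sub, ← Real.exp_add, mul_one]
    congr 1
    · congr 1; rw [hu]; ring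
    · rw [Real.exp_neg, one_div]
  constructor
  · rw [hpe]
    have : 1 ≤ Real.exp u := Real.one_le_exp hu0
    nlinarith [Real.exp_pos (-1:ℝ)]
  · rw [hpe]
    -- exp u - 1 ≤ u * exp u ≤ u * exp 1
    have h5 : (1 - u) * Real.exp u ≤ 1 := by
      have h6 := Real.add_one_le_exp (-u)
      have h7 : (-u + 1) * Real.exp u ≤ Real.exp (-u) * Real.exp u :=
        mul_le_mul_of_nonneg_right h6 (Real.exp_pos u).le
      rw [← Real.exp_add, neg_add_cancel, Real.exp_zero] at h7
      linarith
    have h9 : Real.exp u - 1 ≤ u * Real.exp u := by nlinarith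
    have h10 : u * Real.exp u ≤ u * Real.exp 1 :=
      mul_le_mul_of_nonneg_left (Real.exp_le_exp.mpr huM) hu0
    have h11 : Real.exp (-1) * (Real.exp u - 1) ≤ Real.exp (-1) * (u * Real.exp 1) :=
      mul_le_mul_of_nonneg_left (h9.trans h10) (Real.exp_pos _).le
    have h12 : Real.exp (-1) * (u * Real.exp 1) = u := by
      rw [Real.exp_neg]
      field_simp
    rw [h12] at h11
    exact h11.trans hu1

/-- Asymptotics of the expected distortion of the channel-aware ALOHA scheme
with threshold `T_M = (1/λ)ln M` and unit amplification under Rayleigh fading: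
with `A = σθ²σv²/(σθ²+σv²)`, `B = σn²σθ²/(σv²(σθ²+σv²))` and
`L = σθ²(1-1/e) + A/e`, one has `ln(M)·(E[D_M] − L) → (1/e)·A·B·λ`,
and consequently `E[D_M] ~ L + (1/e)·A·B·λ/ln(M)` as `M → ∞`. -/
theorem aloha_distortion_asymptotics (sθ sv sn lam : ℝ)
    (hθ : 0 < sθ) (hv : 0 < sv) (hn : 0 < sn) (hlam : 0 < lam)
    (A B L : ℝ) (hA : A = sθ * sv / (sθ + sv))
    (hB : B = sn * sθ / (sv * (sθ + sv)))
    (hL : L = sθ * (1 - 1 / Real.exp 1) + A / Real.exp 1)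
    (ED : ℕ → ℝ)
    (hED : ∀ M : ℕ, 2 ≤ M →
      ED M = sθ * (1 - (1 - 1 / (M : ℝ)) ^ (M - 1))
        + (M : ℝ) * (1 - 1 / (M : ℝ)) ^ (M - 1) *
          ∫ x in Set.Ioi (Real.log M / lam),
            (1 / sθ + x / (x * sv + sn))⁻¹ * (lam * Real.exp (-lam * x))) :
    Tendsto (fun M : ℕ => Real.log M * (ED M - L)) atTop
      (nhds (1 / Real.exp 1 * A * B * lam)) ∧
    Tendsto (fun M : ℕ => ED M / (L + 1 / Real.exp 1 * A * B * lam / Real.log M))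
      atTop (nhds 1) := by
  have hsv : 0 < sθ + sv := by linarith
  set c : ℝ := sn / (sθ + sv) with hc
  have hcpos : 0 < c := by positivity
  have hApos : 0 < A := by rw [hA]; positivity
  have hBpos : 0 < B := by rw [hB]; positivity
  have he1 : (1:ℝ) < Real.exp 1 := by
    have := Real.add_one_le_exp (1:ℝ); linarith
  have hLpos : 0 < L := by
    rw [hL]
    have h1 : 1 / Real.exp 1 < 1 := by
      rw [div_lt_one (Real.exp_pos 1)]; linarith
    have h2 : 0 < A / Real.exp 1 := div_pos hApos (Real.exp_pos 1)
    nlinarith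
  set T : ℕ → ℝ := fun M => Real.log M / lam with hTdef
  set p : ℕ → ℝ := fun M => (1 - 1 / (M : ℝ)) ^ (M - 1) with hpdef
  set I : ℕ → ℝ := fun M =>
    ∫ x in Set.Ioi (T M), lam * Real.exp (-(lam * x)) / (x + c) with hIdef
  have hM1cast : ∀ M : ℕ, 2 ≤ M → (1:ℝ) < M := by
    intro M hM; exact_mod_cast Nat.lt_of_lt_of_le one_lt_two hM
  have hTpos : ∀ M : ℕ, 2 ≤ M → 0 < T M := by
    intro M hM
    exact div_pos (Real.log_pos (hM1cast M hM)) hlam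
  have hMexp : ∀ M : ℕ, 2 ≤ M → Real.exp (-(lam * T M)) = 1 / (M:ℝ) := by
    intro M hM
    have hM0 : (0:ℝ) < M := lt_trans one_pos (hM1cast M hM)
    have h1 : lam * T M = Real.log M := by
      rw [hTdef]; field_simp
    rw [h1, Real.exp_neg, Real.exp_log hM0, one_div]
  -- decomposition of ED M - L
  have hEDdiff : ∀ M : ℕ, 2 ≤ M → ED M - L =
      sθ * (1 / Real.exp 1 - p M) + A * (p M - 1 / Real.exp 1)
      + A * B * (p M * ((M:ℝ) * I M)) := by
    intro M hM
    have hT := hTpos M hM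
    have hM0 : (0:ℝ) < M := lt_trans one_pos (hM1cast M hM)
    obtain ⟨hIint, -, -⟩ := aloha_I_props (c := c) (T := T M) hlam hcpos hT
    have hintg : Set.EqOn
        (fun x => (1 / sθ + x / (x * sv + sn))⁻¹ * (lam * Real.exp (-lam * x)))
        (fun x => A * lam * Real.exp (-(lam * x))
          + A * B * (lam * Real.exp (-(lam * x)) / (x + c))) (Set.Ioi (T M)) := by
      intro x hx
      have hx0 : 0 < x := lt_trans hT hx
      have h1 : 0 < x * sv + sn := by positivity
      have h2 : 0 < x + c := by positivity
      have h3 : 0 < x * (sv + sθ) + sn := by positivity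
      have hid : (1 / sθ + x / (x * sv + sn))⁻¹ = A + A * B / (x + c) := by
        have hsum : 1 / sθ + x / (x * sv + sn)
            = (x * (sv + sθ) + sn) / (sθ * (x * sv + sn)) := by
          field_simp; ring
        rw [hsum, inv_div, hA, hB, hc]
        have h2' : x + sn / (sθ + sv) ≠ 0 := by positivity
        field_simp
        ring
      simp only
      rw [hid, neg_mul]
      ring
    have hint_eq : (∫ x in Set.Ioi (T M),
          (1 / sθ + x / (x * sv + sn))⁻¹ * (lam * Real.exp (-lam * x)))
        = A * (1 / (M:ℝ)) + A * B * I M := by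
      rw [setIntegral_congr_fun measurableSet_Ioi hintg]
      rw [integral_add ((aloha_exp_int hlam (T M)).1.const_mul (A * lam))
        (hIint.const_mul (A * B))]
      rw [integral_const_mul, integral_const_mul, (aloha_exp_int hlam (T M)).2,
        hMexp M hM, hIdef]
      field_simp
    have hTM : Real.log M / lam = T M := rfl
    rw [hED M hM, hTM, hint_eq, hL]
    have hpm : (1 - 1 / (M : ℝ)) ^ (M - 1) = p M := rfl
    rw [hpm]
    have hMc : (M:ℝ) * p M * (A * (1 / (M:ℝ)) + A * B * I M)
        = A * p M + A * B * (p M * ((M:ℝ) * I M)) := by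
      field_simp
    rw [hMc]; ring
  -- limits
  have hlogT : Tendsto (fun M : ℕ => Real.log M) atTop atTop :=
    Real.tendsto_log_atTop.comp tendsto_natCast_atTop_atTop
  have hloginv : Tendsto (fun M : ℕ => (Real.log M)⁻¹) atTop (nhds 0) := by
    exact hlogT.inv_tendsto_atTop
  have hp0 : Tendsto (fun M : ℕ => Real.log M * (p M - 1 / Real.exp 1)) atTop
      (nhds 0) := by
    have hub : Tendsto (fun M : ℕ => Real.log M / (M:ℝ)) atTop (nhds 0) := by
      have := Real.isLittleO_log_id_atTop.tendsto_div_nhds_zero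
      exact this.comp tendsto_natCast_atTop_atTop
    apply tendsto_of_tendsto_of_tendsto_of_le_of_le' tendsto_const_nhds hub
    · filter_upwards [eventually_ge_atTop 2] with M hM
      exact mul_nonneg (Real.log_nonneg (hM1cast M hM).le) (aloha_p_bounds hM).1
    · filter_upwards [eventually_ge_atTop 2] with M hM
      have := mul_le_mul_of_nonneg_left (aloha_p_bounds hM).2
        (Real.log_nonneg (hM1cast M hM).le)
      calc Real.log M * (p M - 1 / Real.exp 1) ≤ Real.log M * (1 / (M:ℝ)) := this
        _ = Real.log M / (M:ℝ) := by rw [mul_one_div]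
  have hptend : Tendsto p atTop (nhds (1 / Real.exp 1)) := by
    have h1 : Tendsto (fun M : ℕ =>
        Real.log M * (p M - 1 / Real.exp 1) * (Real.log M)⁻¹) atTop (nhds 0) := by
      simpa using hp0.mul hloginv
    have h2 : Tendsto (fun M : ℕ => p M - 1 / Real.exp 1) atTop (nhds 0) := by
      apply h1.congr'
      filter_upwards [eventually_ge_atTop 2] with M hM
      have hlogne : Real.log M ≠ 0 := ne_of_gt (Real.log_pos (hM1cast M hM))
      rw [mul_comm (Real.log M), mul_assoc, mul_inv_cancel₀ hlogne, mul_one]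
    have := h2.add_const (1 / Real.exp 1)
    simpa using this
  have hMI : Tendsto (fun M : ℕ => Real.log M * ((M:ℝ) * I M)) atTop (nhds lam) := by
    apply tendsto_of_tendsto_of_tendsto_of_le_of_le'
      (aloha_log_ratio (lam := lam) (k := c * lam + 1) (by positivity))
      (aloha_log_ratio (lam := lam) (k := c * lam) (by positivity))
    · filter_upwards [eventually_ge_atTop 2] with M hM
      have hT := hTpos M hM
      have hM0 : (0:ℝ) < M := lt_trans one_pos (hM1cast M hM)
      have hlogM : Real.log M = lam * T M := by rw [hTdef]; field_simp
      obtain ⟨-, -, hIlb⟩ := aloha_I_props (c := c) (T := T M) hlam hcpos hT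
      rw [hMexp M hM] at hIlb
      have hD1 : (0:ℝ) < (T M + c) * lam + 1 := by positivity
      have e1 : (M:ℝ) * (lam * (1 / (M:ℝ)) / ((T M + c) * lam + 1))
          = lam / ((T M + c) * lam + 1) := by field_simp
      have e2 : lam / ((T M + c) * lam + 1) ≤ (M:ℝ) * I M := by
        rw [← e1]
        exact mul_le_mul_of_nonneg_left hIlb hM0.le
      have e3 : lam * Real.log M / (Real.log M + (c * lam + 1))
          = Real.log M * (lam / ((T M + c) * lam + 1)) := by
        rw [hlogM]
        have hd1 : lam * T M + (c * lam + 1) ≠ 0 := by positivity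
        field_simp
        ring
      rw [e3]
      exact mul_le_mul_of_nonneg_left e2 (Real.log_nonneg (hM1cast M hM).le)
    · filter_upwards [eventually_ge_atTop 2] with M hM
      have hT := hTpos M hM
      have hM0 : (0:ℝ) < M := lt_trans one_pos (hM1cast M hM)
      have hlogM : Real.log M = lam * T M := by rw [hTdef]; field_simp
      obtain ⟨-, hIub, -⟩ := aloha_I_props (c := c) (T := T M) hlam hcpos hT
      rw [hMexp M hM] at hIub
      have hTc : (0:ℝ) < T M + c := by positivity
      have e1 : (M:ℝ) * (1 / (M:ℝ) / (T M + c)) = 1 / (T M + c) := by field_simp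
      have e2 : (M:ℝ) * I M ≤ 1 / (T M + c) := by
        rw [← e1]
        exact mul_le_mul_of_nonneg_left hIub hM0.le
      have e3 : Real.log M * (1 / (T M + c))
          = lam * Real.log M / (Real.log M + c * lam) := by
        rw [hlogM]
        rw [mul_one_div, div_eq_div_iff hTc.ne' (by positivity)]
        ring
      calc Real.log M * ((M:ℝ) * I M) ≤ Real.log M * (1 / (T M + c)) :=
            mul_le_mul_of_nonneg_left e2 (Real.log_nonneg (hM1cast M hM).le)
        _ = lam * Real.log M / (Real.log M + c * lam) := e3
  -- part 1
  have main1 : Tendsto (fun M : ℕ => Real.log M * (ED M - L)) atTop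
      (nhds (1 / Real.exp 1 * A * B * lam)) := by
    have hsum : Tendsto (fun M : ℕ =>
        sθ * -(Real.log M * (p M - 1 / Real.exp 1))
        + A * (Real.log M * (p M - 1 / Real.exp 1))
        + A * B * (p M * (Real.log M * ((M:ℝ) * I M)))) atTop
        (nhds (sθ * -0 + A * 0 + A * B * (1 / Real.exp 1 * lam))) :=
      ((hp0.neg.const_mul sθ).add (hp0.const_mul A)).add
        ((hptend.mul hMI).const_mul (A * B))
    rw [show sθ * -(0:ℝ) + A * 0 + A * B * (1 / Real.exp 1 * lam)
      = 1 / Real.exp 1 * A * B * lam by ring] at hsum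
    apply hsum.congr'
    filter_upwards [eventually_ge_atTop 2] with M hM
    rw [hEDdiff M hM]
    ring
  refine ⟨main1, ?_⟩
  -- part 2
  have hdiff0 : Tendsto (fun M : ℕ => ED M - L) atTop (nhds 0) := by
    have h1 := main1.mul hloginv
    rw [mul_zero] at h1
    apply h1.congr'
    filter_upwards [eventually_ge_atTop 2] with M hM
    have hlogne : Real.log M ≠ 0 := ne_of_gt (Real.log_pos (hM1cast M hM))
    rw [mul_comm (Real.log M), mul_assoc, mul_inv_cancel₀ hlogne, mul_one]
  have hEDtend : Tendsto ED atTop (nhds L) := by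
    have := hdiff0.add_const L
    simpa using this
  have hden : Tendsto (fun M : ℕ => L + 1 / Real.exp 1 * A * B * lam / Real.log M)
      atTop (nhds L) := by
    have h1 : Tendsto (fun M : ℕ => 1 / Real.exp 1 * A * B * lam * (Real.log M)⁻¹)
        atTop (nhds 0) := by
      simpa using hloginv.const_mul (1 / Real.exp 1 * A * B * lam)
    have h2 := (tendsto_const_nhds (x := L) (f := atTop (α := ℕ))).add h1
    rw [add_zero] at h2
    exact h2.congr (fun M => by ring)
  have h3 := hEDtend.div hden hLpos.ne'
  rw [div_self hLpos.ne'] at h3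
  exact h3
end

section
/- Let (g_i)_{i≥1} be i.i.d. nonnegative integrable random variables on a probability space with E[√g₁] > 0, and let σθ² > 0, σv² > 0, σn² > 0. For a positive integer M define the random variable D_M = σθ²·(σv²·(1/M)Σ_{i=1}^M g_i + σn²) / (σv²·(1/M)Σ_{i=1}^M g_i + σn² + σθ²·(1/M)(Σ_{i=1}^M √g_i)²). Then M·E[D_M] → (σv²·E[g₁] + σn²)/(E[√g₁])² as M → ∞; in particular the expected distortion E[D_M] decays to zero at rate 1/M. -/
open MeasureTheory Filter Real ProbabilityTheory

open Topology

set_option maxHeartbeats 2000000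

lemma exp_le_one_add_add_sq {x : ℝ} (hx : |x| ≤ 1) : Real.exp x ≤ 1 + x + x ^ 2 := by
  have h := Real.exp_bound hx (n := 3) (by norm_num)
  have h2 : ∑ i ∈ Finset.range 3, x ^ i / (Nat.factorial i) = 1 + x + x ^ 2 / 2 := by
    simp [Finset.sum_range_succ, Nat.factorial]
  rw [h2] at h
  norm_num [Nat.factorial] at h
  have h3 : |x| ^ 3 ≤ x ^ 2 := by
    calc |x| ^ 3 ≤ |x| ^ 2 := pow_le_pow_of_le_one (abs_nonneg x) hx (by norm_num)
    _ = x ^ 2 := sq_abs x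
  have h4 := abs_le.1 h
  nlinarith [sq_nonneg x]


lemma chernoff_bounded_iid {Ω : Type*} [MeasureSpace Ω]
    [IsProbabilityMeasure (volume : Measure Ω)]
    (V : ℕ → Ω → ℝ) (hVmeas : ∀ i, Measurable (V i))
    (hVindep : iIndepFun V volume)
    (hVident : ∀ i, IdentDistrib (V i) (V 0) volume volume)
    {c : ℝ} (hc : 0 < c) (hbdd : ∀ i ω, |V i ω| ≤ c)
    (hmean : ∫ ω, V 0 ω = 0) {a : ℝ} (ha : 0 < a) :
    ∃ b : ℝ, 0 < b ∧ ∀ M : ℕ,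
      (volume {ω | (M : ℝ) * a ≤ ∑ i ∈ Finset.range M, V i ω}).toReal
        ≤ Real.exp (-(b * M)) := by
  set t : ℝ := min (a / (2 * c ^ 2)) (1 / c) with ht_def
  have ht : 0 < t := lt_min (by positivity) (by positivity)
  have htc : t * c ≤ 1 := by
    have : t ≤ 1 / c := min_le_right _ _
    rw [le_div_iff₀ hc] at this; linarith
  have htc2 : t * c ^ 2 ≤ a / 2 := by
    have h1 : t ≤ a / (2 * c ^ 2) := min_le_left _ _
    rw [le_div_iff₀ (by positivity)] at h1; linarith
  have habs : ∀ i ω, |t * V i ω| ≤ 1 := by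
    intro i ω
    rw [abs_mul, abs_of_pos ht]
    calc t * |V i ω| ≤ t * c := by
          exact mul_le_mul_of_nonneg_left (hbdd i ω) ht.le
      _ ≤ 1 := htc
  have hVint : ∀ (s : ℝ) i, 0 ≤ s → Integrable (fun ω => Real.exp (s * V i ω)) := by
    intro s i hs
    refine Integrable.mono' (integrable_const (Real.exp (s * c)))
      (((hVmeas i).const_mul s).exp.aestronglyMeasurable) ?_
    filter_upwards with ω
    rw [Real.norm_eq_abs, Real.abs_exp]
    exact Real.exp_le_exp.2 (mul_le_mul_of_nonneg_left (abs_le.1 (hbdd i ω)).2 hs)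
  have hV0int : Integrable (V 0) := by
    refine Integrable.mono' (integrable_const c) ((hVmeas 0).aestronglyMeasurable) ?_
    filter_upwards with ω; exact hbdd 0 ω
  have hVsqint : Integrable (fun ω => (V 0 ω) ^ 2) := by
    refine Integrable.mono' (integrable_const (c ^ 2)) (((hVmeas 0).pow_const 2).aestronglyMeasurable) ?_
    filter_upwards with ω
    rw [Real.norm_eq_abs, abs_pow]
    exact pow_le_pow_left₀ (abs_nonneg _) (hbdd 0 ω) 2
  have hVsq_le : ∫ ω, (V 0 ω) ^ 2 ≤ c ^ 2 := by
    calc ∫ ω, (V 0 ω) ^ 2 ≤ ∫ _ω, c ^ 2 := by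
          refine integral_mono hVsqint (integrable_const _) (fun ω => ?_)
          rw [← sq_abs]; exact pow_le_pow_left₀ (abs_nonneg _) (hbdd 0 ω) 2
      _ = c ^ 2 := by simp
  have hmgf : mgf (V 0) volume t ≤ Real.exp (t ^ 2 * c ^ 2) := by
    have hle : ∀ ω, Real.exp (t * V 0 ω) ≤ 1 + t * V 0 ω + t ^ 2 * (V 0 ω) ^ 2 := by
      intro ω
      have := exp_le_one_add_add_sq (habs 0 ω)
      calc Real.exp (t * V 0 ω) ≤ 1 + t * V 0 ω + (t * V 0 ω) ^ 2 := this
        _ = 1 + t * V 0 ω + t ^ 2 * (V 0 ω) ^ 2 := by ring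
    have hint2 : Integrable (fun ω => 1 + t * V 0 ω + t ^ 2 * (V 0 ω) ^ 2) :=
      ((integrable_const 1).add (hV0int.const_mul t)).add (hVsqint.const_mul (t ^ 2))
    calc mgf (V 0) volume t = ∫ ω, Real.exp (t * V 0 ω) := rfl
      _ ≤ ∫ ω, (1 + t * V 0 ω + t ^ 2 * (V 0 ω) ^ 2) :=
          integral_mono (hVint t 0 ht.le) hint2 hle
      _ = 1 + t * (∫ ω, V 0 ω) + t ^ 2 * ∫ ω, (V 0 ω) ^ 2 := by
          have i1 : Integrable (fun ω => 1 + t * V 0 ω) (volume : Measure Ω) :=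
            (integrable_const 1).add (hV0int.const_mul t)
          rw [integral_add i1 (hVsqint.const_mul (t ^ 2)),
            integral_add (integrable_const 1) (hV0int.const_mul t),
            integral_const, integral_const_mul, integral_const_mul]
          simp
      _ = 1 + t ^ 2 * ∫ ω, (V 0 ω) ^ 2 := by rw [hmean]; ring
      _ ≤ 1 + t ^ 2 * c ^ 2 := by nlinarith [sq_nonneg t]
      _ ≤ Real.exp (t ^ 2 * c ^ 2) := by
          have := Real.add_one_le_exp (t ^ 2 * c ^ 2); linarith
  have hmgfi : ∀ i, mgf (V i) volume t = mgf (V 0) volume t := by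
    intro i
    exact ((hVident i).comp ((measurable_id.const_mul t).exp)).integral_eq
  refine ⟨t * a / 2, by positivity, fun M => ?_⟩
  have hsum_meas : Measurable (fun ω => ∑ i ∈ Finset.range M, V i ω) :=
    Finset.measurable_sum _ (fun i _ => hVmeas i)
  have hsum_int : Integrable (fun ω => Real.exp (t * ∑ i ∈ Finset.range M, V i ω)) := by
    refine Integrable.mono' (integrable_const (Real.exp (t * (M * c))))
      ((hsum_meas.const_mul t).exp.aestronglyMeasurable) ?_
    filter_upwards with ω
    rw [Real.norm_eq_abs, Real.abs_exp]
    refine Real.exp_le_exp.2 (mul_le_mul_of_nonneg_left ?_ ht.le)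
    calc ∑ i ∈ Finset.range M, V i ω ≤ ∑ i ∈ Finset.range M, c :=
          Finset.sum_le_sum (fun i _ => (abs_le.1 (hbdd i ω)).2)
      _ = M * c := by simp [mul_comm]
  have hfun_eq : (fun ω => ∑ i ∈ Finset.range M, V i ω) = ∑ i ∈ Finset.range M, V i := by
    ext ω; simp
  have key := measure_ge_le_exp_mul_mgf (μ := volume)
    (X := fun ω => ∑ i ∈ Finset.range M, V i ω) ((M : ℝ) * a) ht.le hsum_int
  have hmgfsum : mgf (fun ω => ∑ i ∈ Finset.range M, V i ω) volume t
      = (mgf (V 0) volume t) ^ M := by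
    rw [hfun_eq, hVindep.mgf_sum hVmeas]
    rw [Finset.prod_congr rfl (fun i _ => hmgfi i), Finset.prod_const, Finset.card_range]
  rw [hmgfsum] at key
  calc (volume {ω | (M : ℝ) * a ≤ ∑ i ∈ Finset.range M, V i ω}).toReal
      ≤ Real.exp (-t * ((M : ℝ) * a)) * (mgf (V 0) volume t) ^ M := key
    _ ≤ Real.exp (-t * ((M : ℝ) * a)) * (Real.exp (t ^ 2 * c ^ 2)) ^ M := by
        refine mul_le_mul_of_nonneg_left (pow_le_pow_left₀ (mgf_nonneg) hmgf M) (Real.exp_nonneg _)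
    _ = Real.exp (-t * ((M : ℝ) * a) + M * (t ^ 2 * c ^ 2)) := by
        rw [← Real.exp_nat_mul, ← Real.exp_add]
    _ ≤ Real.exp (-(t * a / 2 * M)) := by
        refine Real.exp_le_exp.2 ?_
        have hM : (0 : ℝ) ≤ M := Nat.cast_nonneg M
        have h5 : t * (t * c ^ 2) ≤ t * (a / 2) := mul_le_mul_of_nonneg_left htc2 ht.le
        have h6 : (M : ℝ) * (t * (t * c ^ 2)) ≤ (M : ℝ) * (t * (a / 2)) :=
          mul_le_mul_of_nonneg_left h5 hM
        nlinarith [h6]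


lemma lower_tail_iid {Ω : Type*} [MeasureSpace Ω]
    [IsProbabilityMeasure (volume : Measure Ω)]
    (Y : ℕ → Ω → ℝ) (hYmeas : ∀ i, Measurable (Y i))
    (hYindep : iIndepFun Y volume)
    (hYident : ∀ i, IdentDistrib (Y i) (Y 0) volume volume)
    (hYnn : ∀ i ω, 0 ≤ Y i ω) (hYint : Integrable (Y 0) volume)
    {ε : ℝ} (hε : 0 < ε) :
    Tendsto (fun M : ℕ => (M : ℝ) *
      (volume {ω | ∑ i ∈ Finset.range M, Y i ω ≤ (M : ℝ) * ((∫ ω, Y 0 ω) - ε)}).toReal)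
      atTop (𝓝 0) := by
  set m' : ℝ := ∫ ω, Y 0 ω with hm'_def
  -- truncated integrals converge
  have htrunc_int : ∀ n : ℕ, Integrable (fun ω => min (Y 0 ω) n) (volume : Measure Ω) := by
    intro n
    refine hYint.mono ((hYmeas 0).min measurable_const).aestronglyMeasurable ?_
    filter_upwards with ω
    rw [Real.norm_eq_abs, Real.norm_eq_abs, abs_of_nonneg (le_min (hYnn 0 ω) (Nat.cast_nonneg n)),
      abs_of_nonneg (hYnn 0 ω)]
    exact min_le_left _ _
  have htrunc : Tendsto (fun n : ℕ => ∫ ω, min (Y 0 ω) n) atTop (𝓝 m') := by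
    refine integral_tendsto_of_tendsto_of_monotone htrunc_int hYint ?_ ?_
    · filter_upwards with ω
      intro a b hab
      exact min_le_min le_rfl (Nat.cast_le.2 hab)
    · filter_upwards with ω
      refine tendsto_const_nhds.congr' ?_
      filter_upwards [eventually_ge_atTop ⌈Y 0 ω⌉₊] with n hn
      exact (min_eq_left ((Nat.le_ceil _).trans (Nat.cast_le.2 hn))).symm
  obtain ⟨c, hc1, hm⟩ : ∃ c : ℕ, 1 ≤ c ∧ m' - ε / 2 < ∫ ω, min (Y 0 ω) c := by
    have := (eventually_ge_atTop 1).and (htrunc.eventually (eventually_gt_nhds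
      (show m' - ε / 2 < m' by linarith)))
    obtain ⟨c, hc⟩ := this.exists
    exact ⟨c, hc.1, hc.2⟩
  have hcpos : (0 : ℝ) < c := by exact_mod_cast hc1
  set Z : ℕ → Ω → ℝ := fun i ω => min (Y i ω) c with hZ_def
  set m : ℝ := ∫ ω, Z 0 ω with hm_def
  have hZnn : ∀ i ω, 0 ≤ Z i ω := fun i ω => le_min (hYnn i ω) hcpos.le
  have hZle : ∀ i ω, Z i ω ≤ c := fun i ω => min_le_right _ _
  have hZint : Integrable (Z 0) (volume : Measure Ω) := htrunc_int c
  have hm0 : 0 ≤ m := integral_nonneg (fun ω => hZnn 0 ω)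
  have hmc : m ≤ c := by
    calc m ≤ ∫ _ω, (c : ℝ) := integral_mono hZint (integrable_const _) (fun ω => hZle 0 ω)
      _ = c := by simp
  set V : ℕ → Ω → ℝ := fun i ω => m - Z i ω with hV_def
  have hφ : Measurable (fun x : ℝ => m - min x c) :=
    measurable_const.sub (measurable_id.min measurable_const)
  have hVmeas : ∀ i, Measurable (V i) := fun i =>
    measurable_const.sub ((hYmeas i).min measurable_const)
  have hVindep : iIndepFun V volume :=
    hYindep.comp (fun _ => fun x => m - min x c) (fun _ => hφ)
  have hVident : ∀ i, IdentDistrib (V i) (V 0) volume volume := fun i =>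
    (hYident i).comp hφ
  have hmean : ∫ ω, V 0 ω = 0 := by
    rw [hV_def]
    rw [integral_sub (integrable_const m) hZint]
    simp [hm_def]
  have hbdd : ∀ i ω, |V i ω| ≤ c := by
    intro i ω
    rw [abs_le]
    constructor
    · have := hZle i ω; simp only [hV_def]; linarith
    · have := hZnn i ω; simp only [hV_def]; linarith
  obtain ⟨b, hb, hcher⟩ := chernoff_bounded_iid V hVmeas hVindep hVident hcpos hbdd hmean
    (a := ε / 2) (by linarith)
  -- event inclusion
  have hsub : ∀ M : ℕ, {ω | ∑ i ∈ Finset.range M, Y i ω ≤ (M : ℝ) * (m' - ε)}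
      ⊆ {ω | (M : ℝ) * (ε / 2) ≤ ∑ i ∈ Finset.range M, V i ω} := by
    intro M ω hω
    simp only [Set.mem_setOf_eq] at hω ⊢
    have hZY : ∑ i ∈ Finset.range M, Z i ω ≤ ∑ i ∈ Finset.range M, Y i ω :=
      Finset.sum_le_sum (fun i _ => min_le_left _ _)
    have hVsum : ∑ i ∈ Finset.range M, V i ω
        = (M : ℝ) * m - ∑ i ∈ Finset.range M, Z i ω := by
      simp [hV_def, Finset.sum_sub_distrib, mul_comm]
    rw [hVsum]
    have hM : (0 : ℝ) ≤ M := Nat.cast_nonneg M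
    have h1 : (M : ℝ) * (m' - ε) ≤ (M : ℝ) * (m - ε / 2) :=
      mul_le_mul_of_nonneg_left (by linarith) hM
    have : ∑ i ∈ Finset.range M, Z i ω ≤ (M : ℝ) * (m - ε / 2) := by linarith
    linarith [this]
  have hbound : ∀ M : ℕ, (M : ℝ) *
      (volume {ω | ∑ i ∈ Finset.range M, Y i ω ≤ (M : ℝ) * (m' - ε)}).toReal
      ≤ (M : ℝ) * Real.exp (-(b * M)) := by
    intro M
    refine mul_le_mul_of_nonneg_left ?_ (Nat.cast_nonneg M)
    refine le_trans (ENNReal.toReal_mono (measure_ne_top _ _) (measure_mono (hsub M))) ?_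
    exact hcher M
  have hexp : Tendsto (fun M : ℕ => (M : ℝ) * Real.exp (-(b * M))) atTop (𝓝 0) := by
    have t1 : Tendsto (fun x : ℝ => x * Real.exp (-x)) atTop (𝓝 0) := by
      have := Real.tendsto_pow_mul_exp_neg_atTop_nhds_zero 1
      simpa using this
    have t2 : Tendsto (fun M : ℕ => b * (M : ℝ)) atTop atTop :=
      Tendsto.const_mul_atTop hb tendsto_natCast_atTop_atTop
    have t3 := (t1.comp t2).const_mul (1 / b)
    rw [mul_zero] at t3
    refine t3.congr (fun M => ?_)
    have hbne : b ≠ 0 := ne_of_gt hb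
    simp only [Function.comp_apply]
    rw [one_div, ← mul_assoc, ← mul_assoc, inv_mul_cancel₀ hbne, one_mul]
  refine squeeze_zero (fun M => mul_nonneg (Nat.cast_nonneg M) ENNReal.toReal_nonneg)
    hbound hexp


/-- Asymptotics of the expected distortion of the coherent multi-access scheme
with equal amplification `α_i = 1/√M`: for i.i.d. nonnegative integrable channel
gains `g_i` with `E[√g₁] > 0`,
`M·E[D_M] → (σv²E[g₁] + σn²)/(E[√g₁])²` as `M → ∞`, where
`D_M = σθ²(σv²(1/M)Σg_i + σn²)/(σv²(1/M)Σg_i + σn² + σθ²(1/M)(Σ√g_i)²)`;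
in particular `E[D_M]` decays to zero at rate `1/M`. -/
theorem mac_expected_distortion_asymptotics {Ω : Type*} [MeasureSpace Ω]
    (hprob : IsProbabilityMeasure (volume : Measure Ω))
    (g : ℕ → Ω → ℝ) (hmeas : ∀ i, Measurable (g i))
    (hindep : iIndepFun g volume)
    (hident : ∀ i, IdentDistrib (g i) (g 0) volume volume)
    (hnonneg : ∀ i ω, 0 ≤ g i ω)
    (hint : Integrable (g 0) volume)
    (hpos : 0 < ∫ ω, Real.sqrt (g 0 ω))
    (sθ sv sn : ℝ) (hθ : 0 < sθ) (hv : 0 < sv) (hn : 0 < sn) :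
    Tendsto (fun M : ℕ =>
        (M : ℝ) *
          ∫ ω, sθ * (sv * ((1 / (M : ℝ)) * ∑ i ∈ Finset.range M, g i ω) + sn) /
            (sv * ((1 / (M : ℝ)) * ∑ i ∈ Finset.range M, g i ω) + sn
              + sθ * ((1 / (M : ℝ)) * (∑ i ∈ Finset.range M, Real.sqrt (g i ω)) ^ 2)))
      atTop
      (nhds ((sv * (∫ ω', g 0 ω') + sn) / (∫ ω', Real.sqrt (g 0 ω')) ^ 2)) := by
  have hμvol : IsProbabilityMeasure (volume : Measure Ω) := hprob
  set E1 : ℝ := ∫ ω, g 0 ω with hE1_def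
  set E2 : ℝ := ∫ ω, Real.sqrt (g 0 ω) with hE2_def
  have hE2pos : 0 < E2 := hpos
  have hE1nn : 0 ≤ E1 := integral_nonneg (fun ω => hnonneg 0 ω)
  set A : ℝ := sv * E1 + sn with hA_def
  have hApos : 0 < A := by positivity
  set Y : ℕ → Ω → ℝ := fun i ω => Real.sqrt (g i ω) with hY_def
  have hYmeas : ∀ i, Measurable (Y i) := fun i => (hmeas i).sqrt
  have hYindep : iIndepFun Y volume :=
    hindep.comp (fun _ => Real.sqrt) (fun _ => Real.continuous_sqrt.measurable)
  have hYident : ∀ i, IdentDistrib (Y i) (Y 0) volume volume := fun i =>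
    (hident i).comp Real.continuous_sqrt.measurable
  have hYnn : ∀ i ω, 0 ≤ Y i ω := fun i ω => Real.sqrt_nonneg _
  have hYint : Integrable (Y 0) (volume : Measure Ω) := by
    refine Integrable.mono' ((integrable_const 1).add hint)
      ((hYmeas 0).aestronglyMeasurable) ?_
    filter_upwards with ω
    rw [Real.norm_eq_abs, abs_of_nonneg (hYnn 0 ω)]
    have h0 := hnonneg 0 ω
    calc Real.sqrt (g 0 ω) ≤ Real.sqrt ((1 + g 0 ω) ^ 2) :=
          Real.sqrt_le_sqrt (by nlinarith)
      _ = 1 + g 0 ω := Real.sqrt_sq (by linarith)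
  have hE2Y : (∫ ω, Y 0 ω) = E2 := rfl
  -- integrability of each coordinate
  have hgint : ∀ i, Integrable (g i) (volume : Measure Ω) := fun i =>
    (hident i).integrable_iff.2 hint
  have hgintegral : ∀ i, (∫ ω, g i ω) = E1 := fun i => (hident i).integral_eq
  -- sums
  have hSmeas : ∀ M : ℕ, Measurable (fun ω => ∑ i ∈ Finset.range M, g i ω) := fun M =>
    Finset.measurable_sum _ (fun i _ => hmeas i)
  have hTmeas : ∀ M : ℕ, Measurable (fun ω => ∑ i ∈ Finset.range M, Y i ω) := fun M =>
    Finset.measurable_sum _ (fun i _ => hYmeas i)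
  have hSint : ∀ M : ℕ, Integrable (fun ω => ∑ i ∈ Finset.range M, g i ω)
      (volume : Measure Ω) := fun M => integrable_finset_sum _ (fun i _ => hgint i)
  have hSintegral : ∀ M : ℕ, (∫ ω, ∑ i ∈ Finset.range M, g i ω) = M * E1 := by
    intro M
    rw [integral_finset_sum _ (fun i _ => hgint i)]
    rw [Finset.sum_congr rfl (fun i _ => hgintegral i), Finset.sum_const, Finset.card_range,
      nsmul_eq_mul]
  have hSnn : ∀ M (ω : Ω), 0 ≤ ∑ i ∈ Finset.range M, g i ω := fun M ω =>
    Finset.sum_nonneg (fun i _ => hnonneg i ω)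
  have hTnn : ∀ M (ω : Ω), 0 ≤ ∑ i ∈ Finset.range M, Y i ω := fun M ω =>
    Finset.sum_nonneg (fun i _ => hYnn i ω)
  -- N and D
  set N : ℕ → Ω → ℝ := fun M ω =>
    sv * ((1 / (M : ℝ)) * ∑ i ∈ Finset.range M, g i ω) + sn with hN_def
  set D : ℕ → Ω → ℝ := fun M ω =>
    sθ * N M ω / (N M ω + sθ * ((1 / (M : ℝ)) * (∑ i ∈ Finset.range M, Y i ω) ^ 2))
    with hD_def
  have hNnn : ∀ M ω, 0 ≤ N M ω := by
    intro M ω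
    have h1 : 0 ≤ (1 / (M : ℝ)) * ∑ i ∈ Finset.range M, g i ω :=
      mul_nonneg (by positivity) (hSnn M ω)
    simp only [hN_def]; nlinarith
  have hNmeas : ∀ M, Measurable (N M) := fun M =>
    (((hSmeas M).const_mul _).const_mul sv).add measurable_const
  have hNint : ∀ M, Integrable (N M) (volume : Measure Ω) := fun M =>
    (((hSint M).const_mul _).const_mul sv).add (integrable_const sn)
  have hNintegral : ∀ M : ℕ, 1 ≤ M → (∫ ω, N M ω) = A := by
    intro M hM
    have hMne : (M : ℝ) ≠ 0 := Nat.cast_ne_zero.2 (by omega)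
    have h1 : Integrable (fun ω => sv * ((1 / (M : ℝ)) * ∑ i ∈ Finset.range M, g i ω))
        (volume : Measure Ω) := ((hSint M).const_mul _).const_mul sv
    calc (∫ ω, N M ω)
        = (∫ ω, sv * ((1 / (M : ℝ)) * ∑ i ∈ Finset.range M, g i ω)) + ∫ _ω, sn := by
          exact integral_add h1 (integrable_const sn)
      _ = sv * ((1 / (M : ℝ)) * ((M : ℝ) * E1)) + sn := by
          rw [integral_const_mul, integral_const_mul, hSintegral M, integral_const]
          simp
      _ = A := by
          field_simp
          rw [hA_def]
  have hPnn : ∀ (M : ℕ) (ω : Ω), 0 ≤ sθ * ((1 / (M : ℝ)) * (∑ i ∈ Finset.range M, Y i ω) ^ 2) := by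
    intro M ω
    have : (0:ℝ) ≤ (1 / (M : ℝ)) := by positivity
    positivity
  have hden_pos : ∀ M (ω : Ω),
      0 < N M ω + sθ * ((1 / (M : ℝ)) * (∑ i ∈ Finset.range M, Y i ω) ^ 2) := by
    intro M ω
    have h1 := hNnn M ω
    have h2 := hPnn M ω
    have h3 : sn ≤ N M ω := by
      have h4 : 0 ≤ sv * ((1 / (M : ℝ)) * ∑ i ∈ Finset.range M, g i ω) :=
        mul_nonneg hv.le (mul_nonneg (by positivity) (hSnn M ω))
      simp only [hN_def]; linarith
    exact lt_of_lt_of_le hn (h3.trans (le_add_of_nonneg_right h2))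
  have hDnn : ∀ M ω, 0 ≤ D M ω := by
    intro M ω
    exact div_nonneg (mul_nonneg hθ.le (hNnn M ω)) (hden_pos M ω).le
  have hDle : ∀ M ω, D M ω ≤ sθ := by
    intro M ω
    rw [hD_def, div_le_iff₀ (hden_pos M ω)]
    exact mul_le_mul_of_nonneg_left (le_add_of_nonneg_right (hPnn M ω)) hθ.le
  have hDmeas : ∀ M, Measurable (D M) := by
    intro M
    exact ((hNmeas M).const_mul sθ).div
      ((hNmeas M).add ((((hTmeas M).pow_const 2).const_mul _).const_mul sθ))
  have hDint : ∀ M, Integrable (D M) (volume : Measure Ω) := by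
    intro M
    refine Integrable.mono' (integrable_const sθ) (hDmeas M).aestronglyMeasurable ?_
    filter_upwards with ω
    rw [Real.norm_eq_abs, abs_of_nonneg (hDnn M ω)]
    exact hDle M ω
  set I : ℕ → ℝ := fun M => ∫ ω, D M ω with hI_def
  show Tendsto (fun M : ℕ => (M : ℝ) * I M) atTop (𝓝 (A / E2 ^ 2))
  clear_value I
  clear_value D
  clear_value N
  clear_value Y
  clear_value A
  clear_value E1 E2
  -- UPPER BOUND
  have upper : ∀ ε : ℝ, 0 < ε → ε < E2 → ∃ p : ℕ → ℝ, Tendsto p atTop (𝓝 0) ∧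
      ∀ M : ℕ, 1 ≤ M → (M : ℝ) * I M ≤ A / (E2 - ε) ^ 2 + p M := by
    intro ε hε hεE2
    have hβ : 0 < E2 - ε := by linarith
    have htail := lower_tail_iid Y hYmeas hYindep hYident hYnn hYint hε
    rw [hE2Y] at htail
    refine ⟨fun M => sθ * ((M : ℝ) *
      (volume {ω | ∑ i ∈ Finset.range M, Y i ω ≤ (M : ℝ) * (E2 - ε)}).toReal), ?_, ?_⟩
    · have := htail.const_mul sθ
      rw [mul_zero] at this
      exact this
    · intro M hM
      have hMpos : (0 : ℝ) < M := by exact_mod_cast hM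
      have hMne : (M : ℝ) ≠ 0 := hMpos.ne'
      set Bs : Set Ω := {ω | ∑ i ∈ Finset.range M, Y i ω ≤ (M : ℝ) * (E2 - ε)} with hBs_def
      have hBmeas : MeasurableSet Bs := measurableSet_le (hTmeas M) measurable_const
      have hpt : ∀ ω, D M ω ≤ Bs.indicator (fun _ => sθ) ω
          + (1 / ((M : ℝ) * (E2 - ε) ^ 2)) * N M ω := by
        intro ω
        by_cases hω : ω ∈ Bs
        · rw [Set.indicator_of_mem hω]
          have h1 : 0 ≤ (1 / ((M : ℝ) * (E2 - ε) ^ 2)) * N M ω :=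
            mul_nonneg (by positivity) (hNnn M ω)
          linarith [hDle M ω]
        · rw [Set.indicator_of_notMem hω, zero_add]
          have hT : (M : ℝ) * (E2 - ε) < ∑ i ∈ Finset.range M, Y i ω := by
            simpa [hBs_def, not_le] using hω
          have hT2 : ((M : ℝ) * (E2 - ε)) ^ 2 ≤ (∑ i ∈ Finset.range M, Y i ω) ^ 2 :=
            pow_le_pow_left₀ (by positivity) hT.le 2
          have hden_ge : sθ * ((M : ℝ) * (E2 - ε) ^ 2)
              ≤ N M ω + sθ * ((1 / (M : ℝ)) * (∑ i ∈ Finset.range M, Y i ω) ^ 2) := by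
            have h5 : (M : ℝ) * (E2 - ε) ^ 2
                ≤ (1 / (M : ℝ)) * (∑ i ∈ Finset.range M, Y i ω) ^ 2 := by
              have h6 : (M : ℝ) * (E2 - ε) ^ 2
                  = (1 / (M : ℝ)) * ((M : ℝ) * (E2 - ε)) ^ 2 := by
                field_simp
              rw [h6]
              exact mul_le_mul_of_nonneg_left hT2 (by positivity)
            have h7 := mul_le_mul_of_nonneg_left h5 hθ.le
            linarith [hNnn M ω]
          have hD_eq : D M ω = sθ * N M ω
              / (N M ω + sθ * ((1 / (M : ℝ)) * (∑ i ∈ Finset.range M, Y i ω) ^ 2)) := by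
            rw [hD_def]
          rw [hD_eq]
          calc sθ * N M ω
              / (N M ω + sθ * ((1 / (M : ℝ)) * (∑ i ∈ Finset.range M, Y i ω) ^ 2))
              ≤ sθ * N M ω / (sθ * ((M : ℝ) * (E2 - ε) ^ 2)) :=
                div_le_div_of_nonneg_left (mul_nonneg hθ.le (hNnn M ω))
                  (by positivity) hden_ge
            _ = (1 / ((M : ℝ) * (E2 - ε) ^ 2)) * N M ω := by
                field_simp
      have hRint : Integrable (fun ω => Bs.indicator (fun _ => sθ) ω
          + (1 / ((M : ℝ) * (E2 - ε) ^ 2)) * N M ω) (volume : Measure Ω) :=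
        ((integrable_const sθ).indicator hBmeas).add ((hNint M).const_mul _)
      have hI_le : I M ≤ sθ * (volume Bs).toReal + (1 / ((M : ℝ) * (E2 - ε) ^ 2)) * A := by
        have step1 : I M ≤ ∫ ω, (Bs.indicator (fun _ => sθ) ω
            + (1 / ((M : ℝ) * (E2 - ε) ^ 2)) * N M ω) := by
          rw [hI_def]
          exact integral_mono (hDint M) hRint hpt
        have step2 : ∫ ω, (Bs.indicator (fun _ => sθ) ω
            + (1 / ((M : ℝ) * (E2 - ε) ^ 2)) * N M ω)
            = sθ * (volume Bs).toReal + (1 / ((M : ℝ) * (E2 - ε) ^ 2)) * A := by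
          rw [integral_add ((integrable_const sθ).indicator hBmeas) ((hNint M).const_mul _),
            integral_indicator_const _ hBmeas, measureReal_def, integral_const_mul, hNintegral M hM,
            smul_eq_mul, mul_comm]
        linarith [step1, step2.le, step2.ge]
      have hmul := mul_le_mul_of_nonneg_left hI_le hMpos.le
      calc (M : ℝ) * I M
          ≤ (M : ℝ) * (sθ * (volume Bs).toReal + (1 / ((M : ℝ) * (E2 - ε) ^ 2)) * A) := hmul
        _ = A / (E2 - ε) ^ 2 + sθ * ((M : ℝ) * (volume Bs).toReal) := by
            field_simp
            ring
  -- LOWER BOUND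
  have lower : ∀ ε K : ℝ, 0 < ε → 0 < K → ∃ L : ℕ → ℝ,
      Tendsto L atTop (𝓝 (A * (1 - E1 / K) / (E2 + ε) ^ 2)) ∧
      ∀ M : ℕ, 1 ≤ M → L M ≤ (M : ℝ) * I M := by
    intro ε K hε hK
    have hβ' : 0 < E2 + ε := by linarith
    obtain ⟨l1, hl1_def⟩ : ∃ f : ℕ → ℝ, f = fun M : ℕ =>
        ∫ ω, |(1 / (M : ℝ)) * (∑ i ∈ Finset.range M, g i ω) - E1| := ⟨_, rfl⟩
    obtain ⟨l2, hl2_def⟩ : ∃ f : ℕ → ℝ, f = fun M : ℕ =>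
        ∫ ω, |(1 / (M : ℝ)) * (∑ i ∈ Finset.range M, Y i ω) - E2| := ⟨_, rfl⟩
    obtain ⟨q, hq_def⟩ : ∃ f : ℕ → ℝ, f = fun M : ℕ =>
        (volume {ω | (M : ℝ) * (E2 + ε) < ∑ i ∈ Finset.range M, Y i ω}).toReal := ⟨_, rfl⟩
    obtain ⟨r, hr_def⟩ : ∃ f : ℕ → ℝ, f = fun M : ℕ =>
        (volume {ω | (M : ℝ) * K < ∑ i ∈ Finset.range M, g i ω}).toReal := ⟨_, rfl⟩
    obtain ⟨d, hd_def⟩ : ∃ f : ℕ → ℝ, f = fun M : ℕ =>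
        sv * K + sn + sθ * (M : ℝ) * (E2 + ε) ^ 2 := ⟨_, rfl⟩
    -- L¹ law of large numbers
    have hLLN : ∀ X : ℕ → Ω → ℝ, (∀ i, Measurable (X i)) →
        iIndepFun X volume →
        (∀ i, IdentDistrib (X i) (X 0) volume volume) → Integrable (X 0) volume →
        Tendsto (fun M : ℕ =>
          ∫ ω, |(1 / (M : ℝ)) * (∑ i ∈ Finset.range M, X i ω) - ∫ ω', X 0 ω'|)
          atTop (𝓝 0) := by
      intro X hXmeas hXindep hXident hXint
      have hslln := strong_law_Lp (μ := (volume : Measure Ω)) (le_refl (1 : ENNReal))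
        ENNReal.one_ne_top X (memLp_one_iff_integrable.2 hXint)
        (fun i j hij => hXindep.indepFun hij) hXident
      have hXint' : ∀ M : ℕ, Integrable (fun ω =>
          (1 / (M : ℝ)) * (∑ i ∈ Finset.range M, X i ω) - ∫ ω', X 0 ω')
          (volume : Measure Ω) := fun M =>
        ((integrable_finset_sum _ (fun i _ =>
          (hXident i).integrable_iff.2 hXint)).const_mul _).sub (integrable_const _)
      have key : ∀ M : ℕ, ENNReal.ofReal
          (∫ ω, |(1 / (M : ℝ)) * (∑ i ∈ Finset.range M, X i ω) - ∫ ω', X 0 ω'|)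
          = eLpNorm (fun ω =>
              (M : ℝ)⁻¹ • (∑ i ∈ Finset.range M, X i ω) - ∫ ω', X 0 ω') 1 volume := by
        intro M
        rw [eLpNorm_one_eq_lintegral_enorm,
          ← ofReal_integral_norm_eq_lintegral_enorm
            (by simpa [smul_eq_mul, one_div] using hXint' M)]
        congr 1
        simp [Real.norm_eq_abs, smul_eq_mul, one_div]
      have h0 : Tendsto (fun M : ℕ => ENNReal.ofReal
          (∫ ω, |(1 / (M : ℝ)) * (∑ i ∈ Finset.range M, X i ω) - ∫ ω', X 0 ω'|))
          atTop (𝓝 0) := by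
        simp only [key]
        exact hslln
      have h2 : Tendsto (fun M : ℕ => (ENNReal.ofReal
          (∫ ω, |(1 / (M : ℝ)) * (∑ i ∈ Finset.range M, X i ω) - ∫ ω', X 0 ω'|)).toReal)
          atTop (𝓝 ((0 : ENNReal)).toReal) :=
        (ENNReal.tendsto_toReal (by simp)).comp h0
      rw [ENNReal.toReal_zero] at h2
      exact h2.congr fun M =>
        ENNReal.toReal_ofReal (integral_nonneg fun ω => abs_nonneg _)
    have hl1_0 : Tendsto l1 atTop (𝓝 0) := by
      rw [hl1_def]
      have h := hLLN g hmeas hindep hident hint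
      rw [← hE1_def] at h
      exact h
    have hl2_0 : Tendsto l2 atTop (𝓝 0) := by
      rw [hl2_def]
      have h := hLLN Y hYmeas hYindep hYident hYint
      rw [hE2Y] at h
      exact h
    -- Markov bounds
    have hq_le : ∀ M : ℕ, 1 ≤ M → q M ≤ l2 M / ε := by
      intro M hM
      have hMpos : (0 : ℝ) < M := by exact_mod_cast hM
      have habs_int : Integrable (fun ω =>
          |(1 / (M : ℝ)) * (∑ i ∈ Finset.range M, Y i ω) - E2|) (volume : Measure Ω) :=
        (((integrable_finset_sum _ (fun i _ =>
          (hYident i).integrable_iff.2 hYint)).const_mul _).sub (integrable_const _)).abs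
      have hmarkov := mul_meas_ge_le_integral_of_nonneg
        (Eventually.of_forall fun ω => abs_nonneg _) habs_int ε
      rw [measureReal_def] at hmarkov
      have hsub : {ω | (M : ℝ) * (E2 + ε) < ∑ i ∈ Finset.range M, Y i ω}
          ⊆ {ω | ε ≤ |(1 / (M : ℝ)) * (∑ i ∈ Finset.range M, Y i ω) - E2|} := by
        intro ω hω
        simp only [Set.mem_setOf_eq] at hω ⊢
        have h1 : E2 + ε < (1 / (M : ℝ)) * ∑ i ∈ Finset.range M, Y i ω := by
          rw [show E2 + ε = (1 / (M : ℝ)) * ((M : ℝ) * (E2 + ε)) by field_simp]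
          exact mul_lt_mul_of_pos_left hω (by positivity)
        exact le_trans (by linarith) (le_abs_self _)
      have h2 : q M ≤ (volume {ω | ε ≤
          |(1 / (M : ℝ)) * (∑ i ∈ Finset.range M, Y i ω) - E2|}).toReal := by
        rw [hq_def]
        exact ENNReal.toReal_mono (measure_ne_top _ _) (measure_mono hsub)
      refine h2.trans ?_
      rw [le_div_iff₀ hε, hl2_def]
      linarith [hmarkov]
    have hqnn : ∀ M, 0 ≤ q M := by
      intro M; rw [hq_def]; exact ENNReal.toReal_nonneg
    have hq0 : Tendsto q atTop (𝓝 0) := by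
      refine squeeze_zero' (Eventually.of_forall hqnn)
        ((eventually_ge_atTop 1).mono hq_le) ?_
      have h := hl2_0.div_const ε
      rw [zero_div] at h
      exact h
    have hr_le : ∀ M : ℕ, 1 ≤ M → r M ≤ E1 / K := by
      intro M hM
      have hMpos : (0 : ℝ) < M := by exact_mod_cast hM
      have hmarkov := mul_meas_ge_le_integral_of_nonneg
        (Eventually.of_forall (hSnn M)) (hSint M) ((M : ℝ) * K)
      rw [hSintegral M, measureReal_def] at hmarkov
      set tR : ℝ := (volume {ω | (M : ℝ) * K ≤ ∑ i ∈ Finset.range M, g i ω}).toReal with htR_def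
      have h2 : r M ≤ tR := by
        rw [hr_def, htR_def]
        refine ENNReal.toReal_mono (measure_ne_top _ _) (measure_mono ?_)
        intro ω hω
        simp only [Set.mem_setOf_eq] at hω ⊢
        exact le_of_lt hω
      have h4 : (M : ℝ) * (K * tR) ≤ (M : ℝ) * E1 := by nlinarith [hmarkov]
      have h5 : K * tR ≤ E1 := le_of_mul_le_mul_left h4 hMpos
      refine h2.trans ?_
      rw [le_div_iff₀ hK]
      linarith
    have hd_pos : ∀ M : ℕ, 0 < d M := by
      intro M
      simp only [hd_def]
      have h1 : (0 : ℝ) ≤ (M : ℝ) := Nat.cast_nonneg M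
      have h2 := mul_pos hv hK
      have h3 : 0 ≤ sθ * (M : ℝ) * (E2 + ε) ^ 2 :=
        mul_nonneg (mul_nonneg hθ.le h1) (sq_nonneg _)
      linarith
    have hd1 : Tendsto (fun M : ℕ => sθ * (M : ℝ) / d M) atTop (𝓝 (1 / (E2 + ε) ^ 2)) := by
      have hden : Tendsto (fun M : ℕ => (sv * K + sn) / (M : ℝ) + sθ * (E2 + ε) ^ 2)
          atTop (𝓝 (0 + sθ * (E2 + ε) ^ 2)) :=
        (tendsto_const_div_atTop_nhds_zero_nat _).add tendsto_const_nhds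
      rw [zero_add] at hden
      have hdiv : Tendsto (fun M : ℕ => sθ / ((sv * K + sn) / (M : ℝ) + sθ * (E2 + ε) ^ 2))
          atTop (𝓝 (sθ / (sθ * (E2 + ε) ^ 2))) :=
        tendsto_const_nhds.div hden (mul_pos hθ (pow_pos hβ' 2)).ne'
      have heq : sθ / (sθ * (E2 + ε) ^ 2) = 1 / (E2 + ε) ^ 2 := by
        rw [div_eq_div_iff (mul_pos hθ (pow_pos hβ' 2)).ne' (pow_pos hβ' 2).ne']
        ring
      rw [heq] at hdiv
      refine hdiv.congr' ?_
      filter_upwards [eventually_ge_atTop 1] with M hM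
      have hMpos : (0 : ℝ) < M := by exact_mod_cast hM
      have hx : (0 : ℝ) < (sv * K + sn) / (M : ℝ) + sθ * (E2 + ε) ^ 2 :=
        add_pos (div_pos (by nlinarith [mul_pos hv hK]) hMpos) (mul_pos hθ (pow_pos hβ' 2))
      rw [div_eq_div_iff hx.ne' (hd_pos M).ne', hd_def]
      field_simp
    have hd2 : Tendsto (fun M : ℕ => A - sv * l1 M - A * (q M + E1 / K)) atTop
        (𝓝 (A - sv * 0 - A * (0 + E1 / K))) :=
      (tendsto_const_nhds.sub (hl1_0.const_mul sv)).sub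
        ((hq0.add tendsto_const_nhds).const_mul A)
    refine ⟨fun M => (sθ * (M : ℝ) / d M) * (A - sv * l1 M - A * (q M + E1 / K)), ?_, ?_⟩
    · have hmul := hd1.mul hd2
      have heq2 : (1 / (E2 + ε) ^ 2) * (A - sv * 0 - A * (0 + E1 / K))
          = A * (1 - E1 / K) / (E2 + ε) ^ 2 := by ring
      rw [heq2] at hmul
      exact hmul
    · intro M hM
      have hMpos : (0 : ℝ) < M := by exact_mod_cast hM
      set Gs : Set Ω := {ω | ∑ i ∈ Finset.range M, Y i ω ≤ (M : ℝ) * (E2 + ε)}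
        ∩ {ω | ∑ i ∈ Finset.range M, g i ω ≤ (M : ℝ) * K} with hGs_def
      have hGmeas : MeasurableSet Gs :=
        (measurableSet_le (hTmeas M) measurable_const).inter
          (measurableSet_le (hSmeas M) measurable_const)
      have hpt1 : ∀ ω, Gs.indicator (fun ω => (sθ / d M) * N M ω) ω ≤ D M ω := by
        intro ω
        by_cases hω : ω ∈ Gs
        · rw [Set.indicator_of_mem hω]
          obtain ⟨hω1, hω2⟩ := hω
          simp only [Set.mem_setOf_eq] at hω1 hω2
          have hT2 : (∑ i ∈ Finset.range M, Y i ω) ^ 2 ≤ ((M : ℝ) * (E2 + ε)) ^ 2 :=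
            pow_le_pow_left₀ (hTnn M ω) hω1 2
          have h1 : (1 / (M : ℝ)) * (∑ i ∈ Finset.range M, Y i ω) ^ 2
              ≤ (M : ℝ) * (E2 + ε) ^ 2 := by
            rw [show (M : ℝ) * (E2 + ε) ^ 2
                = (1 / (M : ℝ)) * ((M : ℝ) * (E2 + ε)) ^ 2 by field_simp]
            exact mul_le_mul_of_nonneg_left hT2 (by positivity)
          have h2 : N M ω ≤ sv * K + sn := by
            have h21 : (1 / (M : ℝ)) * (∑ i ∈ Finset.range M, g i ω) ≤ K := by
              rw [show K = (1 / (M : ℝ)) * ((M : ℝ) * K) by field_simp]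
              exact mul_le_mul_of_nonneg_left hω2 (by positivity)
            have h22 := mul_le_mul_of_nonneg_left h21 hv.le
            simp only [hN_def]
            linarith
          have hden_le : N M ω + sθ * ((1 / (M : ℝ)) * (∑ i ∈ Finset.range M, Y i ω) ^ 2)
              ≤ d M := by
            simp only [hd_def]
            have h23 := mul_le_mul_of_nonneg_left h1 hθ.le
            nlinarith
          have hD_eq : D M ω = sθ * N M ω
              / (N M ω + sθ * ((1 / (M : ℝ)) * (∑ i ∈ Finset.range M, Y i ω) ^ 2)) := by
            rw [hD_def]
          rw [hD_eq, div_mul_eq_mul_div]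
          exact div_le_div_of_nonneg_left (mul_nonneg hθ.le (hNnn M ω))
            (hden_pos M ω) hden_le
        · rw [Set.indicator_of_notMem hω]
          exact hDnn M ω
      have hind1_int : Integrable
          (fun ω => Gs.indicator (fun ω => (sθ / d M) * N M ω) ω) (volume : Measure Ω) :=
        ((hNint M).const_mul (sθ / d M)).indicator hGmeas
      have hstep1 : ∫ ω, Gs.indicator (fun ω => (sθ / d M) * N M ω) ω ≤ I M := by
        rw [hI_def]
        exact integral_mono hind1_int (hDint M) hpt1
      have hconst : ∀ ω, Gs.indicator (fun ω => (sθ / d M) * N M ω) ω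
          = (sθ / d M) * Gs.indicator (N M) ω := by
        intro ω
        by_cases hω : ω ∈ Gs <;> simp [hω]
      have habs_int : Integrable (fun ω =>
          |(1 / (M : ℝ)) * (∑ i ∈ Finset.range M, g i ω) - E1|) (volume : Measure Ω) :=
        (((hSint M).const_mul _).sub (integrable_const _)).abs
      have hpt2 : ∀ ω, N M ω - sv * |(1 / (M : ℝ)) * (∑ i ∈ Finset.range M, g i ω) - E1|
          - A * Gsᶜ.indicator (fun _ => (1 : ℝ)) ω ≤ Gs.indicator (N M) ω := by
        intro ω
        by_cases hω : ω ∈ Gs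
        · rw [Set.indicator_of_mem hω,
            Set.indicator_of_notMem (Set.notMem_compl_iff.2 hω)]
          have h31 : 0 ≤ sv * |(1 / (M : ℝ)) * (∑ i ∈ Finset.range M, g i ω) - E1| :=
            mul_nonneg hv.le (abs_nonneg _)
          linarith
        · rw [Set.indicator_of_notMem hω, Set.indicator_of_mem (Set.mem_compl hω)]
          have habs : (1 / (M : ℝ)) * (∑ i ∈ Finset.range M, g i ω) - E1
              ≤ |(1 / (M : ℝ)) * (∑ i ∈ Finset.range M, g i ω) - E1| := le_abs_self _
          have h8 := mul_le_mul_of_nonneg_left habs hv.le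
          have hNval : N M ω = sv * ((1 / (M : ℝ)) * ∑ i ∈ Finset.range M, g i ω) + sn := by
            simp only [hN_def]
          rw [hA_def]
          nlinarith
      have hpt2_int_l : Integrable (fun ω =>
          N M ω - sv * |(1 / (M : ℝ)) * (∑ i ∈ Finset.range M, g i ω) - E1|
            - A * Gsᶜ.indicator (fun _ => (1 : ℝ)) ω) (volume : Measure Ω) :=
        ((hNint M).sub (habs_int.const_mul sv)).sub
          (((integrable_const (1 : ℝ)).indicator hGmeas.compl).const_mul A)
      have hstep2 : A - sv * l1 M - A * (volume Gsᶜ).toReal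
          ≤ ∫ ω, Gs.indicator (N M) ω := by
        have hle := integral_mono hpt2_int_l ((hNint M).indicator hGmeas) hpt2
        have hcomp : (∫ ω, (N M ω
            - sv * |(1 / (M : ℝ)) * (∑ i ∈ Finset.range M, g i ω) - E1|
            - A * Gsᶜ.indicator (fun _ => (1 : ℝ)) ω))
            = A - sv * l1 M - A * (volume Gsᶜ).toReal := by
          have i1 : Integrable (fun ω => N M ω
              - sv * |(1 / (M : ℝ)) * (∑ i ∈ Finset.range M, g i ω) - E1|)
              (volume : Measure Ω) := (hNint M).sub (habs_int.const_mul sv)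
          have i2 : Integrable (fun ω => A * Gsᶜ.indicator (fun _ => (1 : ℝ)) ω)
              (volume : Measure Ω) :=
            ((integrable_const (1 : ℝ)).indicator hGmeas.compl).const_mul A
          have i3 : Integrable (fun ω =>
              sv * |(1 / (M : ℝ)) * (∑ i ∈ Finset.range M, g i ω) - E1|)
              (volume : Measure Ω) := habs_int.const_mul sv
          rw [integral_sub i1 i2, integral_sub (hNint M) i3,
            hNintegral M hM, integral_const_mul, integral_const_mul,
            integral_indicator_const _ hGmeas.compl, measureReal_def]
          simp only [hl1_def, smul_eq_mul, mul_one]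
        linarith [hle, hcomp.le, hcomp.ge]
      have hsplit : (volume Gsᶜ).toReal ≤ q M + r M := by
        have hsub2 : Gsᶜ ⊆ {ω | (M : ℝ) * (E2 + ε) < ∑ i ∈ Finset.range M, Y i ω}
            ∪ {ω | (M : ℝ) * K < ∑ i ∈ Finset.range M, g i ω} := by
          intro ω hω
          simp only [hGs_def, Set.mem_compl_iff, Set.mem_inter_iff, Set.mem_setOf_eq,
            not_and_or, not_le] at hω
          simpa [Set.mem_union, Set.mem_setOf_eq] using hω
        have hle2 : volume Gsᶜ
            ≤ volume {ω | (M : ℝ) * (E2 + ε) < ∑ i ∈ Finset.range M, Y i ω}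
              + volume {ω | (M : ℝ) * K < ∑ i ∈ Finset.range M, g i ω} :=
          (measure_mono hsub2).trans (measure_union_le _ _)
        have h3 := ENNReal.toReal_mono
          (ENNReal.add_ne_top.2 ⟨measure_ne_top _ _, measure_ne_top _ _⟩) hle2
        rw [ENNReal.toReal_add (measure_ne_top _ _) (measure_ne_top _ _)] at h3
        rw [hq_def, hr_def]
        exact h3
      have hcoef_nn : 0 ≤ sθ * (M : ℝ) / d M :=
        div_nonneg (mul_nonneg hθ.le hMpos.le) (hd_pos M).le
      have hAq : A - sv * l1 M - A * (q M + E1 / K)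
          ≤ A - sv * l1 M - A * (volume Gsᶜ).toReal := by
        have h9 : (volume Gsᶜ).toReal ≤ q M + E1 / K :=
          hsplit.trans (by linarith [hr_le M hM])
        nlinarith [mul_le_mul_of_nonneg_left h9 hApos.le]
      calc (sθ * (M : ℝ) / d M) * (A - sv * l1 M - A * (q M + E1 / K))
          ≤ (sθ * (M : ℝ) / d M) * (A - sv * l1 M - A * (volume Gsᶜ).toReal) :=
            mul_le_mul_of_nonneg_left hAq hcoef_nn
        _ ≤ (sθ * (M : ℝ) / d M) * ∫ ω, Gs.indicator (N M) ω :=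
            mul_le_mul_of_nonneg_left hstep2 hcoef_nn
        _ = (M : ℝ) * ((sθ / d M) * ∫ ω, Gs.indicator (N M) ω) := by ring
        _ = (M : ℝ) * ∫ ω, Gs.indicator (fun ω => (sθ / d M) * N M ω) ω := by
            congr 1
            rw [show (fun ω => Gs.indicator (fun ω => (sθ / d M) * N M ω) ω)
              = fun ω => (sθ / d M) * Gs.indicator (N M) ω from funext hconst]
            rw [integral_const_mul]
        _ ≤ (M : ℝ) * I M := mul_le_mul_of_nonneg_left hstep1 hMpos.le
  -- ASSEMBLY
  rw [Metric.tendsto_atTop]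
  intro δ hδ
  set c : ℝ := A / E2 ^ 2 with hc_def
  -- choose ε and K
  have hup_cont : Tendsto (fun n : ℕ => A / (E2 - E2 / (n + 2)) ^ 2) atTop (𝓝 c) := by
    have h1 : Tendsto (fun n : ℕ => E2 / ((n : ℝ) + 2)) atTop (𝓝 0) := by
      have h0 := (tendsto_const_div_atTop_nhds_zero_nat E2).comp (tendsto_add_atTop_nat 2)
      refine h0.congr (fun n => ?_)
      show E2 / ↑(n + 2) = E2 / ((n : ℝ) + 2)
      push_cast; ring
    have h2 : Tendsto (fun n : ℕ => (E2 - E2 / ((n : ℝ) + 2)) ^ 2) atTop (𝓝 (E2 ^ 2)) := by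
      have h3 := (tendsto_const_nhds (x := E2) (f := atTop (α := ℕ))).sub h1
      rw [sub_zero] at h3
      exact h3.pow 2
    exact tendsto_const_nhds.div h2 (by positivity)
  have hlow_cont : Tendsto (fun n : ℕ => A * (1 - E1 / ((n : ℝ) + 1)) / (E2 + E2 / (n + 2)) ^ 2)
      atTop (𝓝 c) := by
    have h1 : Tendsto (fun n : ℕ => E2 / ((n : ℝ) + 2)) atTop (𝓝 0) := by
      have h0 := (tendsto_const_div_atTop_nhds_zero_nat E2).comp (tendsto_add_atTop_nat 2)
      refine h0.congr (fun n => ?_)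
      show E2 / ↑(n + 2) = E2 / ((n : ℝ) + 2)
      push_cast; ring
    have h1' : Tendsto (fun n : ℕ => E1 / ((n : ℝ) + 1)) atTop (𝓝 0) := by
      have h0 := (tendsto_const_div_atTop_nhds_zero_nat E1).comp (tendsto_add_atTop_nat 1)
      refine h0.congr (fun n => ?_)
      show E1 / ↑(n + 1) = E1 / ((n : ℝ) + 1)
      push_cast; ring
    have h2 : Tendsto (fun n : ℕ => (E2 + E2 / ((n : ℝ) + 2)) ^ 2) atTop (𝓝 (E2 ^ 2)) := by
      have h4 := (tendsto_const_nhds (x := E2) (f := atTop (α := ℕ))).add h1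
      rw [add_zero] at h4
      exact h4.pow 2
    have h3 : Tendsto (fun n : ℕ => A * (1 - E1 / ((n : ℝ) + 1))) atTop (𝓝 A) := by
      have h5 := (tendsto_const_nhds (x := (1:ℝ)) (f := atTop (α := ℕ))).sub h1'
      rw [sub_zero] at h5
      have h6 := (tendsto_const_nhds (x := A) (f := atTop (α := ℕ))).mul h5
      rw [mul_one] at h6
      exact h6
    exact h3.div h2 (by positivity)
  obtain ⟨n, hn1, hn2⟩ : ∃ n : ℕ, |A / (E2 - E2 / (n + 2)) ^ 2 - c| < δ / 2 ∧
      |A * (1 - E1 / ((n : ℝ) + 1)) / (E2 + E2 / (n + 2)) ^ 2 - c| < δ / 2 := by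
    have e1 := hup_cont.eventually (Metric.ball_mem_nhds c (by linarith : (0:ℝ) < δ/2))
    have e2 := hlow_cont.eventually (Metric.ball_mem_nhds c (by linarith : (0:ℝ) < δ/2))
    obtain ⟨n, hn⟩ := (e1.and e2).exists
    exact ⟨n, by simpa [Real.dist_eq] using hn.1, by simpa [Real.dist_eq] using hn.2⟩
  set ε : ℝ := E2 / (n + 2) with hε_def
  have hεpos : 0 < ε := by positivity
  have hεlt : ε < E2 := by
    rw [hε_def, div_lt_iff₀ (by positivity)]
    nlinarith
  obtain ⟨p, hp0, hpbound⟩ := upper ε hεpos hεlt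
  obtain ⟨L, hL0, hLbound⟩ := lower ε ((n : ℝ) + 1) hεpos (by positivity)
  have ev1 : ∀ᶠ M in atTop, p M < δ / 2 := by
    have := hp0.eventually (eventually_lt_nhds (show (0:ℝ) < δ/2 by linarith))
    exact this
  have ev2 : ∀ᶠ M in atTop,
      |L M - A * (1 - E1 / ((n : ℝ) + 1)) / (E2 + ε) ^ 2| < δ / 2 := by
    have := hL0.eventually (Metric.ball_mem_nhds _ (show (0:ℝ) < δ/2 by linarith))
    simpa [Real.dist_eq] using this
  have ev3 : ∀ᶠ M : ℕ in atTop, 1 ≤ M := eventually_ge_atTop 1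
  obtain ⟨Mo, hMo⟩ := eventually_atTop.1 ((ev1.and ev2).and ev3)
  refine ⟨Mo, fun M hM => ?_⟩
  obtain ⟨⟨h1, h2⟩, h3⟩ := hMo M hM
  have hub := hpbound M h3
  have hlb := hLbound M h3
  rw [Real.dist_eq, abs_sub_lt_iff]
  have ha1 := abs_sub_lt_iff.1 hn1
  have ha2 := abs_sub_lt_iff.1 hn2
  have ha3 := abs_sub_lt_iff.1 h2
  constructor
  · calc (M : ℝ) * I M - c ≤ A / (E2 - ε) ^ 2 + p M - c := by linarith
      _ < δ := by
        have := ha1.1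
        linarith
  · have : c - δ < L M := by linarith [ha2.2, ha3.2]
    linarith
end

section
/- Let λ > 0. Then, as the integer M → ∞, ∫₀^∞ x^{−1/2} · M(1−e^{−λx})^{M−1} λ e^{−λx} dx is asymptotically equivalent to √(λ/ln(M)), i.e. the ratio of the two quantities tends to 1. -/
open MeasureTheory Filter Real Set Topology

set_option maxHeartbeats 1000000

namespace GmaxAux

noncomputable def pdfE (lam : ℝ) (M : ℕ) (x : ℝ) : ℝ :=
  (M : ℝ) * (1 - Real.exp (-lam * x)) ^ (M - 1) * (lam * Real.exp (-lam * x))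

lemma hasDerivAt_cdf (lam : ℝ) (M : ℕ) (x : ℝ) :
    HasDerivAt (fun y => (1 - Real.exp (-lam * y)) ^ M) (pdfE lam M x) x := by
  have h1 : HasDerivAt (fun y : ℝ => -lam * y) (-lam) x := by
    simpa using (hasDerivAt_id x).const_mul (-lam)
  have h2 := h1.exp
  have h3 : HasDerivAt (fun y => 1 - Real.exp (-lam * y)) (lam * Real.exp (-lam * x)) x := by
    simpa [mul_comm] using (hasDerivAt_const x (1:ℝ)).fun_sub h2
  have := h3.fun_pow M
  simpa [pdfE, mul_comm, mul_assoc, mul_left_comm] using this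

lemma continuous_pdf (lam : ℝ) (M : ℕ) : Continuous (pdfE lam M) := by
  unfold pdfE; fun_prop

lemma pdf_nonneg {lam : ℝ} (hlam : 0 < lam) (M : ℕ) {x : ℝ} (hx : 0 ≤ x) :
    0 ≤ pdfE lam M x := by
  have h : Real.exp (-lam * x) ≤ 1 := by
    rw [Real.exp_le_one_iff]; nlinarith
  have := Real.exp_pos (-lam * x)
  have h0 : 0 ≤ 1 - Real.exp (-lam * x) := by linarith
  unfold pdfE
  have := Real.exp_pos (-lam * x)
  positivity

lemma pdf_le {lam : ℝ} (hlam : 0 < lam) (M : ℕ) {x : ℝ} (hx : 0 ≤ x) :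
    pdfE lam M x ≤ (M : ℝ) * lam * Real.exp (-lam * x) := by
  have h : Real.exp (-lam * x) ≤ 1 := by
    rw [Real.exp_le_one_iff]; nlinarith
  have h0 : 0 ≤ 1 - Real.exp (-lam * x) := by linarith
  have hp : (1 - Real.exp (-lam * x)) ^ (M - 1) ≤ 1 :=
    pow_le_one₀ h0 (by linarith [Real.exp_pos (-lam*x)])
  have := Real.exp_pos (-lam * x)
  calc (M : ℝ) * (1 - Real.exp (-lam * x)) ^ (M - 1) * (lam * Real.exp (-lam * x))
      ≤ (M : ℝ) * 1 * (lam * Real.exp (-lam * x)) := by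
        apply mul_le_mul_of_nonneg_right _ (by positivity)
        exact mul_le_mul_of_nonneg_left hp (by positivity)
    _ = (M : ℝ) * lam * Real.exp (-lam * x) := by ring

lemma integrableOn_pdf {lam : ℝ} (hlam : 0 < lam) (M : ℕ) {a : ℝ} (ha : 0 ≤ a) :
    IntegrableOn (pdfE lam M) (Ioi a) := by
  have hexp : IntegrableOn (fun x => (M:ℝ) * lam * Real.exp (-lam * x)) (Ioi a) := by
    simpa [mul_assoc, IntegrableOn] using (exp_neg_integrableOn_Ioi a hlam).const_mul ((M:ℝ) * lam)
  refine hexp.mono' ((continuous_pdf lam M).aestronglyMeasurable.restrict) ?_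
  rw [ae_restrict_iff' measurableSet_Ioi]
  filter_upwards with x hx
  rw [Real.norm_eq_abs, abs_of_nonneg (pdf_nonneg hlam M (le_of_lt (lt_of_le_of_lt ha hx)))]
  exact pdf_le hlam M (le_of_lt (lt_of_le_of_lt ha hx))

lemma tendsto_cdf {lam : ℝ} (hlam : 0 < lam) (M : ℕ) :
    Tendsto (fun y => (1 - Real.exp (-lam * y)) ^ M) atTop (𝓝 1) := by
  have h1 : Tendsto (fun y : ℝ => -lam * y) atTop atBot :=
    (tendsto_const_mul_atBot_of_neg (by linarith)).2 tendsto_id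
  have h2 : Tendsto (fun y => 1 - Real.exp (-lam * y)) atTop (𝓝 1) := by
    simpa using tendsto_const_nhds.sub (Real.tendsto_exp_atBot.comp h1)
  simpa using h2.pow M

lemma integral_pdf_Ioi {lam : ℝ} (hlam : 0 < lam) (M : ℕ) {a : ℝ} (ha : 0 ≤ a) :
    ∫ x in Ioi a, pdfE lam M x = 1 - (1 - Real.exp (-lam * a)) ^ M := by
  refine integral_Ioi_of_hasDerivAt_of_tendsto ?_ (fun x _ => hasDerivAt_cdf lam M x)
    (integrableOn_pdf hlam M ha) (tendsto_cdf hlam M)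
  exact (hasDerivAt_cdf lam M a).continuousAt.continuousWithinAt


lemma integrableOn_invsqrt {b : ℝ} (hb : 0 ≤ b) :
    IntegrableOn (fun x => 1 / Real.sqrt x) (Ioc 0 b) := by
  have h := intervalIntegral.intervalIntegrable_rpow' (a := 0) (b := b) (r := -(1/2))
    (by norm_num)
  rw [intervalIntegrable_iff_integrableOn_Ioc_of_le hb] at h
  refine h.congr_fun ?_ measurableSet_Ioc
  intro x hx
  show x ^ (-(1/2) : ℝ) = 1 / Real.sqrt x
  rw [Real.rpow_neg hx.1.le, Real.sqrt_eq_rpow, one_div, one_div]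

lemma integral_invsqrt {b : ℝ} (hb : 0 ≤ b) :
    ∫ x in Ioc 0 b, 1 / Real.sqrt x = 2 * Real.sqrt b := by
  have h : ∫ x in (0:ℝ)..b, x ^ (-(1/2) : ℝ) = 2 * Real.sqrt b := by
    rw [integral_rpow (Or.inl (by norm_num))]
    rw [Real.zero_rpow (by norm_num), Real.sqrt_eq_rpow]
    norm_num
    ring
  rw [intervalIntegral.integral_of_le hb] at h
  rw [← h]
  refine setIntegral_congr_fun measurableSet_Ioc (fun x hx => ?_)
  show (1:ℝ) / Real.sqrt x = x ^ (-(1/2) : ℝ)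
  symm
  rw [Real.rpow_neg hx.1.le, Real.sqrt_eq_rpow, one_div, one_div]

lemma aesm_f (lam : ℝ) (M : ℕ) :
    AEStronglyMeasurable (fun x => (1 / Real.sqrt x) * pdfE lam M x)
      (volume.restrict (Ioi (0:ℝ))) := by
  refine AEStronglyMeasurable.mul ?_ (continuous_pdf lam M).aestronglyMeasurable.restrict
  exact (measurable_const.div Real.continuous_sqrt.measurable).aestronglyMeasurable

lemma integrableOn_f {lam : ℝ} (hlam : 0 < lam) (M : ℕ) :
    IntegrableOn (fun x => (1 / Real.sqrt x) * pdfE lam M x) (Ioi (0:ℝ)) := by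
  have heq : Ioc (0:ℝ) 1 ∪ Ioi 1 = Ioi 0 := Ioc_union_Ioi_eq_Ioi zero_le_one
  rw [← heq]
  refine IntegrableOn.union ?_ ?_
  · -- near 0: dominate by (M*lam) * (1/sqrt x)
    refine (((integrableOn_invsqrt zero_le_one).const_mul ((M:ℝ)*lam)).mono'
      ((aesm_f lam M).mono_measure (Measure.restrict_mono Ioc_subset_Ioi_self le_rfl)) ?_)
    rw [ae_restrict_iff' measurableSet_Ioc]
    filter_upwards with x hx
    have hx0 : 0 < x := hx.1
    have h1 : 0 ≤ 1 / Real.sqrt x := by positivity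
    rw [Real.norm_eq_abs, abs_of_nonneg (mul_nonneg h1 (pdf_nonneg hlam M hx0.le))]
    calc 1 / Real.sqrt x * pdfE lam M x ≤ 1 / Real.sqrt x * ((M:ℝ) * lam * Real.exp (-lam * x)) := by
          exact mul_le_mul_of_nonneg_left (pdf_le hlam M hx0.le) h1
      _ ≤ 1 / Real.sqrt x * ((M:ℝ) * lam * 1) := by
          refine mul_le_mul_of_nonneg_left ?_ h1
          refine mul_le_mul_of_nonneg_left ?_ (by positivity)
          rw [Real.exp_le_one_iff]; nlinarith
      _ = (M:ℝ) * lam * (1 / Real.sqrt x) := by ring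
  · -- on Ioi 1: dominate by pdf itself, since 1/sqrt x ≤ 1
    refine ((integrableOn_pdf hlam M zero_le_one).mono'
      ((aesm_f lam M).mono_measure (Measure.restrict_mono (Ioi_subset_Ioi zero_le_one) le_rfl)) ?_)
    rw [ae_restrict_iff' measurableSet_Ioi]
    filter_upwards with x hx
    have hx1 : (1:ℝ) < x := hx
    have hx0 : (0:ℝ) < x := by linarith
    have hs : (1:ℝ) ≤ Real.sqrt x := by
      rw [show (1:ℝ) = Real.sqrt 1 by simp]
      exact Real.sqrt_le_sqrt hx1.le
    have h1 : 1 / Real.sqrt x ≤ 1 := by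
      rw [div_le_one (by positivity)]; exact hs
    have hp := pdf_nonneg hlam M hx0.le
    rw [Real.norm_eq_abs, abs_of_nonneg (mul_nonneg (by positivity) hp)]
    calc 1 / Real.sqrt x * pdfE lam M x ≤ 1 * pdfE lam M x := mul_le_mul_of_nonneg_right h1 hp
      _ = pdfE lam M x := one_mul _

-- Upper bound: for 0 < x₀
lemma upper_bound {lam : ℝ} (hlam : 0 < lam) (M : ℕ) {x₀ : ℝ} (hx₀ : 0 < x₀) :
    ∫ x in Ioi (0:ℝ), (1 / Real.sqrt x) * pdfE lam M x ≤
      2 * Real.sqrt x₀ * ((M:ℝ) * lam) * (1 - Real.exp (-lam * x₀)) ^ (M - 1)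
        + 1 / Real.sqrt x₀ := by
  have heq : Ioc (0:ℝ) x₀ ∪ Ioi x₀ = Ioi 0 := Ioc_union_Ioi_eq_Ioi hx₀.le
  have hint := integrableOn_f hlam M
  have hint1 : IntegrableOn (fun x => (1 / Real.sqrt x) * pdfE lam M x) (Ioc 0 x₀) :=
    hint.mono_set Ioc_subset_Ioi_self
  have hint2 : IntegrableOn (fun x => (1 / Real.sqrt x) * pdfE lam M x) (Ioi x₀) :=
    hint.mono_set (Ioi_subset_Ioi hx₀.le)
  rw [← heq, setIntegral_union (Ioc_disjoint_Ioi le_rfl) measurableSet_Ioi hint1 hint2]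
  have hb1 : ∫ x in Ioc (0:ℝ) x₀, (1 / Real.sqrt x) * pdfE lam M x ≤
      2 * Real.sqrt x₀ * ((M:ℝ) * lam) * (1 - Real.exp (-lam * x₀)) ^ (M - 1) := by
    have hC : (0:ℝ) ≤ (M:ℝ) * lam * (1 - Real.exp (-lam * x₀)) ^ (M - 1) := by
      have : Real.exp (-lam * x₀) ≤ 1 := by rw [Real.exp_le_one_iff]; nlinarith
      have h0 : (0:ℝ) ≤ 1 - Real.exp (-lam * x₀) := by linarith
      positivity
    have key : ∀ x ∈ Ioc (0:ℝ) x₀, (1 / Real.sqrt x) * pdfE lam M x ≤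
        ((M:ℝ) * lam * (1 - Real.exp (-lam * x₀)) ^ (M - 1)) * (1 / Real.sqrt x) := by
      intro x hx
      have hx0 : 0 < x := hx.1
      have hmono : (1 - Real.exp (-lam * x)) ^ (M-1) ≤ (1 - Real.exp (-lam * x₀)) ^ (M-1) := by
        have h1 : Real.exp (-lam * x) ≤ 1 := by rw [Real.exp_le_one_iff]; nlinarith
        refine pow_le_pow_left₀ (by linarith) ?_ _
        have : Real.exp (-lam * x₀) ≤ Real.exp (-lam * x) := by
          apply Real.exp_le_exp.2; nlinarith [hx.2]
        linarith
      have he1 : Real.exp (-lam * x) ≤ 1 := by rw [Real.exp_le_one_iff]; nlinarith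
      have hepos := Real.exp_pos (-lam * x)
      have hs : 0 ≤ 1 / Real.sqrt x := by positivity
      rw [mul_comm (((M:ℝ) * lam * (1 - Real.exp (-lam * x₀)) ^ (M - 1))) (1 / Real.sqrt x)]
      refine mul_le_mul_of_nonneg_left ?_ hs
      calc pdfE lam M x = (M:ℝ) * (1 - Real.exp (-lam * x)) ^ (M-1) * (lam * Real.exp (-lam * x)) := rfl
        _ ≤ (M:ℝ) * (1 - Real.exp (-lam * x₀)) ^ (M-1) * (lam * Real.exp (-lam * x)) := by
            refine mul_le_mul_of_nonneg_right (mul_le_mul_of_nonneg_left hmono (by positivity)) (by positivity)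
        _ ≤ (M:ℝ) * (1 - Real.exp (-lam * x₀)) ^ (M-1) * (lam * 1) := by
            have h2 : Real.exp (-lam * x₀) ≤ 1 := by rw [Real.exp_le_one_iff]; nlinarith
            have h0 : (0:ℝ) ≤ 1 - Real.exp (-lam * x₀) := by linarith
            refine mul_le_mul_of_nonneg_left (mul_le_mul_of_nonneg_left he1 hlam.le) (by positivity)
        _ = (M:ℝ) * lam * (1 - Real.exp (-lam * x₀)) ^ (M - 1) := by ring
    calc ∫ x in Ioc (0:ℝ) x₀, (1 / Real.sqrt x) * pdfE lam M x
        ≤ ∫ x in Ioc (0:ℝ) x₀, ((M:ℝ) * lam * (1 - Real.exp (-lam * x₀)) ^ (M - 1)) * (1 / Real.sqrt x) :=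
          setIntegral_mono_on hint1 ((integrableOn_invsqrt hx₀.le).const_mul _) measurableSet_Ioc key
      _ = ((M:ℝ) * lam * (1 - Real.exp (-lam * x₀)) ^ (M - 1)) * (2 * Real.sqrt x₀) := by
          rw [integral_const_mul, integral_invsqrt hx₀.le]
      _ = 2 * Real.sqrt x₀ * ((M:ℝ) * lam) * (1 - Real.exp (-lam * x₀)) ^ (M - 1) := by ring
  have hb2 : ∫ x in Ioi x₀, (1 / Real.sqrt x) * pdfE lam M x ≤ 1 / Real.sqrt x₀ := by
    have key : ∀ x ∈ Ioi x₀, (1 / Real.sqrt x) * pdfE lam M x ≤ (1 / Real.sqrt x₀) * pdfE lam M x := by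
      intro x hx
      have hx0 : 0 < x := lt_trans hx₀ hx
      refine mul_le_mul_of_nonneg_right ?_ (pdf_nonneg hlam M hx0.le)
      exact one_div_le_one_div_of_le (Real.sqrt_pos.2 hx₀) (Real.sqrt_le_sqrt (le_of_lt hx))
    calc ∫ x in Ioi x₀, (1 / Real.sqrt x) * pdfE lam M x
        ≤ ∫ x in Ioi x₀, (1 / Real.sqrt x₀) * pdfE lam M x :=
          setIntegral_mono_on hint2 (((integrableOn_pdf hlam M hx₀.le)).const_mul _) measurableSet_Ioi key
      _ = (1 / Real.sqrt x₀) * (1 - (1 - Real.exp (-lam * x₀)) ^ M) := by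
          rw [integral_const_mul, integral_pdf_Ioi hlam M hx₀.le]
      _ ≤ (1 / Real.sqrt x₀) * 1 := by
          refine mul_le_mul_of_nonneg_left ?_ (by positivity)
          have h2 : Real.exp (-lam * x₀) ≤ 1 := by rw [Real.exp_le_one_iff]; nlinarith
          have h0 : (0:ℝ) ≤ 1 - Real.exp (-lam * x₀) := by linarith
          nlinarith [pow_nonneg h0 M]
      _ = 1 / Real.sqrt x₀ := mul_one _
  linarith

-- Lower bound: for 0 < x₀ ≤ x₁
lemma lower_bound {lam : ℝ} (hlam : 0 < lam) (M : ℕ) {x₀ x₁ : ℝ} (hx₀ : 0 < x₀) (hx : x₀ ≤ x₁) :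
    (1 / Real.sqrt x₁) * ((1 - Real.exp (-lam * x₁)) ^ M - (1 - Real.exp (-lam * x₀)) ^ M) ≤
      ∫ x in Ioi (0:ℝ), (1 / Real.sqrt x) * pdfE lam M x := by
  have hint := integrableOn_f hlam M
  have hintIoc : IntegrableOn (fun x => (1 / Real.sqrt x) * pdfE lam M x) (Ioc x₀ x₁) :=
    hint.mono_set (fun x hx' => lt_trans hx₀ hx'.1)
  have hFTC : ∫ x in Ioc x₀ x₁, pdfE lam M x =
      (1 - Real.exp (-lam * x₁)) ^ M - (1 - Real.exp (-lam * x₀)) ^ M := by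
    rw [← intervalIntegral.integral_of_le hx]
    exact intervalIntegral.integral_eq_sub_of_hasDerivAt
      (fun x _ => hasDerivAt_cdf lam M x)
      ((continuous_pdf lam M).intervalIntegrable x₀ x₁)
  have step1 : (1 / Real.sqrt x₁) * ((1 - Real.exp (-lam * x₁)) ^ M - (1 - Real.exp (-lam * x₀)) ^ M)
      ≤ ∫ x in Ioc x₀ x₁, (1 / Real.sqrt x) * pdfE lam M x := by
    have hpull : ∫ x in Ioc x₀ x₁, (1 / Real.sqrt x₁) * pdfE lam M x
        = (1 / Real.sqrt x₁) * ∫ x in Ioc x₀ x₁, pdfE lam M x := integral_const_mul _ _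
    rw [← hFTC, ← hpull]
    refine setIntegral_mono_on (((integrableOn_pdf hlam M hx₀.le).mono_set Ioc_subset_Ioi_self).const_mul _)
      hintIoc measurableSet_Ioc ?_
    intro x hx'
    have hx0 : 0 < x := lt_trans hx₀ hx'.1
    refine mul_le_mul_of_nonneg_right ?_ (pdf_nonneg hlam M hx0.le)
    exact one_div_le_one_div_of_le (Real.sqrt_pos.2 hx0) (Real.sqrt_le_sqrt hx'.2)
  refine le_trans step1 ?_
  refine setIntegral_mono_set hint ?_ ?_
  · filter_upwards [self_mem_ae_restrict measurableSet_Ioi] with x hx'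
    exact mul_nonneg (by positivity) (pdf_nonneg hlam M (le_of_lt hx'))
  · exact HasSubset.Subset.eventuallyLE (fun x hx' => lt_trans hx₀ hx'.1)


-- sqrt algebra helpers
lemma sqrt_ratio_inv {lam L c : ℝ} (hlam : 0 < lam) (hL : 0 < L) (hc : 0 < c) :
    (1 / Real.sqrt (c * L / lam)) / Real.sqrt (lam / L) = 1 / Real.sqrt c := by
  rw [div_div, ← Real.sqrt_mul (by positivity)]
  have h : c * L / lam * (lam / L) = c := by field_simp
  rw [h]

lemma sqrt_ratio_mul {lam L c : ℝ} (hlam : 0 < lam) (hL : 0 < L) (hc : 0 ≤ c) :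
    Real.sqrt (c * L / lam) / Real.sqrt (lam / L) = Real.sqrt c * L / lam := by
  rw [← Real.sqrt_div (by positivity)]
  have h : c * L / lam / (lam / L) = c * (L / lam) ^ 2 := by field_simp
  rw [h, Real.sqrt_mul hc, Real.sqrt_sq (by positivity)]
  ring

-- sqrt numeric bounds
lemma inv_sqrt_one_sub_le {ε : ℝ} (hε : 0 < ε) (hε2 : ε ≤ 1/2) :
    1 / Real.sqrt (1 - ε) ≤ 1 + 2 * ε := by
  have h1 : (0:ℝ) < 1 - ε := by linarith
  rw [div_le_iff₀ (Real.sqrt_pos.2 h1)]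
  have : (1 + 2*ε) * Real.sqrt (1 - ε) = Real.sqrt ((1 + 2*ε)^2 * (1 - ε)) := by
    rw [Real.sqrt_mul (by positivity), Real.sqrt_sq (by positivity)]
  rw [this]
  have h3 : 0 ≤ ε * (3 - 4*ε^2) := mul_nonneg hε.le (by nlinarith)
  have h2 : (1:ℝ) ≤ (1 + 2*ε)^2 * (1 - ε) := by nlinarith
  calc (1:ℝ) = Real.sqrt 1 := by simp
    _ ≤ _ := Real.sqrt_le_sqrt h2

lemma one_sub_le_inv_sqrt_one_add {ε : ℝ} (hε : 0 < ε) (hε2 : ε ≤ 1/2) :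
    1 - ε ≤ 1 / Real.sqrt (1 + ε) := by
  have h1 : (0:ℝ) < 1 + ε := by linarith
  rw [le_div_iff₀ (Real.sqrt_pos.2 h1)]
  have : (1 - ε) * Real.sqrt (1 + ε) = Real.sqrt ((1 - ε)^2 * (1 + ε)) := by
    rw [Real.sqrt_mul (by positivity), Real.sqrt_sq (by linarith)]
  rw [this]
  have h3 : 0 ≤ ε * (1 + ε - ε^2) := mul_nonneg hε.le (by nlinarith)
  have h2 : (1 - ε)^2 * (1 + ε) ≤ 1 := by nlinarith
  calc Real.sqrt ((1 - ε)^2 * (1 + ε)) ≤ Real.sqrt 1 := Real.sqrt_le_sqrt h2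
    _ = 1 := by simp

-- the error term tends to zero (real version)
lemma tendsto_err_real {ε : ℝ} (hε : 0 < ε) :
    Tendsto (fun x : ℝ => 2 * x * Real.log x * Real.exp (-x ^ ε / 2)) atTop (𝓝 0) := by
  have houter : Tendsto (fun y : ℝ => 2 * (y ^ (2/ε) * Real.exp (-(1/2) * y))) atTop (𝓝 0) := by
    simpa using (tendsto_rpow_mul_exp_neg_mul_atTop_nhds_zero (2/ε) (1/2) (by norm_num)).const_mul 2
  have hcomp : Tendsto (fun x : ℝ => 2 * ((x ^ ε) ^ (2/ε) * Real.exp (-(1/2) * x ^ ε)))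
      atTop (𝓝 0) := houter.comp (tendsto_rpow_atTop hε)
  refine squeeze_zero' ?_ ?_ hcomp
  · filter_upwards [eventually_ge_atTop (1:ℝ)] with x hx
    have h0 : (0:ℝ) < x := by linarith
    have : 0 ≤ Real.log x := Real.log_nonneg hx
    positivity
  · filter_upwards [eventually_ge_atTop (1:ℝ)] with x hx
    have h0 : (0:ℝ) < x := by linarith
    have hpow : (x ^ ε) ^ (2/ε) = x ^ (2:ℕ) := by
      rw [← Real.rpow_mul h0.le, ← Real.rpow_natCast x 2]
      congr 1
      field_simp
      norm_num
    have hlog : Real.log x ≤ x := (Real.log_le_sub_one_of_pos h0).trans (by linarith)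
    have hexp : (0:ℝ) ≤ Real.exp (-x ^ ε / 2) := (Real.exp_pos _).le
    calc 2 * x * Real.log x * Real.exp (-x ^ ε / 2)
        ≤ 2 * x ^ (2:ℕ) * Real.exp (-x ^ ε / 2) := by
          refine mul_le_mul_of_nonneg_right ?_ hexp
          nlinarith
      _ = 2 * ((x ^ ε) ^ (2/ε) * Real.exp (-(1/2) * x ^ ε)) := by
          rw [hpow, show -x ^ ε / 2 = -(1/2) * x ^ ε by ring]
          ring

lemma tendsto_err_nat {ε : ℝ} (hε : 0 < ε) :
    Tendsto (fun M : ℕ => 2 * (M:ℝ) * Real.log M * Real.exp (-(M:ℝ) ^ ε / 2))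
      atTop (𝓝 0) :=
  (tendsto_err_real hε).comp tendsto_natCast_atTop_atTop

noncomputable def RR (lam : ℝ) (M : ℕ) : ℝ :=
  (∫ x in Ioi (0:ℝ), (1 / Real.sqrt x) * pdfE lam M x) / Real.sqrt (lam / Real.log M)

section Main
variable {lam : ℝ}

lemma upper_ev (hlam : 0 < lam) {ε : ℝ} (hε : 0 < ε) (hε1 : ε ≤ 1/2) :
    ∀ᶠ M : ℕ in atTop, RR lam M ≤ 1 / Real.sqrt (1 - ε)
      + 2 * (M:ℝ) * Real.log M * Real.exp (-(M:ℝ) ^ ε / 2) := by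
  filter_upwards [eventually_ge_atTop 2] with M hM
  set m : ℝ := (M:ℝ) with hmdef
  have hm : (2:ℝ) ≤ m := by rw [hmdef]; exact_mod_cast hM
  have hm0 : (0:ℝ) < m := by linarith
  have hL : 0 < Real.log m := Real.log_pos (by linarith)
  set L := Real.log m with hLdef
  have h1ε : (0:ℝ) < 1 - ε := by linarith
  set x₀ : ℝ := (1 - ε) * L / lam with hx₀def
  have hx₀ : 0 < x₀ := by positivity
  have hexp : Real.exp (-lam * x₀) = m ^ (-(1 - ε) : ℝ) := by
    have harg : -lam * x₀ = Real.log m * (-(1 - ε)) := by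
      rw [hx₀def]; field_simp; ring
    rw [harg, ← Real.rpow_def_of_pos hm0]
  set δ : ℝ := m ^ (-(1 - ε) : ℝ) with hδdef
  have hδ0 : 0 < δ := Real.rpow_pos_of_pos hm0 _
  have hδ1 : δ ≤ 1 := Real.rpow_le_one_of_one_le_of_nonpos (by linarith) (by linarith)
  -- upper bound on the integral
  have hub := upper_bound hlam M hx₀
  rw [hexp] at hub
  have hs : 0 < Real.sqrt (lam / L) := Real.sqrt_pos.2 (by positivity)
  have hdiv : RR lam M ≤ (2 * Real.sqrt x₀ * (m * lam) * (1 - δ) ^ (M - 1) + 1 / Real.sqrt x₀)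
      / Real.sqrt (lam / L) := by
    unfold RR
    gcongr
  -- algebra on the RHS
  have hD0 : 0 ≤ (1 - δ) ^ (M - 1) := pow_nonneg (by linarith) _
  have hterm2 : (1 / Real.sqrt x₀) / Real.sqrt (lam / L) = 1 / Real.sqrt (1 - ε) := by
    rw [hx₀def]; exact sqrt_ratio_inv hlam hL h1ε
  have hterm1 : (2 * Real.sqrt x₀ * (m * lam) * (1 - δ) ^ (M - 1)) / Real.sqrt (lam / L)
      = 2 * (m * lam) * (1 - δ) ^ (M - 1) * (Real.sqrt (1 - ε) * L / lam) := by
    have hsr : Real.sqrt x₀ / Real.sqrt (lam / L) = Real.sqrt (1 - ε) * L / lam := by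
      rw [hx₀def]; exact sqrt_ratio_mul hlam hL h1ε.le
    rw [show (2 * Real.sqrt x₀ * (m * lam) * (1 - δ) ^ (M - 1)) / Real.sqrt (lam / L)
        = 2 * (m * lam) * (1 - δ) ^ (M - 1) * (Real.sqrt x₀ / Real.sqrt (lam / L)) by ring, hsr]
  -- bound the main error term
  have hDexp : (1 - δ) ^ (M - 1) * Real.sqrt (1 - ε) ≤ Real.exp (-m ^ ε / 2) := by
    have hle : 1 - δ ≤ Real.exp (-δ) := by
      have := Real.add_one_le_exp (-δ); linarith
    have hpow : (1 - δ) ^ (M - 1) ≤ Real.exp (-δ) ^ (M - 1) :=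
      pow_le_pow_left₀ (by linarith) hle _
    have hexppow : Real.exp (-δ) ^ (M - 1) = Real.exp (((M - 1 : ℕ) : ℝ) * (-δ)) :=
      (Real.exp_nat_mul _ _).symm
    have hcast : ((M - 1 : ℕ) : ℝ) = m - 1 := by
      rw [Nat.cast_sub (by omega)]; simp [hmdef]
    have hmδ : m * δ = m ^ (ε : ℝ) := by
      rw [show (ε : ℝ) = 1 + (-(1 - ε)) by ring, Real.rpow_add hm0, Real.rpow_one, hδdef]
    have hkey : ((M - 1 : ℕ) : ℝ) * (-δ) ≤ -m ^ ε / 2 := by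
      rw [hcast]
      nlinarith [hδ0.le, hmδ]
    have hfinal : Real.exp (((M - 1 : ℕ) : ℝ) * (-δ)) ≤ Real.exp (-m ^ ε / 2) :=
      Real.exp_le_exp.2 hkey
    have hs1 : Real.sqrt (1 - ε) ≤ 1 := Real.sqrt_le_one.2 (by linarith)
    calc (1 - δ) ^ (M - 1) * Real.sqrt (1 - ε) ≤ (1 - δ) ^ (M - 1) * 1 :=
          mul_le_mul_of_nonneg_left hs1 hD0
      _ = (1 - δ) ^ (M - 1) := mul_one _
      _ ≤ Real.exp (-δ) ^ (M - 1) := hpow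
      _ = Real.exp (((M - 1 : ℕ) : ℝ) * (-δ)) := hexppow
      _ ≤ Real.exp (-m ^ ε / 2) := hfinal
  have hmain : 2 * (m * lam) * (1 - δ) ^ (M - 1) * (Real.sqrt (1 - ε) * L / lam)
      ≤ 2 * m * L * Real.exp (-m ^ ε / 2) := by
    have heq : 2 * (m * lam) * (1 - δ) ^ (M - 1) * (Real.sqrt (1 - ε) * L / lam)
        = (2 * m * L) * ((1 - δ) ^ (M - 1) * Real.sqrt (1 - ε)) := by
      field_simp
    rw [heq]
    have h2mL : (0:ℝ) ≤ 2 * m * L := by positivity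
    calc (2 * m * L) * ((1 - δ) ^ (M - 1) * Real.sqrt (1 - ε))
        ≤ (2 * m * L) * Real.exp (-m ^ ε / 2) := mul_le_mul_of_nonneg_left hDexp h2mL
      _ = 2 * m * L * Real.exp (-m ^ ε / 2) := by ring
  calc RR lam M ≤ (2 * Real.sqrt x₀ * (m * lam) * (1 - δ) ^ (M - 1) + 1 / Real.sqrt x₀)
        / Real.sqrt (lam / L) := hdiv
    _ = (2 * Real.sqrt x₀ * (m * lam) * (1 - δ) ^ (M - 1)) / Real.sqrt (lam / L)
        + (1 / Real.sqrt x₀) / Real.sqrt (lam / L) := add_div _ _ _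
    _ = 2 * (m * lam) * (1 - δ) ^ (M - 1) * (Real.sqrt (1 - ε) * L / lam)
        + 1 / Real.sqrt (1 - ε) := by rw [hterm1, hterm2]
    _ ≤ 2 * m * L * Real.exp (-m ^ ε / 2) + 1 / Real.sqrt (1 - ε) := by linarith [hmain]
    _ = 1 / Real.sqrt (1 - ε) + 2 * m * L * Real.exp (-m ^ ε / 2) := by ring

end Main

section Main2
variable {lam : ℝ}

lemma lower_ev (hlam : 0 < lam) {ε : ℝ} (hε : 0 < ε) (hε1 : ε ≤ 1/2) :
    ∀ᶠ M : ℕ in atTop,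
      ((1 - (M:ℝ) ^ (-(1+ε) : ℝ)) ^ M - (1 - (M:ℝ) ^ (-(1-ε) : ℝ)) ^ M)
        * (1 / Real.sqrt (1+ε)) ≤ RR lam M := by
  filter_upwards [eventually_ge_atTop 2] with M hM
  set m : ℝ := (M:ℝ) with hmdef
  have hm : (2:ℝ) ≤ m := by rw [hmdef]; exact_mod_cast hM
  have hm0 : (0:ℝ) < m := by linarith
  have hL : 0 < Real.log m := Real.log_pos (by linarith)
  set L := Real.log m with hLdef
  have h1ε : (0:ℝ) < 1 - ε := by linarith
  have h2ε : (0:ℝ) < 1 + ε := by linarith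
  set x₀ : ℝ := (1 - ε) * L / lam with hx₀def
  set x₁ : ℝ := (1 + ε) * L / lam with hx₁def
  have hx₀ : 0 < x₀ := by positivity
  have hx : x₀ ≤ x₁ := by
    rw [hx₀def, hx₁def]
    gcongr <;> linarith
  have hexp0 : Real.exp (-lam * x₀) = m ^ (-(1 - ε) : ℝ) := by
    have harg : -lam * x₀ = Real.log m * (-(1 - ε)) := by rw [hx₀def]; field_simp; ring
    rw [harg, ← Real.rpow_def_of_pos hm0]
  have hexp1 : Real.exp (-lam * x₁) = m ^ (-(1 + ε) : ℝ) := by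
    have harg : -lam * x₁ = Real.log m * (-(1 + ε)) := by rw [hx₁def]; field_simp; ring
    rw [harg, ← Real.rpow_def_of_pos hm0]
  have hlb := lower_bound hlam M hx₀ hx
  rw [hexp0, hexp1] at hlb
  have hs : 0 < Real.sqrt (lam / L) := Real.sqrt_pos.2 (by positivity)
  have hdiv : (1 / Real.sqrt x₁ * ((1 - m ^ (-(1+ε):ℝ)) ^ M - (1 - m ^ (-(1-ε):ℝ)) ^ M))
      / Real.sqrt (lam / L) ≤ RR lam M := by
    unfold RR
    gcongr
  refine le_trans (le_of_eq ?_) hdiv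
  have hsr : (1 / Real.sqrt x₁) / Real.sqrt (lam / L) = 1 / Real.sqrt (1 + ε) := by
    rw [hx₁def]; exact sqrt_ratio_inv hlam hL h2ε
  rw [show (1 / Real.sqrt x₁ * ((1 - m ^ (-(1+ε):ℝ)) ^ M - (1 - m ^ (-(1-ε):ℝ)) ^ M))
      / Real.sqrt (lam / L)
      = ((1 - m ^ (-(1+ε):ℝ)) ^ M - (1 - m ^ (-(1-ε):ℝ)) ^ M)
        * ((1 / Real.sqrt x₁) / Real.sqrt (lam / L)) by ring, hsr]

lemma tendsto_lower {ε : ℝ} (hε : 0 < ε) (hε1 : ε ≤ 1/2) :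
    Tendsto (fun M : ℕ =>
      ((1 - (M:ℝ) ^ (-(1+ε) : ℝ)) ^ M - (1 - (M:ℝ) ^ (-(1-ε) : ℝ)) ^ M)
        * (1 / Real.sqrt (1+ε))) atTop (𝓝 (1 / Real.sqrt (1+ε))) := by
  have hA : Tendsto (fun M : ℕ => (1 - (M:ℝ) ^ (-(1+ε) : ℝ)) ^ M) atTop (𝓝 1) := by
    have hg : Tendsto (fun M : ℕ => 1 - (M:ℝ) ^ (-ε : ℝ)) atTop (𝓝 1) := by
      have := (tendsto_rpow_neg_atTop hε).comp tendsto_natCast_atTop_atTop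
      simpa using tendsto_const_nhds.sub this
    refine tendsto_of_tendsto_of_tendsto_of_le_of_le' hg tendsto_const_nhds ?_ ?_
    · filter_upwards [eventually_ge_atTop 1] with M hM
      have hm : (1:ℝ) ≤ (M:ℝ) := by exact_mod_cast hM
      have hm0 : (0:ℝ) < (M:ℝ) := by linarith
      have hδ1 : (M:ℝ) ^ (-(1+ε):ℝ) ≤ 1 :=
        Real.rpow_le_one_of_one_le_of_nonpos hm (by linarith)
      have hδ0 : (0:ℝ) < (M:ℝ) ^ (-(1+ε):ℝ) := Real.rpow_pos_of_pos hm0 _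
      have hber := one_add_mul_le_pow (a := -((M:ℝ) ^ (-(1+ε):ℝ))) (by linarith) M
      have hmδ : (M:ℝ) * (M:ℝ) ^ (-(1+ε):ℝ) = (M:ℝ) ^ (-ε:ℝ) := by
        rw [show (-ε:ℝ) = 1 + (-(1+ε)) by ring, Real.rpow_add hm0, Real.rpow_one]
      calc 1 - (M:ℝ) ^ (-ε:ℝ) = 1 + (M:ℝ) * (-((M:ℝ) ^ (-(1+ε):ℝ))) := by rw [← hmδ]; ring
        _ ≤ (1 + (-((M:ℝ) ^ (-(1+ε):ℝ)))) ^ M := hber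
        _ = (1 - (M:ℝ) ^ (-(1+ε):ℝ)) ^ M := by ring_nf
    · filter_upwards [eventually_ge_atTop 1] with M hM
      have hm : (1:ℝ) ≤ (M:ℝ) := by exact_mod_cast hM
      have hδ1 : (M:ℝ) ^ (-(1+ε):ℝ) ≤ 1 :=
        Real.rpow_le_one_of_one_le_of_nonpos hm (by linarith)
      have hδ0 : (0:ℝ) < (M:ℝ) ^ (-(1+ε):ℝ) := Real.rpow_pos_of_pos (by linarith) _
      exact pow_le_one₀ (by linarith) (by linarith)
  have hB : Tendsto (fun M : ℕ => (1 - (M:ℝ) ^ (-(1-ε) : ℝ)) ^ M) atTop (𝓝 0) := by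
    have htail : Tendsto (fun M : ℕ => Real.exp (-(M:ℝ) ^ (ε:ℝ))) atTop (𝓝 0) :=
      Real.tendsto_exp_atBot.comp (tendsto_neg_atTop_atBot.comp
        ((tendsto_rpow_atTop hε).comp tendsto_natCast_atTop_atTop))
    refine squeeze_zero' ?_ ?_ htail
    · filter_upwards [eventually_ge_atTop 1] with M hM
      have hm : (1:ℝ) ≤ (M:ℝ) := by exact_mod_cast hM
      have hδ1 : (M:ℝ) ^ (-(1-ε):ℝ) ≤ 1 :=
        Real.rpow_le_one_of_one_le_of_nonpos hm (by linarith)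
      exact pow_nonneg (by linarith) _
    · filter_upwards [eventually_ge_atTop 1] with M hM
      have hm : (1:ℝ) ≤ (M:ℝ) := by exact_mod_cast hM
      have hm0 : (0:ℝ) < (M:ℝ) := by linarith
      have hδ0 : (0:ℝ) < (M:ℝ) ^ (-(1-ε):ℝ) := Real.rpow_pos_of_pos hm0 _
      have hle : 1 - (M:ℝ) ^ (-(1-ε):ℝ) ≤ Real.exp (-((M:ℝ) ^ (-(1-ε):ℝ))) := by
        have := Real.add_one_le_exp (-((M:ℝ) ^ (-(1-ε):ℝ))); linarith
      have hδ1 : (M:ℝ) ^ (-(1-ε):ℝ) ≤ 1 :=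
        Real.rpow_le_one_of_one_le_of_nonpos hm (by linarith)
      have hmδ : (M:ℝ) * (M:ℝ) ^ (-(1-ε):ℝ) = (M:ℝ) ^ (ε:ℝ) := by
        calc (M:ℝ) * (M:ℝ) ^ (-(1-ε):ℝ) = (M:ℝ) ^ (1:ℝ) * (M:ℝ) ^ (-(1-ε):ℝ) := by
              rw [Real.rpow_one]
          _ = (M:ℝ) ^ ((1:ℝ) + (-(1-ε))) := (Real.rpow_add hm0 _ _).symm
          _ = (M:ℝ) ^ (ε:ℝ) := by congr 1; ring
      calc (1 - (M:ℝ) ^ (-(1-ε):ℝ)) ^ M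
          ≤ Real.exp (-((M:ℝ) ^ (-(1-ε):ℝ))) ^ M := pow_le_pow_left₀ (by linarith) hle _
        _ = Real.exp ((M:ℝ) * (-((M:ℝ) ^ (-(1-ε):ℝ)))) := by
            rw [Real.exp_nat_mul]
        _ = Real.exp (-(M:ℝ) ^ (ε:ℝ)) := by rw [show (M:ℝ) * (-((M:ℝ) ^ (-(1-ε):ℝ)))
            = -((M:ℝ) * (M:ℝ) ^ (-(1-ε):ℝ)) by ring, hmδ]
  have := (hA.sub hB).mul_const (1 / Real.sqrt (1+ε))
  simpa using this

theorem main_tendsto (hlam : 0 < lam) :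
    Tendsto (fun M : ℕ => RR lam M) atTop (𝓝 1) := by
  refine tendsto_order.2 ⟨fun a ha => ?_, fun b hb => ?_⟩
  · set ε := min (1/2 : ℝ) ((1 - a)/2) with hεdef
    have hε : 0 < ε := lt_min (by norm_num) (by linarith)
    have hε1 : ε ≤ 1/2 := min_le_left _ _
    have hε2 : ε ≤ (1 - a)/2 := min_le_right _ _
    have ha' : a < 1 - ε := by linarith
    have hac : a < 1 / Real.sqrt (1+ε) :=
      lt_of_lt_of_le ha' (one_sub_le_inv_sqrt_one_add hε hε1)
    filter_upwards [lower_ev hlam hε hε1,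
      (tendsto_lower hε hε1).eventually_const_lt hac] with M h1 h2
    exact lt_of_lt_of_le h2 h1
  · set ε := min (1/2 : ℝ) ((b - 1)/4) with hεdef
    have hε : 0 < ε := lt_min (by norm_num) (by linarith)
    have hε1 : ε ≤ 1/2 := min_le_left _ _
    have hε2 : ε ≤ (b - 1)/4 := min_le_right _ _
    have hbc : 1 / Real.sqrt (1 - ε) < b :=
      lt_of_le_of_lt (inv_sqrt_one_sub_le hε hε1) (by linarith)
    have htend : Tendsto (fun M : ℕ => 1 / Real.sqrt (1 - ε)
        + 2 * (M:ℝ) * Real.log M * Real.exp (-(M:ℝ) ^ ε / 2)) atTop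
        (𝓝 (1 / Real.sqrt (1 - ε))) := by
      have hc : Tendsto (fun _ : ℕ => 1 / Real.sqrt (1 - ε)) atTop
          (𝓝 (1 / Real.sqrt (1 - ε))) := tendsto_const_nhds
      have := hc.add (tendsto_err_nat (ε := ε) hε)
      simpa using this
    filter_upwards [upper_ev hlam hε hε1, htend.eventually_lt_const hbc] with M h1 h2
    exact lt_of_le_of_lt h1 h2

end Main2


end GmaxAux

/-- `E[g_max^{-1/2}] ~ √(λ/ln M)` as `M → ∞`, where `g_max` is the maximum of
`M` i.i.d. exponential(λ) random variables, with density
`p_M(x) = M(1-e^{-λx})^{M-1} λe^{-λx}`. -/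
theorem gmax_inv_sqrt_asymptotics (lam : ℝ) (hlam : 0 < lam) :
    Tendsto (fun M : ℕ =>
        (∫ x in Set.Ioi (0:ℝ),
            (1 / Real.sqrt x) * ((M : ℝ) * (1 - Real.exp (-lam * x)) ^ (M - 1)
              * (lam * Real.exp (-lam * x)))) /
          Real.sqrt (lam / Real.log M)) atTop (nhds 1) :=
  GmaxAux.main_tendsto hlam
end
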